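/- arXiv:1507.08418 — 8 statements merged into one kernel-verified Lean document; each statement's English description precedes it below -/
import Mathlib

section
/- Let H and K be real or complex Hilbert spaces and let A, B be densely defined linear operators from H to K. Then the following are equivalent: (i) dom(A+B) = dom A ∩ dom B is dense in H and (A+B)* = A* + B*; (ii) the orthogonal complement of the graph G(A+B) in H × K is contained in the range of the block operator M_{A+B, A*+B*}. -/
open LinearPMap

/-- The range of the block operator `M_{S,T}(x,y) = (x - T y, S x + y)` acting on
`H × K` with domain `dom S × dom T`. -/
def blockRange {𝕜 H K : Type*} [RCLike 𝕜] [NormedAddCommGroup H] [InnerProductSpace 𝕜 H]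
    [NormedAddCommGroup K] [InnerProductSpace 𝕜 K]
    (S : H →ₗ.[𝕜] K) (T : K →ₗ.[𝕜] H) : Set (H × K) :=
  {p : H × K | ∃ (x : S.domain) (y : T.domain), p = ((x : H) - T y, S x + (y : K))}

/-- The orthogonal complement of a set of vectors in `H × K`, where `H × K`
carries the inner product `⟪(p₁,p₂),(q₁,q₂)⟫ = ⟪p₁,q₁⟫ + ⟪p₂,q₂⟫`. -/
def prodOrth {𝕜 H K : Type*} [RCLike 𝕜] [NormedAddCommGroup H] [InnerProductSpace 𝕜 H]
    [NormedAddCommGroup K] [InnerProductSpace 𝕜 K] (s : Set (H × K)) : Set (H × K) :=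
  {p : H × K | ∀ q ∈ s, inner (𝕜 := 𝕜) p.1 q.1 + inner (𝕜 := 𝕜) p.2 q.2 = 0}

/-- **Theorem 1 (sums).** For densely defined operators `A, B : H → K` between Hilbert
spaces, `dom (A+B)` is dense and `(A+B)* = A* + B*` if and only if
`G(A+B)ᗮ ⊆ ran M_{A+B, A*+B*}`. -/
theorem sum_adjoint_iff {𝕜 H K : Type*} [RCLike 𝕜]
    [NormedAddCommGroup H] [InnerProductSpace 𝕜 H] [CompleteSpace H]
    [NormedAddCommGroup K] [InnerProductSpace 𝕜 K] [CompleteSpace K]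
    (A B : H →ₗ.[𝕜] K)
    (hA : Dense (A.domain : Set H)) (hB : Dense (B.domain : Set H)) :
    (Dense ((A + B).domain : Set H) ∧ (A + B).adjoint = A.adjoint + B.adjoint) ↔
      prodOrth (𝕜 := 𝕜) ((A + B).graph : Set (H × K)) ⊆
        blockRange (A + B) (A.adjoint + B.adjoint) := by
  set S : H →ₗ.[𝕜] K := A + B with hSdef
  set T : K →ₗ.[𝕜] H := A.adjoint + B.adjoint with hTdef
  -- `T` is a formal adjoint of `S`
  have hFA : T.IsFormalAdjoint S := by
    intro y x
    have h1 := (adjoint_isFormalAdjoint hA) ⟨(y : K), y.2.1⟩ ⟨(x : H), x.2.1⟩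
    have h2 := (adjoint_isFormalAdjoint hB) ⟨(y : K), y.2.2⟩ ⟨(x : H), x.2.2⟩
    have hTy : T y = A.adjoint ⟨(y : K), y.2.1⟩ + B.adjoint ⟨(y : K), y.2.2⟩ := rfl
    have hSx : S x = A ⟨(x : H), x.2.1⟩ + B ⟨(x : H), x.2.2⟩ := rfl
    rw [hTy, hSx, inner_add_left, inner_add_right, h1, h2]
  -- Key step: any element of the orthogonal of the graph lying in the block
  -- range must be of the form `(-T y, y)`.
  have key : ∀ u v, (u, v) ∈ prodOrth (𝕜 := 𝕜) (S.graph : Set (H × K)) →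
      (u, v) ∈ blockRange S T → ∃ y : T.domain, u = -(T y) ∧ v = (y : K) := by
    rintro u v hp ⟨x, y, hxy⟩
    obtain ⟨hu, hv⟩ := Prod.ext_iff.mp hxy
    simp only at hu hv
    have hq := hp ((x : H), S x) (S.mem_graph x)
    simp only [hu, hv] at hq
    rw [inner_sub_left, inner_add_left, hFA y x] at hq
    have hq' : inner (𝕜 := 𝕜) (x : H) (x : H) + inner (𝕜 := 𝕜) (S x) (S x) = 0 := by
      linear_combination hq
    have hre := congrArg RCLike.re hq'
    rw [_root_.map_add, inner_self_eq_norm_sq, inner_self_eq_norm_sq, _root_.map_zero] at hre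
    obtain ⟨hx1, hx2⟩ := (add_eq_zero_iff_of_nonneg (sq_nonneg _) (sq_nonneg _)).mp hre
    have hx0 : (x : H) = 0 := by
      have := pow_eq_zero_iff (n := 2) (by norm_num) |>.mp hx1
      exact norm_eq_zero.mp this
    have hxx : x = (0 : S.domain) := Subtype.ext hx0
    have hSx0 : S x = 0 := by rw [hxx, LinearPMap.map_zero]
    refine ⟨y, ?_, ?_⟩
    · rw [hu, hx0, zero_sub]
    · rw [hv, hSx0, zero_add]
  constructor
  · -- forward direction
    rintro ⟨hdense, heq⟩ ⟨u, v⟩ hp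
    have horth : ∀ x : S.domain, inner (𝕜 := 𝕜) (-u) (x : H) = inner (𝕜 := 𝕜) v (S x) := by
      intro x
      have := hp ((x : H), S x) (S.mem_graph x)
      simp only at this
      rw [inner_neg_left]
      linear_combination -this
    have hmem : v ∈ S.adjoint.domain := mem_adjoint_domain_of_exists v ⟨-u, horth⟩
    have happ : S.adjoint ⟨v, hmem⟩ = -u := adjoint_apply_eq hdense ⟨v, hmem⟩ horth
    have hmemT : v ∈ T.domain := heq ▸ hmem
    have hTv : T ⟨v, hmemT⟩ = -u := by
      have hle : S.adjoint ≤ T := le_of_eq heq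
      rw [← hle.2 (x := ⟨v, hmem⟩) (y := ⟨v, hmemT⟩) rfl, happ]
    refine ⟨0, ⟨v, hmemT⟩, ?_⟩
    rw [hTv]
    simp [LinearPMap.map_zero]
  · -- backward direction
    intro h
    have hdense : Dense (S.domain : Set H) := by
      rw [Submodule.dense_iff_topologicalClosure_eq_top,
        Submodule.topologicalClosure_eq_top_iff, Submodule.eq_bot_iff]
      intro u hu
      have hp : ((u, (0 : K)) : H × K) ∈ prodOrth (𝕜 := 𝕜) (S.graph : Set (H × K)) := by
        rintro q hq
        rw [SetLike.mem_coe, mem_graph_iff] at hq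
        obtain ⟨x, hx1, hx2⟩ := hq
        simp only [inner_zero_left, add_zero, ← hx1]
        exact (Submodule.mem_orthogonal' _ _).mp hu (x : H) x.2
      obtain ⟨y, hy1, hy2⟩ := key u 0 hp (h hp)
      have hy0 : y = 0 := Subtype.ext hy2.symm
      rw [hy0, LinearPMap.map_zero, neg_zero] at hy1
      exact hy1
    have hstep : ∀ v : S.adjoint.domain, ∃ hy : (v : K) ∈ T.domain,
        S.adjoint v = T ⟨v, hy⟩ := by
      intro v
      have hp : ((-(S.adjoint v), (v : K)) : H × K) ∈
          prodOrth (𝕜 := 𝕜) (S.graph : Set (H × K)) := by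
        rintro q hq
        rw [SetLike.mem_coe, mem_graph_iff] at hq
        obtain ⟨x, hx1, hx2⟩ := hq
        have := (adjoint_isFormalAdjoint hdense) v x
        simp only [← hx1, ← hx2, inner_neg_left]
        linear_combination -this
      obtain ⟨y, hy1, hy2⟩ := key _ _ hp (h hp)
      have hvmem : (v : K) ∈ T.domain := hy2 ▸ y.2
      refine ⟨hvmem, ?_⟩
      have : T ⟨(v : K), hvmem⟩ = T y := by
        congr 1
        exact Subtype.ext hy2
      rw [this, ← neg_eq_iff_eq_neg.mpr hy1.symm, neg_neg]
    have hle2 : S.adjoint ≤ T := by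
      constructor
      · intro v hv
        exact (hstep ⟨v, hv⟩).1
      · intro x y hxy
        obtain ⟨hy, hval⟩ := hstep x
        rw [hval]
        congr 1
        exact Subtype.ext hxy
    have hle1 : T ≤ S.adjoint := hFA.symm.le_adjoint hdense
    exact ⟨hdense, le_antisymm hle2 hle1⟩
end

section
/- Let H, K, L be real or complex Hilbert spaces and let A be a densely defined linear operator from K to L and B a densely defined linear operator from H to K. Then the following are equivalent: (i) dom(AB) is dense in H and (AB)* = B* A*; (ii) the orthogonal complement of the graph G(AB) in H × L is contained in the range of the block operator M_{AB, B*A*}. -/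
open LinearPMap

/-- The product (composition) `A ∘ B` of two partially defined linear operators,
with domain `{x ∈ dom B : B x ∈ dom A}`, defined via its graph. -/
noncomputable def LinearPMap.pcomp {R E F G : Type*} [Ring R] [AddCommGroup E] [Module R E]
    [AddCommGroup F] [Module R F] [AddCommGroup G] [Module R G]
    (A : F →ₗ.[R] G) (B : E →ₗ.[R] F) : E →ₗ.[R] G :=
  Submodule.toLinearPMap
    { carrier := {p : E × G | ∃ y : F, (p.1, y) ∈ B.graph ∧ (y, p.2) ∈ A.graph}
      add_mem' := fun ⟨y, hy1, hy2⟩ ⟨z, hz1, hz2⟩ =>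
        ⟨y + z, B.graph.add_mem hy1 hz1, A.graph.add_mem hy2 hz2⟩
      zero_mem' := ⟨0, B.graph.zero_mem, A.graph.zero_mem⟩
      smul_mem' := fun c _ ⟨y, hy1, hy2⟩ =>
        ⟨c • y, B.graph.smul_mem c hy1, A.graph.smul_mem c hy2⟩ }

section Aux

theorem my_mem_pcomp_graph {R E F G : Type*} [Ring R] [AddCommGroup E] [Module R E]
    [AddCommGroup F] [Module R F] [AddCommGroup G] [Module R G]
    (A : F →ₗ.[R] G) (B : E →ₗ.[R] F) (p : E × G) :
    p ∈ (A.pcomp B).graph ↔ ∃ y : F, (p.1, y) ∈ B.graph ∧ (y, p.2) ∈ A.graph := by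
  show p ∈ (Submodule.toLinearPMap _).graph ↔ _
  rw [Submodule.toLinearPMap_graph_eq]
  · rfl
  · rintro ⟨x, z⟩ ⟨y, hy1, hy2⟩ hx
    simp only at hx
    subst hx
    have hy0 : y = 0 := B.graph_fst_eq_zero_snd hy1 rfl
    subst hy0
    exact A.graph_fst_eq_zero_snd hy2 rfl

variable {𝕜 H K L : Type*} [RCLike 𝕜]
    [NormedAddCommGroup H] [InnerProductSpace 𝕜 H] [CompleteSpace H]
    [NormedAddCommGroup K] [InnerProductSpace 𝕜 K] [CompleteSpace K]
    [NormedAddCommGroup L] [InnerProductSpace 𝕜 L] [CompleteSpace L]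

local notation "⟪" x ", " y "⟫" => @inner 𝕜 _ _ x y

/-- The key pairing identity: if `(x,z)` is in the graph of `AB` and `(v,w)` is in the
graph of `B*A*`, then `⟪w, x⟫ = ⟪v, z⟫`. -/
theorem my_key {A : K →ₗ.[𝕜] L} {B : H →ₗ.[𝕜] K}
    (hA : Dense (A.domain : Set K)) (hB : Dense (B.domain : Set H))
    {x : H} {z : L} {v : L} {w : H}
    (hxz : (x, z) ∈ (A.pcomp B).graph)
    (hvw : (v, w) ∈ (B.adjoint.pcomp A.adjoint).graph) :
    ⟪w, x⟫ = ⟪v, z⟫ := by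
  rw [my_mem_pcomp_graph] at hxz hvw
  obtain ⟨y, hxy, hyz⟩ := hxz
  obtain ⟨m, hvm, hmw⟩ := hvw
  rw [LinearPMap.mem_graph_iff] at hxy hyz hvm hmw
  obtain ⟨x', hx'1, hx'2⟩ := hxy
  obtain ⟨y', hy'1, hy'2⟩ := hyz
  obtain ⟨v', hv'1, hv'2⟩ := hvm
  obtain ⟨m', hm'1, hm'2⟩ := hmw
  simp only at hx'1 hx'2 hy'1 hy'2 hv'1 hv'2 hm'1 hm'2
  calc ⟪w, x⟫ = ⟪B.adjoint m', (x' : H)⟫ := by rw [hm'2, hx'1]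
    _ = ⟪(m' : K), B x'⟫ := (B.adjoint_isFormalAdjoint hB) m' x'
    _ = ⟪A.adjoint v', (y' : K)⟫ := by rw [hm'1, ← hv'2, hx'2, hy'1]
    _ = ⟪(v' : L), A y'⟫ := (A.adjoint_isFormalAdjoint hA) v' y'
    _ = ⟪v, z⟫ := by rw [hv'1, hy'2]

/-- Core extraction: under the range hypothesis, every element of the orthogonal
complement of the graph of `AB` gives an element of the graph of `B*A*`. -/
theorem my_core {A : K →ₗ.[𝕜] L} {B : H →ₗ.[𝕜] K}
    (hA : Dense (A.domain : Set K)) (hB : Dense (B.domain : Set H))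
    (hsub : prodOrth (𝕜 := 𝕜) ((A.pcomp B).graph : Set (H × L)) ⊆
      blockRange (A.pcomp B) (B.adjoint.pcomp A.adjoint))
    {u : H} {v : L} (huv : (u, v) ∈ prodOrth (𝕜 := 𝕜) ((A.pcomp B).graph : Set (H × L))) :
    (v, -u) ∈ (B.adjoint.pcomp A.adjoint).graph := by
  set C := A.pcomp B with hC
  set D := B.adjoint.pcomp A.adjoint with hD
  obtain ⟨x, y, hp⟩ := hsub huv
  have hu : u = (x : H) - D y := congrArg Prod.fst hp
  have hv : v = C x + (y : L) := congrArg Prod.snd hp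
  -- `(-(D y), y)` is in the orthogonal complement of the graph of `C`
  have hDy : (-(D y), (y : L)) ∈ prodOrth (𝕜 := 𝕜) (C.graph : Set (H × L)) := by
    intro q hq
    have := my_key hA hB (x := q.1) (z := q.2) (v := (y : L)) (w := D y)
      (by simpa using hq) (D.mem_graph y)
    simp only [inner_neg_left]
    rw [this]; ring
  -- hence `(x, C x)` is also in the orthogonal complement
  have hxC : ((x : H), C x) ∈ prodOrth (𝕜 := 𝕜) (C.graph : Set (H × L)) := by
    intro q hq
    have h1 := huv q hq
    have h2 := hDy q hq
    have e1 : (x : H) = u - -(D y) := by rw [hu]; abel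
    have e2 : C x = v - (y : L) := by rw [hv]; abel
    dsimp only at h1 h2
    simp only [e1, e2, inner_sub_left]
    linear_combination h1 - h2
  -- pairing `(x, C x)` with itself gives `x = 0`, `C x = 0`
  have hself := hxC ((x : H), C x) (C.mem_graph x)
  simp only [inner_self_eq_norm_sq_to_K] at hself
  have hre : (‖(x : H)‖ ^ 2 + ‖C x‖ ^ 2 : ℝ) = 0 := by exact_mod_cast hself
  have hx0 : (x : H) = 0 := by
    have := (add_eq_zero_iff_of_nonneg (by positivity) (by positivity)).mp hre
    simpa [pow_eq_zero_iff] using this.1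
  have hCx0 : C x = 0 := by
    have := (add_eq_zero_iff_of_nonneg (by positivity) (by positivity)).mp hre
    simpa [pow_eq_zero_iff] using this.2
  have hveq : v = (y : L) := by rw [hv, hCx0, zero_add]
  have hueq : -u = D y := by rw [hu, hx0, zero_sub, neg_neg]
  rw [hveq, hueq]
  exact D.mem_graph y

end Aux

/-- **Theorem 2 (products).** For densely defined operators `A : K → L` and `B : H → K`
between Hilbert spaces, `dom (AB)` is dense and `(AB)* = B* A*` if and only if
`G(AB)ᗮ ⊆ ran M_{AB, B*A*}`. -/
theorem prod_adjoint_iff {𝕜 H K L : Type*} [RCLike 𝕜]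
    [NormedAddCommGroup H] [InnerProductSpace 𝕜 H] [CompleteSpace H]
    [NormedAddCommGroup K] [InnerProductSpace 𝕜 K] [CompleteSpace K]
    [NormedAddCommGroup L] [InnerProductSpace 𝕜 L] [CompleteSpace L]
    (A : K →ₗ.[𝕜] L) (B : H →ₗ.[𝕜] K)
    (hA : Dense (A.domain : Set K)) (hB : Dense (B.domain : Set H)) :
    (Dense ((A.pcomp B).domain : Set H) ∧ (A.pcomp B).adjoint = B.adjoint.pcomp A.adjoint) ↔
      prodOrth (𝕜 := 𝕜) ((A.pcomp B).graph : Set (H × L)) ⊆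
        blockRange (A.pcomp B) (B.adjoint.pcomp A.adjoint) := by
  set C := A.pcomp B with hC
  set D := B.adjoint.pcomp A.adjoint with hD
  constructor
  · rintro ⟨hdense, heq⟩ p hp
    have hkey : ∀ x : C.domain, inner (𝕜 := 𝕜) (-p.1) (x : H) = inner (𝕜 := 𝕜) p.2 (C x) := by
      intro x
      have h := hp ((x : H), C x) (C.mem_graph x)
      dsimp only at h
      rw [inner_neg_left]
      linear_combination -h
    have hvdom : p.2 ∈ C.adjoint.domain :=
      LinearPMap.mem_adjoint_domain_of_exists _ ⟨-p.1, hkey⟩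
    have hval : C.adjoint ⟨p.2, hvdom⟩ = -p.1 :=
      LinearPMap.adjoint_apply_eq hdense _ hkey
    have hg : (p.2, -p.1) ∈ D.graph := by
      rw [← heq]
      have hmem := C.adjoint.mem_graph ⟨p.2, hvdom⟩
      rwa [hval] at hmem
    rw [LinearPMap.mem_graph_iff] at hg
    obtain ⟨y, hy1, hy2⟩ := hg
    dsimp only at hy1 hy2
    refine ⟨0, y, ?_⟩
    rw [Prod.ext_iff]
    constructor
    · simp [hy2]
    · simp [hy1, C.map_zero]
  · intro hsub
    have hdense : Dense (C.domain : Set H) := by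
      rw [Submodule.dense_iff_topologicalClosure_eq_top, Submodule.topologicalClosure_eq_top_iff,
        Submodule.eq_bot_iff]
      intro u hu
      have h0 : (u, (0 : L)) ∈ prodOrth (𝕜 := 𝕜) (C.graph : Set (H × L)) := by
        intro q hq
        have hq1 : q.1 ∈ C.domain := C.mem_domain_of_mem_graph (x := q.1) (y := q.2) (by simpa using hq)
        rw [(Submodule.mem_orthogonal' _ _).mp hu q.1 hq1, inner_zero_left, add_zero]
      have := my_core hA hB hsub h0
      have := D.graph_fst_eq_zero_snd this rfl
      simpa using this
    refine ⟨hdense, ?_⟩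
    have hDC : D.IsFormalAdjoint C := fun y x =>
      my_key hA hB (C.mem_graph x) (D.mem_graph y)
    have le1 : D ≤ C.adjoint := hDC.symm.le_adjoint hdense
    have le2 : C.adjoint ≤ D := by
      apply LinearPMap.le_of_le_graph
      rintro ⟨v, w⟩ hvw
      rw [LinearPMap.mem_graph_iff] at hvw
      obtain ⟨v', hv'1, hv'2⟩ := hvw
      simp only at hv'1 hv'2
      have horth : (-w, v) ∈ prodOrth (𝕜 := 𝕜) (C.graph : Set (H × L)) := by
        intro q hq
        have hq' : q ∈ C.graph := hq
        rw [LinearPMap.mem_graph_iff] at hq'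
        obtain ⟨x', hx'1, hx'2⟩ := hq'
        dsimp only
        rw [← hx'1, ← hx'2, inner_neg_left, ← hv'2, ← hv'1,
          (C.adjoint_isFormalAdjoint hdense) v' x']
        ring
      have := my_core hA hB hsub horth
      simpa using this
    exact le_antisymm le2 le1
end

section
/- Let A be a densely defined linear operator between real or complex Hilbert spaces H and K. The following are equivalent: (i) A is closed (its graph is closed in H × K); (ii) the range of the block operator M_{A,A*} equals H × K; (iii) the orthogonal complement of the set {(−A* z, z) : z ∈ dom A*} in H × K is contained in the range of M_{A,A*}. -/
open LinearPMap

/-- **Theorem 3 (closedness).** For a densely defined operator `A : H → K` between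
Hilbert spaces, the following are equivalent: (i) `A` is closed;
(ii) `ran M_{A,A*} = H × K`; (iii) `{(-A* z, z) : z ∈ dom A*}ᗮ ⊆ ran M_{A,A*}`. -/
theorem closed_tfae {𝕜 H K : Type*} [RCLike 𝕜]
    [NormedAddCommGroup H] [InnerProductSpace 𝕜 H] [CompleteSpace H]
    [NormedAddCommGroup K] [InnerProductSpace 𝕜 K] [CompleteSpace K]
    (A : H →ₗ.[𝕜] K) (hA : Dense (A.domain : Set H)) :
    List.TFAE
      [A.IsClosed,
       blockRange A A.adjoint = Set.univ,
       prodOrth (𝕜 := 𝕜) {p : H × K | ∃ z : A.adjoint.domain, p = (-(A.adjoint z), (z : K))} ⊆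
         blockRange A A.adjoint] := by
  classical
  set V : Set (H × K) :=
    {p : H × K | ∃ z : A.adjoint.domain, p = (-(A.adjoint z), (z : K))} with hVdef
  have formal : ∀ (z : A.adjoint.domain) (x : A.domain),
      inner (𝕜 := 𝕜) (A.adjoint z) (x : H) = inner (𝕜 := 𝕜) (z : K) (A x) :=
    A.adjoint_isFormalAdjoint hA
  have formal' : ∀ (z : A.adjoint.domain) (x : A.domain),
      inner (𝕜 := 𝕜) (x : H) (A.adjoint z) = inner (𝕜 := 𝕜) (A x) (z : K) := by
    intro z x
    simpa using congrArg (starRingEnd 𝕜) (formal z x)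
  -- the key orthogonality characterization: `prodOrth (graph A) = V`
  have key1 : ∀ p : H × K,
      (∀ x : A.domain,
        inner (𝕜 := 𝕜) p.1 (x : H) + inner (𝕜 := 𝕜) p.2 (A x) = 0) ↔ p ∈ V := by
    intro p
    constructor
    · intro h
      have hz : p.2 ∈ A.adjoint.domain := by
        apply A.mem_adjoint_domain_of_exists
        refine ⟨-p.1, fun x => ?_⟩
        rw [inner_neg_left]
        linear_combination -h x
      refine ⟨⟨p.2, hz⟩, ?_⟩
      have happ : A.adjoint ⟨p.2, hz⟩ = -p.1 := by
        refine adjoint_apply_eq hA _ (fun x => ?_)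
        rw [inner_neg_left]
        linear_combination -h x
      rw [happ, neg_neg]
    · rintro ⟨z, rfl⟩ x
      simp only [inner_neg_left]
      linear_combination -formal z x
  -- the graph of `A` (as a set) is contained in `prodOrth V`
  have hGsub : (A.graph : Set (H × K)) ⊆ prodOrth (𝕜 := 𝕜) V := by
    intro p hp
    obtain ⟨x, hx1, hx2⟩ := A.mem_graph_iff.mp hp
    rintro q ⟨z, rfl⟩
    simp only [← hx1, ← hx2, inner_neg_right]
    linear_combination -formal' z x
  tfae_have 1 → 2
  | h1 => by
    ext p
    simp only [Set.mem_univ, iff_true]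
    let e : WithLp 2 (H × K) ≃ₗ[𝕜] H × K := WithLp.linearEquiv 2 𝕜 (H × K)
    let G' : Submodule 𝕜 (WithLp 2 (H × K)) := A.graph.comap e.toLinearMap
    have hG'closed : IsClosed (G' : Set (WithLp 2 (H × K))) := by
      have heq : (G' : Set (WithLp 2 (H × K))) =
          (WithLp.prodContinuousLinearEquiv 2 𝕜 H K) ⁻¹' (A.graph : Set (H × K)) := rfl
      rw [heq]
      exact h1.preimage (WithLp.prodContinuousLinearEquiv 2 𝕜 H K).continuous
    haveI : CompleteSpace G' := hG'closed.completeSpace_coe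
    obtain ⟨y, hy, z, hz, hp⟩ := G'.exists_add_mem_mem_orthogonal (e.symm p)
    -- `e y` lies on the graph
    have hy' : e y ∈ A.graph := hy
    rw [LinearPMap.mem_graph_iff] at hy'
    obtain ⟨x, hx1, hx2⟩ := hy'
    -- `e z` lies in `V`
    have hzV : e z ∈ V := by
      rw [← key1]
      intro u
      have hu : e.symm ((u : H), A u) ∈ G' := by
        show e (e.symm ((u : H), A u)) ∈ A.graph
        rw [e.apply_symm_apply]
        exact A.mem_graph u
      have h0 := (Submodule.mem_orthogonal' _ _).mp hz _ hu
      rw [WithLp.prod_inner_apply] at h0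
      exact h0
    obtain ⟨w, hw⟩ := hzV
    refine ⟨x, w, ?_⟩
    have hpy : p = e y + e z := by
      rw [← e.map_add, ← hp, e.apply_symm_apply]
    have hey : e y = ((x : H), A x) := by
      ext
      · exact hx1.symm
      · exact hx2.symm
    rw [hpy, hey, hw]
    ext
    · simp [sub_eq_add_neg]
    · simp [add_comm]
  tfae_have 2 → 3
  | h2 => by rw [h2]; exact Set.subset_univ _
  tfae_have 3 → 1
  | h3 => by
    apply isClosed_of_closure_subset
    intro p hp
    -- `prodOrth V` is closed
    have hVclosed : IsClosed (prodOrth (𝕜 := 𝕜) V) := by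
      have heq : prodOrth (𝕜 := 𝕜) V =
          ⋂ q ∈ V, {p : H × K |
            inner (𝕜 := 𝕜) p.1 q.1 + inner (𝕜 := 𝕜) p.2 q.2 = 0} := by
        ext r
        simp [prodOrth]
      rw [heq]
      refine isClosed_biInter fun q _ => isClosed_eq ?_ continuous_const
      exact ((continuous_fst.inner continuous_const).add
        (continuous_snd.inner continuous_const))
    have hpV : p ∈ prodOrth (𝕜 := 𝕜) V := closure_minimal hGsub hVclosed hp
    obtain ⟨x, y, hxy⟩ := h3 hpV
    set g : H × K := ((x : H), A x) with hg
    set v : H × K := (-(A.adjoint y), (y : K)) with hv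
    have hpgv : p = g + v := by
      rw [hxy]
      ext
      · simp [g, v, sub_eq_add_neg]
      · simp [g, v, add_comm]
    have hgV : g ∈ prodOrth (𝕜 := 𝕜) V := hGsub (A.mem_graph x)
    have hvV : v ∈ prodOrth (𝕜 := 𝕜) V := by
      intro q hq
      have h1 := hpV q hq
      have h2 := hgV q hq
      rw [hpgv] at h1
      simp only [Prod.fst_add, Prod.snd_add, inner_add_left] at h1
      linear_combination h1 - h2
    have hv0 : v = 0 := by
      have h0 := hvV v ⟨y, rfl⟩
      have hre := congrArg (RCLike.re (K := 𝕜)) h0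
      simp only [_root_.map_add, inner_self_eq_norm_sq, _root_.map_zero] at hre
      have h1 : ‖v.1‖ ^ 2 = 0 := by nlinarith [sq_nonneg ‖v.1‖, sq_nonneg ‖v.2‖]
      have h2 : ‖v.2‖ ^ 2 = 0 := by nlinarith [sq_nonneg ‖v.1‖, sq_nonneg ‖v.2‖]
      have h1' : v.1 = 0 := norm_eq_zero.mp (pow_eq_zero_iff two_ne_zero |>.mp h1)
      have h2' : v.2 = 0 := norm_eq_zero.mp (pow_eq_zero_iff two_ne_zero |>.mp h2)
      ext
      · simpa using h1'
      · simpa using h2'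
    have : p = g := by rw [hpgv, hv0, add_zero]
    rw [this]
    exact A.mem_graph x
  tfae_finish
end

section
/- Let T be a densely defined linear operator between real or complex Hilbert spaces H and K. The following are equivalent: (i) T is closed; (ii) T*T and TT* are selfadjoint operators in H and K, respectively; (iii) I + T*T is surjective onto H and I + TT* is surjective onto K; (iv) the orthogonal complement of {(−T* z, z) : z ∈ dom T*} in H × K is contained in ran(I + T*T) × ran(I + TT*). -/
open LinearPMap

/-- A partially defined operator `A` in a Hilbert space is selfadjoint if it is densely
defined and `A* = A`. -/
def LinearPMap.IsSelfAdjointOp {𝕜 H : Type*} [RCLike 𝕜] [NormedAddCommGroup H]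
    [InnerProductSpace 𝕜 H] [CompleteSpace H] (A : H →ₗ.[𝕜] H) : Prop :=
  Dense (A.domain : Set H) ∧ A.adjoint = A

/-- The range `ran (I + S)` of `I + S` for a partially defined operator `S` in `H`,
i.e. the set `{x + S x : x ∈ dom S}`. -/
def ranIdAdd {𝕜 H : Type*} [RCLike 𝕜] [NormedAddCommGroup H]
    [InnerProductSpace 𝕜 H] (S : H →ₗ.[𝕜] H) : Set H :=
  {u : H | ∃ x : S.domain, u = (x : H) + S x}

set_option linter.unusedSectionVars false

namespace VNAux

theorem pcomp_graph_mem {R E F G : Type*} [Ring R] [AddCommGroup E] [Module R E]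
    [AddCommGroup F] [Module R F] [AddCommGroup G] [Module R G]
    (A : F →ₗ.[R] G) (B : E →ₗ.[R] F) {x : E} {w : G} :
    (x, w) ∈ (A.pcomp B).graph ↔ ∃ y : F, (x, y) ∈ B.graph ∧ (y, w) ∈ A.graph := by
  unfold LinearPMap.pcomp
  rw [Submodule.toLinearPMap_graph_eq]
  · rfl
  · rintro ⟨a, c⟩ ⟨y, hy1, hy2⟩ h0
    simp only at h0
    subst h0
    have hy : y = 0 := B.graph_fst_eq_zero_snd hy1 rfl
    subst hy
    exact A.graph_fst_eq_zero_snd hy2 rfl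

variable {𝕜 H K : Type*} [RCLike 𝕜]
  [NormedAddCommGroup H] [InnerProductSpace 𝕜 H] [CompleteSpace H]
  [NormedAddCommGroup K] [InnerProductSpace 𝕜 K] [CompleteSpace K]

local notation "⟪" x ", " y "⟫" => inner (𝕜 := 𝕜) x y

variable {T : H →ₗ.[𝕜] K}

theorem graph_adjoint_iff (hT : Dense (T.domain : Set H)) (p : K × H) :
    p ∈ T.adjoint.graph ↔ ∀ x : T.domain, ⟪p.2, (x : H)⟫ = ⟪p.1, T x⟫ := by
  constructor
  · rw [LinearPMap.mem_graph_iff]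
    rintro ⟨y, hy1, hy2⟩ x
    rw [← hy1, ← hy2]
    exact T.adjoint_isFormalAdjoint hT y x
  · intro h
    rw [LinearPMap.mem_graph_iff]
    have hd : p.1 ∈ T.adjoint.domain :=
      LinearPMap.mem_adjoint_domain_of_exists _ ⟨p.2, h⟩
    exact ⟨⟨p.1, hd⟩, rfl, LinearPMap.adjoint_apply_eq hT _ h⟩

theorem adjoint_graph_isClosed (hT : Dense (T.domain : Set H)) :
    IsClosed (T.adjoint.graph : Set (K × H)) := by
  have : (T.adjoint.graph : Set (K × H)) =
      ⋂ x : T.domain, {p : K × H | ⟪p.2, (x : H)⟫ = ⟪p.1, T x⟫} := by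
    ext p
    simp only [Set.mem_iInter, SetLike.mem_coe, Set.mem_setOf_eq, graph_adjoint_iff hT]
  rw [this]
  exact isClosed_iInter fun x => isClosed_eq (continuous_snd.inner continuous_const)
    (continuous_fst.inner continuous_const)

theorem mem_ranIdAdd_of_graph {S : H →ₗ.[𝕜] H} {u a : H} (h : (a, u - a) ∈ S.graph) :
    u ∈ ranIdAdd S := by
  rw [LinearPMap.mem_graph_iff] at h
  obtain ⟨x, hx1, hx2⟩ := h
  dsimp only at hx1 hx2
  exact ⟨x, by rw [hx1, hx2]; abel⟩

/-- Symmetry of `T†T`. -/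
theorem sym1 (hT : Dense (T.domain : Set H)) :
    ∀ p ∈ (T.adjoint.pcomp T).graph, ∀ q ∈ (T.adjoint.pcomp T).graph,
      ⟪p.2, q.1⟫ = ⟪p.1, q.2⟫ := by
  rintro ⟨a, w⟩ hp ⟨a', w'⟩ hq
  obtain ⟨y, h1, h2⟩ := (pcomp_graph_mem _ _).mp hp
  obtain ⟨y', h1', h2'⟩ := (pcomp_graph_mem _ _).mp hq
  rw [LinearPMap.mem_graph_iff] at h1 h1'
  obtain ⟨x, hx1, hx2⟩ := h1
  obtain ⟨x', hx1', hx2'⟩ := h1'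
  have e2 := (graph_adjoint_iff hT _).mp h2 x'
  have e2' := (graph_adjoint_iff hT _).mp h2' x
  dsimp only at e2 e2' hx1 hx2 hx1' hx2' ⊢
  have goalL : ⟪w, a'⟫ = ⟪y, y'⟫ := by rw [← hx1', e2, hx2']
  have goalR : ⟪a, w'⟫ = ⟪y, y'⟫ := by
    rw [← hx1, ← inner_conj_symm, e2', hx2, inner_conj_symm]
  exact goalL.trans goalR.symm

/-- Positivity of `T†T`. -/
theorem pos1 (hT : Dense (T.domain : Set H)) :
    ∀ p ∈ (T.adjoint.pcomp T).graph, 0 ≤ RCLike.re ⟪p.1, p.2⟫ := by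
  rintro ⟨a, w⟩ hp
  obtain ⟨y, h1, h2⟩ := (pcomp_graph_mem _ _).mp hp
  rw [LinearPMap.mem_graph_iff] at h1
  obtain ⟨x, hx1, hx2⟩ := h1
  have e2 := (graph_adjoint_iff hT _).mp h2 x
  dsimp only at e2 hx1 hx2 ⊢
  have : ⟪a, w⟫ = ⟪y, y⟫ := by
    rw [← hx1, ← inner_conj_symm, e2, hx2, inner_conj_symm]
  rw [this]
  exact inner_self_nonneg

/-- Symmetry of `TT†`. -/
theorem sym2 (hT : Dense (T.domain : Set H)) :
    ∀ p ∈ (T.pcomp T.adjoint).graph, ∀ q ∈ (T.pcomp T.adjoint).graph,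
      ⟪p.2, q.1⟫ = ⟪p.1, q.2⟫ := by
  rintro ⟨z, w⟩ hp ⟨z', w'⟩ hq
  obtain ⟨y, h1, h2⟩ := (pcomp_graph_mem _ _).mp hp
  obtain ⟨y', h1', h2'⟩ := (pcomp_graph_mem _ _).mp hq
  rw [LinearPMap.mem_graph_iff] at h1 h1' h2 h2'
  obtain ⟨z0, hz1, hz2⟩ := h1
  obtain ⟨y0, hy1, hy2⟩ := h2
  obtain ⟨z0', hz1', hz2'⟩ := h1'
  obtain ⟨y0', hy1', hy2'⟩ := h2'
  have hFA := T.adjoint_isFormalAdjoint hT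
  dsimp only at hz1 hz2 hy1 hy2 hz1' hz2' hy1' hy2' ⊢
  have e1 : ⟪z, w'⟫ = ⟪y, y'⟫ := by
    rw [← hz1, ← hy2', ← hFA z0 y0', hz2, hy1']
  have e2 : ⟪z', w⟫ = ⟪y', y⟫ := by
    rw [← hz1', ← hy2, ← hFA z0' y0, hz2', hy1]
  rw [← inner_conj_symm, e2, inner_conj_symm]
  exact e1.symm

/-- Positivity of `TT†`. -/
theorem pos2 (hT : Dense (T.domain : Set H)) :
    ∀ p ∈ (T.pcomp T.adjoint).graph, 0 ≤ RCLike.re ⟪p.1, p.2⟫ := by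
  rintro ⟨z, w⟩ hp
  obtain ⟨y, h1, h2⟩ := (pcomp_graph_mem _ _).mp hp
  rw [LinearPMap.mem_graph_iff] at h1 h2
  obtain ⟨z0, hz1, hz2⟩ := h1
  obtain ⟨y0, hy1, hy2⟩ := h2
  have hFA := T.adjoint_isFormalAdjoint hT
  dsimp only at hz1 hz2 hy1 hy2 ⊢
  have e1 : ⟪z, w⟫ = ⟪y, y⟫ := by
    rw [← hz1, ← hy2, ← hFA z0 y0, hz2, hy1]
  rw [e1]
  exact inner_self_nonneg

/-- A symmetric positive operator with `ran (I + S) = H` is selfadjoint. -/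
theorem selfadjoint_of_surj (S : H →ₗ.[𝕜] H)
    (hsym : ∀ p ∈ S.graph, ∀ q ∈ S.graph, ⟪p.2, q.1⟫ = ⟪p.1, q.2⟫)
    (hpos : ∀ p ∈ S.graph, 0 ≤ RCLike.re ⟪p.1, p.2⟫)
    (hsurj : ranIdAdd S = Set.univ) : S.IsSelfAdjointOp := by
  have hsurj' : ∀ u : H, ∃ x : S.domain, u = ↑x + S x := fun u =>
    (hsurj ▸ Set.mem_univ u : u ∈ ranIdAdd S)
  have hd : Dense (S.domain : Set H) := by
    rw [Submodule.dense_iff_topologicalClosure_eq_top,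
      Submodule.topologicalClosure_eq_top_iff, Submodule.eq_bot_iff]
    intro u hu
    obtain ⟨x, hx⟩ := hsurj' u
    have h0 : ⟪(x : H), u⟫ = 0 := hu _ x.2
    rw [hx, inner_add_right] at h0
    have hre := congrArg RCLike.re h0
    rw [_root_.map_add, _root_.map_zero, inner_self_eq_norm_sq] at hre
    have hp := hpos (↑x, S x) (S.mem_graph x)
    dsimp only at hp
    have hx0 : ‖(x : H)‖ = 0 := by nlinarith [norm_nonneg (x : H)]
    have hx0' : x = 0 := by
      ext
      simpa using norm_eq_zero.mp hx0
    rw [hx, hx0', S.map_zero]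
    simp
  have hSS : S.IsFormalAdjoint S := fun x y =>
    hsym (↑x, S x) (S.mem_graph x) (↑y, S y) (S.mem_graph y)
  refine ⟨hd, le_antisymm ?_ (LinearPMap.IsFormalAdjoint.le_adjoint hd hSS)⟩
  apply LinearPMap.le_of_le_graph
  rintro ⟨yv, wv⟩ hp
  rw [LinearPMap.mem_graph_iff] at hp
  obtain ⟨y0, hy1, hy2⟩ := hp
  dsimp only at hy1 hy2
  obtain ⟨x, hx⟩ := hsurj' (yv + wv)
  have key : ∀ v : H, ⟪yv - ↑x, v⟫ = 0 := by
    intro v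
    obtain ⟨wd, hw⟩ := hsurj' v
    rw [hw, inner_sub_left, inner_add_right, inner_add_right]
    have h1 : ⟪yv, S wd⟫ = ⟪wv, (wd : H)⟫ := by
      have := S.adjoint_isFormalAdjoint hd y0 wd
      rw [hy1, hy2] at this
      exact this.symm
    have h2 : ⟪(x : H), S wd⟫ = ⟪S x, (wd : H)⟫ :=
      (hsym (↑x, S x) (S.mem_graph x) (↑wd, S wd) (S.mem_graph wd)).symm
    rw [h1, h2, ← inner_add_left, ← inner_add_left, ← hx, sub_self]
  have hyx : yv = ↑x := by
    have h0 := key (yv - ↑x)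
    rw [inner_self_eq_zero, sub_eq_zero] at h0
    exact h0
  have hwx : wv = S x := by
    have : wv = yv + wv - yv := by abel
    rw [this, hx, hyx]
    abel
  rw [hyx, hwx]
  exact S.mem_graph x

/-- A positive selfadjoint operator satisfies `ran (I + S) = H`. -/
theorem surj_of_selfadjoint (S : H →ₗ.[𝕜] H)
    (hpos : ∀ p ∈ S.graph, 0 ≤ RCLike.re ⟪p.1, p.2⟫)
    (hsa : S.IsSelfAdjointOp) : ranIdAdd S = Set.univ := by
  obtain ⟨hd, hadj⟩ := hsa
  have hclosed : IsClosed (S.graph : Set (H × H)) := by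
    have := adjoint_graph_isClosed hd (T := S)
    rwa [hadj] at this
  have hbd : ∀ w : S.domain, ‖(w : H)‖ ≤ ‖↑w + S w‖ := by
    intro w
    have h2 : ‖↑w + S w‖ ^ 2 = ‖(w : H)‖ ^ 2 + 2 * RCLike.re ⟪(w : H), S w⟫ + ‖S w‖ ^ 2 :=
      norm_add_sq _ _
    have hp := hpos (↑w, S w) (S.mem_graph w)
    dsimp only at hp
    nlinarith [norm_nonneg ((w : H) + S w), norm_nonneg (S w), norm_nonneg (w : H)]
  have hclosedRan : IsClosed (ranIdAdd S) := by
    apply isClosed_of_closure_subset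
    intro u hu
    rw [mem_closure_iff_seq_limit] at hu
    obtain ⟨f, hf, hftend⟩ := hu
    choose w hw using hf
    have hcf : CauchySeq f := hftend.cauchySeq
    have hcx : CauchySeq fun n => ((w n : H)) := by
      rw [Metric.cauchySeq_iff] at hcf ⊢
      intro ε hε
      obtain ⟨N, hN⟩ := hcf ε hε
      refine ⟨N, fun m hm n hn => ?_⟩
      have hdist := hN m hm n hn
      rw [dist_eq_norm] at hdist ⊢
      refine lt_of_le_of_lt ?_ hdist
      have hsub : f m - f n = ↑(w m - w n) + S (w m - w n) := by
        rw [hw m, hw n, S.map_sub, Submodule.coe_sub]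
        abel
      rw [hsub]
      exact hbd (w m - w n)
    obtain ⟨x, hx⟩ := cauchySeq_tendsto_of_complete hcx
    have hSx : Filter.Tendsto (fun n => S (w n)) Filter.atTop (nhds (u - x)) := by
      have hfn : (fun n => S (w n)) = fun n => f n - ↑(w n) := by
        funext n
        rw [hw n]
        abel
      rw [hfn]
      exact hftend.sub hx
    have hmem : (x, u - x) ∈ S.graph := by
      have htd : Filter.Tendsto (fun n => (((w n : H)), S (w n))) Filter.atTop
          (nhds (x, u - x)) := hx.prodMk_nhds hSx
      exact hclosed.mem_of_tendsto htd
        (Filter.Eventually.of_forall fun n => S.mem_graph (w n))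
    exact mem_ranIdAdd_of_graph hmem
  set R : Submodule 𝕜 H := LinearMap.range (S.domain.subtype + S.toFun) with hRdef
  have hRset : (R : Set H) = ranIdAdd S := by
    ext u
    simp only [hRdef, SetLike.mem_coe, LinearMap.mem_range, LinearMap.add_apply,
      Submodule.coe_subtype, ranIdAdd, Set.mem_setOf_eq]
    exact ⟨fun ⟨x, h⟩ => ⟨x, h.symm⟩, fun ⟨x, h⟩ => ⟨x, h.symm⟩⟩
  have hRclosed : IsClosed (R : Set H) := hRset ▸ hclosedRan
  haveI : CompleteSpace R := hRclosed.completeSpace_coe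
  have hbot : Rᗮ = ⊥ := by
    rw [Submodule.eq_bot_iff]
    intro u hu
    have h0 : ∀ x : S.domain, ⟪-u, (x : H)⟫ = ⟪u, S x⟫ := by
      intro x
      have hxR : (x : H) + S x ∈ R := ⟨x, rfl⟩
      have horth := (Submodule.mem_orthogonal R u).mp hu _ hxR
      have hconj := congrArg (starRingEnd 𝕜) horth
      rw [inner_conj_symm, _root_.map_zero, inner_add_right] at hconj
      rw [inner_neg_left]
      linear_combination -hconj
    have humem : u ∈ S.adjoint.domain :=
      LinearPMap.mem_adjoint_domain_of_exists u ⟨-u, h0⟩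
    have happ : S.adjoint ⟨u, humem⟩ = -u := LinearPMap.adjoint_apply_eq hd _ h0
    have hgr : (u, -u) ∈ S.graph := by
      rw [← hadj]
      have := S.adjoint.mem_graph ⟨u, humem⟩
      rwa [happ] at this
    have hp := hpos (u, -u) hgr
    dsimp only at hp
    rw [inner_neg_right, _root_.map_neg, inner_self_eq_norm_sq] at hp
    have : ‖u‖ = 0 := by nlinarith [norm_nonneg u]
    exact norm_eq_zero.mp this
  have hRtop : R = ⊤ := (Submodule.orthogonal_eq_bot_iff).mp hbot
  rw [← hRset, hRtop]
  simp

/-- von Neumann: if `T` is closed then `I + T†T` and `I + TT†` are surjective. -/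
theorem surj_of_isClosed (hT : Dense (T.domain : Set H)) (hc : T.IsClosed) :
    ranIdAdd (T.adjoint.pcomp T) = Set.univ ∧ ranIdAdd (T.pcomp T.adjoint) = Set.univ := by
  classical
  set L := WithLp.linearEquiv 2 𝕜 (H × K) with hL
  set G : Submodule 𝕜 (WithLp 2 (H × K)) :=
    T.graph.comap (L : WithLp 2 (H × K) →ₗ[𝕜] H × K) with hGdef
  have hGc : IsClosed (G : Set (WithLp 2 (H × K))) := by
    have hcont : Continuous (⇑L) := (WithLp.prodContinuousLinearEquiv 2 𝕜 H K).continuous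
    exact hc.preimage hcont
  haveI : CompleteSpace G := hGc.completeSpace_coe
  have hworth : ∀ w ∈ Gᗮ, ((L w).2, -(L w).1) ∈ T.adjoint.graph := by
    intro w hw
    rw [graph_adjoint_iff hT]
    intro x
    have hxG : L.symm (↑x, T x) ∈ G := by
      rw [hGdef, Submodule.mem_comap]
      simp only [LinearEquiv.coe_coe, LinearEquiv.apply_symm_apply]
      exact T.mem_graph x
    have h0 := (Submodule.mem_orthogonal G w).mp hw _ hxG
    rw [WithLp.prod_inner_apply] at h0
    have h0' : ⟪(↑x : H), (L w).1⟫ + ⟪T x, (L w).2⟫ = 0 := h0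
    have hconj := congrArg (starRingEnd 𝕜) h0'
    rw [_root_.map_add, _root_.map_zero, inner_conj_symm, inner_conj_symm] at hconj
    dsimp only
    rw [inner_neg_left]
    linear_combination -hconj
  constructor
  · rw [Set.eq_univ_iff_forall]
    intro h
    obtain ⟨g, hgG, w, hwG, hsum⟩ := G.exists_add_mem_mem_orthogonal (L.symm (h, 0))
    have h1 : (h, (0 : K)) = L g + L w := by
      rw [← _root_.map_add, ← hsum, L.apply_symm_apply]
    have hfst : h = (L g).1 + (L w).1 := congrArg Prod.fst h1
    have hsnd : (0 : K) = (L g).2 + (L w).2 := congrArg Prod.snd h1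
    have hLg : ((L g).1, (L g).2) ∈ T.graph := by
      rw [hGdef, Submodule.mem_comap] at hgG
      rwa [Prod.mk.eta]
    have hadjw := hworth w hwG
    have hg2 : (L g).2 = -(L w).2 := by
      have h' := hsnd.symm
      rwa [add_eq_zero_iff_eq_neg] at h'
    have hadj2 : ((L g).2, (L w).1) ∈ T.adjoint.graph := by
      have hneg : (-(L w).2, (L w).1) ∈ T.adjoint.graph := by
        have := T.adjoint.graph.neg_mem hadjw
        simpa using this
      rwa [← hg2] at hneg
    apply mem_ranIdAdd_of_graph (a := (L g).1)
    have hws : h - (L g).1 = (L w).1 := by rw [hfst]; abel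
    rw [hws, pcomp_graph_mem]
    exact ⟨(L g).2, hLg, hadj2⟩
  · rw [Set.eq_univ_iff_forall]
    intro k
    obtain ⟨g, hgG, w, hwG, hsum⟩ := G.exists_add_mem_mem_orthogonal (L.symm (0, k))
    have h1 : ((0 : H), k) = L g + L w := by
      rw [← _root_.map_add, ← hsum, L.apply_symm_apply]
    have hfst : (0 : H) = (L g).1 + (L w).1 := congrArg Prod.fst h1
    have hsnd : k = (L g).2 + (L w).2 := congrArg Prod.snd h1
    have hLg : ((L g).1, (L g).2) ∈ T.graph := by
      rw [hGdef, Submodule.mem_comap] at hgG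
      rwa [Prod.mk.eta]
    have hadjw := hworth w hwG
    have hg1 : (L g).1 = -(L w).1 := by
      have h' := hfst.symm
      rwa [add_eq_zero_iff_eq_neg] at h'
    apply mem_ranIdAdd_of_graph (a := (L w).2)
    have hws : k - (L w).2 = (L g).2 := by rw [hsnd]; abel
    rw [hws, pcomp_graph_mem]
    exact ⟨-(L w).1, hadjw, by rw [← hg1]; exact hLg⟩

set_option maxHeartbeats 1000000 in
/-- Converse of von Neumann: condition (iv) implies `T` is closed. -/
theorem isClosed_of_orth (hT : Dense (T.domain : Set H))
    (h4 : prodOrth (𝕜 := 𝕜) {p : H × K | ∃ z : T.adjoint.domain, p = (-(T.adjoint z), (z : K))} ⊆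
      (ranIdAdd (T.adjoint.pcomp T)) ×ˢ (ranIdAdd (T.pcomp T.adjoint))) : T.IsClosed := by
  have hFA := T.adjoint_isFormalAdjoint hT
  apply isClosed_of_closure_subset
  rintro ⟨a, b⟩ hp
  have hporth : (a, b) ∈ prodOrth (𝕜 := 𝕜)
      {p : H × K | ∃ z : T.adjoint.domain, p = (-(T.adjoint z), (z : K))} := by
    rintro q ⟨z, rfl⟩
    dsimp only
    have hsub : (T.graph : Set (H × K)) ⊆
        {p : H × K | ⟪p.1, -(T.adjoint z)⟫ + ⟪p.2, (z : K)⟫ = 0} := by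
      rintro ⟨u, v⟩ hg
      rw [SetLike.mem_coe, LinearPMap.mem_graph_iff] at hg
      obtain ⟨x, hx1, hx2⟩ := hg
      dsimp only at hx1 hx2
      rw [Set.mem_setOf_eq]
      dsimp only
      rw [← hx1, ← hx2, inner_neg_right]
      have hz := hFA z x
      have hconj := congrArg (starRingEnd 𝕜) hz
      rw [inner_conj_symm, inner_conj_symm] at hconj
      linear_combination -hconj
    have hcl : IsClosed {p : H × K | ⟪p.1, -(T.adjoint z)⟫ + ⟪p.2, (z : K)⟫ = 0} :=
      isClosed_eq ((continuous_fst.inner continuous_const).add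
        (continuous_snd.inner continuous_const)) continuous_const
    exact closure_minimal hsub hcl hp
  have key : ∀ z : T.adjoint.domain, ⟪a, T.adjoint z⟫ = ⟪b, (z : K)⟫ := by
    intro z
    have h0 := hporth (-(T.adjoint z), (z : K)) ⟨z, rfl⟩
    dsimp only at h0
    rw [inner_neg_right] at h0
    linear_combination -h0
  obtain ⟨ha, hb⟩ := Set.mem_prod.mp (h4 hporth)
  obtain ⟨x, hx⟩ := ha
  obtain ⟨y, hy⟩ := hb
  dsimp only at hx hy
  obtain ⟨c, hc1, hc2⟩ := (pcomp_graph_mem _ _).mp ((T.adjoint.pcomp T).mem_graph x)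
  obtain ⟨d, hd1, hd2⟩ := (pcomp_graph_mem _ _).mp ((T.pcomp T.adjoint).mem_graph y)
  rw [LinearPMap.mem_graph_iff] at hc1 hc2 hd1 hd2
  obtain ⟨x', hx'1, hx'2⟩ := hc1
  obtain ⟨c', hc'1, hc'2⟩ := hc2
  obtain ⟨y', hy'1, hy'2⟩ := hd1
  obtain ⟨d', hd'1, hd'2⟩ := hd2
  dsimp only at hx'1 hx'2 hc'1 hc'2 hy'1 hy'2 hd'1 hd'2
  have f1 : ∀ z : T.adjoint.domain, ⟪(↑x : H), T.adjoint z⟫ = ⟪c, (z : K)⟫ := by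
    intro z
    rw [← hx'1, ← inner_conj_symm, hFA z x', inner_conj_symm, hx'2]
  have f2 : ∀ z : T.adjoint.domain, ⟪T.pcomp T.adjoint y, (z : K)⟫ = ⟪d, T.adjoint z⟫ := by
    intro z
    rw [← hd'2, ← inner_conj_symm, ← hFA z d', inner_conj_symm, hd'1]
  have hv : ∀ z : T.adjoint.domain,
      ⟪(↑y : K) - c, (z : K)⟫ + ⟪d - T.adjoint.pcomp T x, T.adjoint z⟫ = 0 := by
    intro z
    have hkey := key z
    rw [hx, hy, inner_add_left, inner_add_left] at hkey
    rw [inner_sub_left, inner_sub_left]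
    linear_combination f1 z - f2 z - hkey
  set v : T.adjoint.domain := y' - c' with hvdef
  have hvcoe : (↑v : K) = ↑y - c := by
    rw [hvdef, Submodule.coe_sub, hy'1, hc'1]
  have hvapp : T.adjoint v = d - T.adjoint.pcomp T x := by
    rw [hvdef, T.adjoint.map_sub, hy'2, hc'2]
  have h0 := hv v
  rw [← hvcoe, ← hvapp] at h0
  have hre := congrArg RCLike.re h0
  rw [_root_.map_add, _root_.map_zero, inner_self_eq_norm_sq, inner_self_eq_norm_sq] at hre
  obtain ⟨hv0, hAv0⟩ := (add_eq_zero_iff_of_nonneg (by positivity) (by positivity)).mp hre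
  rw [pow_eq_zero_iff two_ne_zero, norm_eq_zero] at hv0 hAv0
  have hP : (↑y : K) = c := by
    rw [hvcoe] at hv0
    exact sub_eq_zero.mp hv0
  have hQ : d = T.adjoint.pcomp T x := by
    rw [hvapp] at hAv0
    exact sub_eq_zero.mp hAv0
  rw [SetLike.mem_coe, LinearPMap.mem_graph_iff]
  refine ⟨x' + d', ?_, ?_⟩
  · dsimp only
    rw [Submodule.coe_add, hx'1, hd'1, hQ]
    exact hx.symm
  · dsimp only
    rw [T.map_add, hx'2, hd'2, ← hP]
    exact hy.symm

end VNAux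

/-- **Corollary (converse of von Neumann's theorem).** -/
theorem closed_iff_vonNeumann {𝕜 H K : Type*} [RCLike 𝕜]
    [NormedAddCommGroup H] [InnerProductSpace 𝕜 H] [CompleteSpace H]
    [NormedAddCommGroup K] [InnerProductSpace 𝕜 K] [CompleteSpace K]
    (T : H →ₗ.[𝕜] K) (hT : Dense (T.domain : Set H)) :
    List.TFAE
      [T.IsClosed,
       (T.adjoint.pcomp T).IsSelfAdjointOp ∧ (T.pcomp T.adjoint).IsSelfAdjointOp,
       ranIdAdd (T.adjoint.pcomp T) = Set.univ ∧ ranIdAdd (T.pcomp T.adjoint) = Set.univ,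
       prodOrth (𝕜 := 𝕜) {p : H × K | ∃ z : T.adjoint.domain, p = (-(T.adjoint z), (z : K))} ⊆
         (ranIdAdd (T.adjoint.pcomp T)) ×ˢ (ranIdAdd (T.pcomp T.adjoint))] := by
  tfae_have 1 → 3
  | h1 => VNAux.surj_of_isClosed hT h1
  tfae_have 3 → 2
  | h3 => ⟨VNAux.selfadjoint_of_surj _ (VNAux.sym1 hT) (VNAux.pos1 hT) h3.1,
      VNAux.selfadjoint_of_surj _ (VNAux.sym2 hT) (VNAux.pos2 hT) h3.2⟩
  tfae_have 2 → 3
  | h2 => ⟨VNAux.surj_of_selfadjoint _ (VNAux.pos1 hT) h2.1,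
      VNAux.surj_of_selfadjoint _ (VNAux.pos2 hT) h2.2⟩
  tfae_have 3 → 4
  | h3 => by
      rw [h3.1, h3.2]
      exact fun p _ => Set.mem_prod.mpr ⟨trivial, trivial⟩
  tfae_have 4 → 1
  | h4 => VNAux.isClosed_of_orth hT h4
  tfae_finish
end

section
/- Let T be a densely defined closable linear operator between real or complex Hilbert spaces H and K. Then T is closed if and only if dom T** ⊆ ran(I + T*T) and ran T** ⊆ ran(I + TT*). -/
open LinearPMap

namespace VNAux

variable {𝕜 E F G G' : Type*} [RCLike 𝕜]
  [NormedAddCommGroup E] [InnerProductSpace 𝕜 E] [CompleteSpace E]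
  [NormedAddCommGroup F] [InnerProductSpace 𝕜 F] [CompleteSpace F]
  [NormedAddCommGroup G] [InnerProductSpace 𝕜 G]
  [NormedAddCommGroup G'] [InnerProductSpace 𝕜 G']

set_option linter.unusedSectionVars false

local notation "⟪" x ", " y "⟫" => inner (𝕜 := 𝕜) x y

/-- The graph of a `LinearPMap`, as a submodule of the Hilbert space `WithLp 2 (E × F)`. -/
noncomputable def graphL (T : E →ₗ.[𝕜] F) : Submodule 𝕜 (WithLp 2 (E × F)) :=
  T.graph.map (WithLp.linearEquiv 2 𝕜 (E × F)).symm.toLinearMap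

lemma mem_graphL {T : E →ₗ.[𝕜] F} {x : WithLp 2 (E × F)} :
    x ∈ graphL T ↔ (x.fst, x.snd) ∈ T.graph := by
  constructor
  · rintro ⟨y, hy, rfl⟩; exact hy
  · intro h; exact ⟨(x.fst, x.snd), h, rfl⟩

lemma graphL_inj {T S : E →ₗ.[𝕜] F} (h : graphL T = graphL S) : T = S := by
  apply LinearPMap.eq_of_eq_graph
  ext p
  have := SetLike.ext_iff.mp h ((WithLp.equiv 2 (E × F)).symm p)
  rw [mem_graphL, mem_graphL] at this
  exact this

/-- The "rotation" `(x, y) ↦ (y, -x)` as a linear isometry equivalence on `L²` products. -/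
noncomputable def Jiso : WithLp 2 (E × F) ≃ₗᵢ[𝕜] WithLp 2 (F × E) :=
  LinearEquiv.isometryOfInner
    ((WithLp.linearEquiv 2 𝕜 (E × F)).trans <|
      ((LinearEquiv.prodComm 𝕜 E F).trans
        ((LinearEquiv.refl 𝕜 F).prodCongr (LinearEquiv.neg 𝕜))).trans
          (WithLp.linearEquiv 2 𝕜 (F × E)).symm)
    (by
      intro x y
      rw [WithLp.prod_inner_apply, WithLp.prod_inner_apply]
      show ⟪x.snd, y.snd⟫ + ⟪-x.fst, -y.fst⟫ = ⟪x.fst, y.fst⟫ + ⟪x.snd, y.snd⟫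
      rw [inner_neg_neg]
      ring)

/-- Membership in the image of a graph under the rotation. -/
lemma mem_map_Jiso {T : E →ₗ.[𝕜] F} {q : WithLp 2 (F × E)} :
    q ∈ (graphL T).map (Jiso (𝕜 := 𝕜) (E := E) (F := F)).toLinearEquiv.toLinearMap ↔
      (-q.snd, q.fst) ∈ T.graph := by
  constructor
  · rintro ⟨r, hr, rfl⟩
    replace hr := mem_graphL.mp hr
    show (- -r.fst, r.snd) ∈ T.graph
    rwa [neg_neg]
  · intro h
    refine ⟨(WithLp.equiv 2 (E × F)).symm (-q.snd, q.fst), ?_, ?_⟩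
    · exact mem_graphL.mpr h
    · show WithLp.toLp 2 ((q.fst : F), - -q.snd) = q
      exact congrArg (WithLp.toLp 2) (Prod.ext rfl (neg_neg q.snd))

/-- Graph of the adjoint: `Γ(T†) = (J Γ(T))ᗮ`. -/
theorem graphL_adjoint_eq (T : E →ₗ.[𝕜] F) (hT : Dense (T.domain : Set E)) :
    graphL (T†) = ((graphL T).map (Jiso (𝕜 := 𝕜) (E := E) (F := F)).toLinearEquiv.toLinearMap)ᗮ := by
  ext p
  rw [mem_graphL, Submodule.mem_orthogonal]
  constructor
  · intro hp u hu
    rw [mem_map_Jiso, LinearPMap.mem_graph_iff] at hu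
    obtain ⟨a, ha1, ha2⟩ := hu
    rw [LinearPMap.mem_graph_iff] at hp
    obtain ⟨y, hy1, hy2⟩ := hp
    have hy1' : (y : F) = p.fst := hy1
    have hy2' : (T† y : E) = p.snd := hy2
    rw [WithLp.prod_inner_apply, WithLp.ofLp_fst, WithLp.ofLp_snd, WithLp.ofLp_fst, WithLp.ofLp_snd]
    have hA := (adjoint_isFormalAdjoint hT) y a
    -- hA : ⟪T† y, a⟫ = ⟪y, T a⟫
    have e1 : u.fst = (T a : F) := ha2.symm
    have e2 : u.snd = -(a : E) := by
      have h' : -(a : E) = u.snd := by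
        have := congrArg Neg.neg ha1; rwa [neg_neg] at this
      exact h'.symm
    rw [e1, e2, ← hy1', ← hy2', inner_neg_left]
    have hconv : ⟪(a : E), (T† y : E)⟫ = ⟪(T a : F), (y : F)⟫ := by
      rw [← inner_conj_symm ((a : E)) (T† y : E), hA, inner_conj_symm]
    rw [hconv]
    ring
  · intro hp
    have key : ∀ a : T.domain, ⟪p.snd, (a : E)⟫ = ⟪p.fst, T a⟫ := by
      intro a
      have hu : ((WithLp.equiv 2 (F × E)).symm (T a, -(a : E))) ∈
          (graphL T).map (Jiso (𝕜 := 𝕜) (E := E) (F := F)).toLinearEquiv.toLinearMap := by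
        rw [mem_map_Jiso]
        show (- -(a : E), (T a : F)) ∈ T.graph
        rw [neg_neg]
        exact T.mem_graph a
      have h0 := hp _ hu
      rw [WithLp.prod_inner_apply] at h0
      have h0' : ⟪(T a : F), p.fst⟫ + ⟪-(a : E), p.snd⟫ = 0 := h0
      rw [inner_neg_left] at h0'
      have hkey : ⟪(T a : F), p.fst⟫ = ⟪(a : E), p.snd⟫ := by linear_combination h0'
      calc ⟪p.snd, (a : E)⟫ = starRingEnd 𝕜 ⟪(a : E), p.snd⟫ := (inner_conj_symm _ _).symm
        _ = starRingEnd 𝕜 ⟪(T a : F), p.fst⟫ := by rw [hkey]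
        _ = ⟪p.fst, T a⟫ := inner_conj_symm _ _
    have hmem : p.fst ∈ (T†).domain := mem_adjoint_domain_of_exists p.fst ⟨p.snd, key⟩
    rw [LinearPMap.mem_graph_iff]
    exact ⟨⟨p.fst, hmem⟩, rfl, adjoint_apply_eq hT _ key⟩

lemma map_orthogonal (e : G ≃ₗᵢ[𝕜] G') (S : Submodule 𝕜 G) :
    Sᗮ.map e.toLinearEquiv.toLinearMap = (S.map e.toLinearEquiv.toLinearMap)ᗮ := by
  ext x
  constructor
  · rintro ⟨y, hy, rfl⟩
    rw [Submodule.mem_orthogonal]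
    rintro u ⟨s, hs, rfl⟩
    show ⟪e s, e y⟫ = 0
    rw [e.inner_map_map]
    exact (Submodule.mem_orthogonal _ y).mp hy s hs
  · intro hx
    refine ⟨e.symm x, ?_, e.apply_symm_apply x⟩
    rw [SetLike.mem_coe, Submodule.mem_orthogonal]
    intro s hs
    have h0 : ⟪(e s : G'), x⟫ = 0 :=
      (Submodule.mem_orthogonal _ x).mp hx (e s) ⟨s, hs, rfl⟩
    calc ⟪s, e.symm x⟫ = ⟪e s, e (e.symm x)⟫ := (e.inner_map_map _ _).symm
      _ = ⟪e s, x⟫ := by rw [e.apply_symm_apply]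
      _ = 0 := h0

lemma mapJ_mapJ (S : Submodule 𝕜 (WithLp 2 (E × F))) :
    ((S.map (Jiso (𝕜 := 𝕜) (E := E) (F := F)).toLinearEquiv.toLinearMap).map
        (Jiso (𝕜 := 𝕜) (E := F) (F := E)).toLinearEquiv.toLinearMap) = S := by
  ext x
  constructor
  · rintro ⟨y, ⟨z, hz, rfl⟩, rfl⟩
    have h : (Jiso (𝕜 := 𝕜) (E := F) (F := E)).toLinearEquiv.toLinearMap
        ((Jiso (𝕜 := 𝕜) (E := E) (F := F)).toLinearEquiv.toLinearMap z) = -z := by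
      show WithLp.toLp 2 ((-z.fst : E), (-z.snd : F)) = (-z : WithLp 2 (E × F))
      rfl
    rw [h]
    exact S.neg_mem hz
  · intro hx
    refine ⟨(Jiso (𝕜 := 𝕜) (E := E) (F := F)).toLinearEquiv (-x), ⟨-x, S.neg_mem hx, rfl⟩, ?_⟩
    have h : (Jiso (𝕜 := 𝕜) (E := F) (F := E)).toLinearEquiv.toLinearMap
        ((Jiso (𝕜 := 𝕜) (E := E) (F := F)).toLinearEquiv (-x)) = -(-x) := by
      show WithLp.toLp 2 ((- -x.fst : E), (- -x.snd : F)) = _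
      rfl
    rw [h, neg_neg]

lemma coe_graphL (T : E →ₗ.[𝕜] F) :
    (graphL T : Set (WithLp 2 (E × F))) =
      (WithLp.prodContinuousLinearEquiv 2 𝕜 E F) ⁻¹' (T.graph : Set (E × F)) := by
  ext x
  simp only [Set.mem_preimage, SetLike.mem_coe]
  rw [mem_graphL]
  exact Iff.rfl

lemma isClosed_graphL_iff (T : E →ₗ.[𝕜] F) :
    IsClosed (graphL T : Set (WithLp 2 (E × F))) ↔ T.IsClosed := by
  rw [coe_graphL]
  exact (WithLp.prodContinuousLinearEquiv 2 𝕜 E F).toHomeomorph.isClosed_preimage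

lemma graphL_topologicalClosure (T : E →ₗ.[𝕜] F) (hcl : T.IsClosable) :
    (graphL T).topologicalClosure = graphL T.closure := by
  apply SetLike.ext'
  rw [Submodule.topologicalClosure_coe, coe_graphL, coe_graphL]
  calc closure ((WithLp.prodContinuousLinearEquiv 2 𝕜 E F) ⁻¹' (T.graph : Set (E × F)))
      = (WithLp.prodContinuousLinearEquiv 2 𝕜 E F).toHomeomorph ⁻¹'
          closure (T.graph : Set (E × F)) :=
        ((WithLp.prodContinuousLinearEquiv 2 𝕜 E F).toHomeomorph.preimage_closure _).symm
    _ = (WithLp.prodContinuousLinearEquiv 2 𝕜 E F) ⁻¹' (T.closure.graph : Set (E × F)) := by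
        rw [← Submodule.topologicalClosure_coe, hcl.graph_closure_eq_closure_graph]
        rfl

lemma adjoint_isClosed (T : E →ₗ.[𝕜] F) (hT : Dense (T.domain : Set E)) :
    (T†).IsClosed := by
  rw [← isClosed_graphL_iff, graphL_adjoint_eq T hT]
  exact Submodule.isClosed_orthogonal _

lemma map_topologicalClosure (e : G ≃ₗᵢ[𝕜] G') [CompleteSpace G] [CompleteSpace G']
    (S : Submodule 𝕜 G) :
    (S.map e.toLinearEquiv.toLinearMap).topologicalClosure = S.topologicalClosure.map e.toLinearEquiv.toLinearMap := by
  rw [← Submodule.orthogonal_orthogonal_eq_closure, ← Submodule.orthogonal_orthogonal_eq_closure,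
    ← map_orthogonal, ← map_orthogonal]

lemma orth_graphL_adjoint (T : E →ₗ.[𝕜] F) (hT : Dense (T.domain : Set E))
    (hcl : T.IsClosable) :
    (graphL (T†))ᗮ =
      (graphL T.closure).map (Jiso (𝕜 := 𝕜) (E := E) (F := F)).toLinearEquiv.toLinearMap := by
  rw [graphL_adjoint_eq T hT, Submodule.orthogonal_orthogonal_eq_closure,
    map_topologicalClosure, graphL_topologicalClosure T hcl]

lemma dense_adjoint_domain (T : E →ₗ.[𝕜] F) (hT : Dense (T.domain : Set E))
    (hcl : T.IsClosable) : Dense ((T†).domain : Set F) := by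
  rw [Submodule.dense_iff_topologicalClosure_eq_top, Submodule.topologicalClosure_eq_top_iff,
    Submodule.eq_bot_iff]
  intro z hz
  have hq : ((WithLp.equiv 2 (F × E)).symm (z, 0)) ∈ (graphL (T†))ᗮ := by
    rw [Submodule.mem_orthogonal]
    intro u hu
    replace hu := mem_graphL.mp hu
    rw [LinearPMap.mem_graph_iff] at hu
    obtain ⟨y, hy1, hy2⟩ := hu
    have hy1' : (y : F) = u.fst := hy1
    rw [WithLp.prod_inner_apply, WithLp.ofLp_fst, WithLp.ofLp_snd, WithLp.ofLp_fst, WithLp.ofLp_snd]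
    have h1 : ((WithLp.equiv 2 (F × E)).symm (z, (0 : E))).fst = z := rfl
    have h2 : ((WithLp.equiv 2 (F × E)).symm (z, (0 : E))).snd = (0 : E) := rfl
    rw [h1, h2, inner_zero_right, add_zero, ← hy1']
    exact (Submodule.mem_orthogonal _ z).mp hz (y : F) y.2
  rw [orth_graphL_adjoint T hT hcl] at hq
  obtain ⟨r, hr, hrq⟩ := hq
  replace hr := mem_graphL.mp hr
  have h1 : r.snd = z := congrArg WithLp.fst hrq
  have h2 : -r.fst = (0 : E) := congrArg WithLp.snd hrq
  have h3 : r.fst = 0 := by rwa [neg_eq_zero] at h2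
  rw [← h1]
  exact graph_fst_eq_zero_snd _ hr h3

lemma adjoint_adjoint_eq_closure (T : E →ₗ.[𝕜] F) (hT : Dense (T.domain : Set E))
    (hcl : T.IsClosable) : (T†)† = T.closure := by
  have hT' := dense_adjoint_domain T hT hcl
  apply graphL_inj
  rw [graphL_adjoint_eq (T†) hT', graphL_adjoint_eq T hT, map_orthogonal, mapJ_mapJ,
    Submodule.orthogonal_orthogonal_eq_closure, graphL_topologicalClosure T hcl]

lemma orth_graphL (T : E →ₗ.[𝕜] F) (hT : Dense (T.domain : Set E)) :
    (graphL T)ᗮ = (graphL (T†)).map (Jiso (𝕜 := 𝕜) (E := F) (F := E)).toLinearEquiv.toLinearMap := by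
  rw [graphL_adjoint_eq T hT, map_orthogonal, mapJ_mapJ]

lemma closure_eq_self_of_isClosed {T : E →ₗ.[𝕜] F} (hc : T.IsClosed) : T.closure = T := by
  apply LinearPMap.eq_of_eq_graph
  rw [← hc.isClosable.graph_closure_eq_closure_graph]
  apply SetLike.ext'
  rw [Submodule.topologicalClosure_coe]
  exact hc.closure_eq

end VNAux

section PcompLemmas

open VNAux

theorem LinearPMap.mem_pcomp_graph {R E F G : Type*} [Ring R] [AddCommGroup E] [Module R E]
    [AddCommGroup F] [Module R F] [AddCommGroup G] [Module R G]
    (A : F →ₗ.[R] G) (B : E →ₗ.[R] F) {x : E} {z : G} :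
    (x, z) ∈ (A.pcomp B).graph ↔ ∃ y : F, (x, y) ∈ B.graph ∧ (y, z) ∈ A.graph := by
  rw [LinearPMap.pcomp, Submodule.toLinearPMap_graph_eq]
  · exact Iff.rfl
  · rintro ⟨a, c⟩ ⟨y, hy1, hy2⟩ (ha : a = 0)
    subst ha
    have hy0 : y = 0 := B.graph_fst_eq_zero_snd hy1 rfl
    subst hy0
    exact A.graph_fst_eq_zero_snd hy2 rfl

theorem mem_ranIdAdd_iff {𝕜 H : Type*} [RCLike 𝕜] [NormedAddCommGroup H]
    [InnerProductSpace 𝕜 H] {S : H →ₗ.[𝕜] H} {u : H} :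
    u ∈ ranIdAdd S ↔ ∃ x w : H, (x, w) ∈ S.graph ∧ u = x + w := by
  constructor
  · rintro ⟨x, rfl⟩; exact ⟨x, S x, S.mem_graph x, rfl⟩
  · rintro ⟨x, w, hxw, rfl⟩
    rw [LinearPMap.mem_graph_iff] at hxw
    obtain ⟨a, ha1, ha2⟩ := hxw
    exact ⟨a, by rw [ha1, ha2]⟩

end PcompLemmas

namespace VNAux

variable {𝕜 E F : Type*} [RCLike 𝕜]
  [NormedAddCommGroup E] [InnerProductSpace 𝕜 E] [CompleteSpace E]
  [NormedAddCommGroup F] [InnerProductSpace 𝕜 F] [CompleteSpace F]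

set_option linter.unusedSectionVars false

local notation "⟪" x ", " y "⟫" => inner (𝕜 := 𝕜) x y

/-- von Neumann, first half: if `T` is closed then `ran (I + T†T) = ⊤`. -/
lemma vonNeumann_fst (T : E →ₗ.[𝕜] F) (hT : Dense (T.domain : Set E))
    (hc : T.IsClosed) (x : E) : x ∈ ranIdAdd ((T†).pcomp T) := by
  set U := (graphL T).map (Jiso (𝕜 := 𝕜) (E := E) (F := F)).toLinearEquiv.toLinearMap with hU
  have hgc : IsClosed (graphL T : Set (WithLp 2 (E × F))) := (isClosed_graphL_iff T).mpr hc
  have hUc : IsClosed (U : Set (WithLp 2 (F × E))) := by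
    rw [hU, Submodule.map_coe]
    exact (Jiso (𝕜 := 𝕜) (E := E) (F := F)).toHomeomorph.isClosedMap _ hgc
  haveI : CompleteSpace U := hUc.completeSpace_coe
  obtain ⟨a, ha, b, hb, hab⟩ :=
    U.exists_add_mem_mem_orthogonal ((WithLp.equiv 2 (F × E)).symm (0, x))
  have hbg : b ∈ graphL (T†) := by rw [graphL_adjoint_eq T hT]; exact hb
  replace ha := mem_map_Jiso.mp ha
  replace hbg := mem_graphL.mp hbg
  have h1 : (0 : F) = a.fst + b.fst := congrArg WithLp.fst hab
  have h2 : x = a.snd + b.snd := congrArg WithLp.snd hab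
  rw [mem_ranIdAdd_iff]
  refine ⟨a.snd, b.snd, ?_, h2⟩
  rw [LinearPMap.mem_pcomp_graph]
  refine ⟨-a.fst, ?_, ?_⟩
  · have h := T.graph.neg_mem ha
    rwa [show (-((-a.snd : E), (a.fst : F)) : E × F) = (a.snd, -a.fst) from by
      rw [Prod.neg_mk, neg_neg]] at h
  · have hb1 : b.fst = -a.fst := by
      have h' : b.fst + a.fst = 0 := by rw [add_comm]; exact h1.symm
      exact eq_neg_of_add_eq_zero_left h'
    rwa [hb1] at hbg

/-- von Neumann, second half: if `T` is closed then `ran (I + TT†) = ⊤`. -/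
lemma vonNeumann_snd (T : E →ₗ.[𝕜] F) (hT : Dense (T.domain : Set E))
    (hc : T.IsClosed) (y : F) : y ∈ ranIdAdd (T.pcomp (T†)) := by
  have hgc : IsClosed (graphL T : Set (WithLp 2 (E × F))) := (isClosed_graphL_iff T).mpr hc
  haveI : CompleteSpace (graphL T) := hgc.completeSpace_coe
  obtain ⟨a, ha, b, hb, hab⟩ :=
    (graphL T).exists_add_mem_mem_orthogonal ((WithLp.equiv 2 (E × F)).symm (0, y))
  rw [orth_graphL T hT] at hb
  replace ha := mem_graphL.mp ha
  replace hb := mem_map_Jiso.mp hb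
  -- hb : (-b.snd, b.fst) ∈ (T†).graph
  have h1 : (0 : E) = a.fst + b.fst := congrArg WithLp.fst hab
  have h2 : y = a.snd + b.snd := congrArg WithLp.snd hab
  rw [mem_ranIdAdd_iff]
  refine ⟨b.snd, a.snd, ?_, by rw [h2, add_comm]⟩
  rw [LinearPMap.mem_pcomp_graph]
  refine ⟨a.fst, ?_, ha⟩
  have h := (T†).graph.neg_mem hb
  rwa [show (-((-b.snd : F), (b.fst : E)) : F × E) = (b.snd, -b.fst) from by
      rw [Prod.neg_mk, neg_neg],
    show (-b.fst : E) = a.fst from neg_eq_of_add_eq_zero_left h1.symm] at h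

end VNAux

open VNAux in
/-- **Corollary.** A densely defined closable operator `T : H → K` is closed if and only if
`dom T** ⊆ ran (I + T*T)` and `ran T** ⊆ ran (I + TT*)`. -/
theorem closed_iff_ranges {𝕜 H K : Type*} [RCLike 𝕜]
    [NormedAddCommGroup H] [InnerProductSpace 𝕜 H] [CompleteSpace H]
    [NormedAddCommGroup K] [InnerProductSpace 𝕜 K] [CompleteSpace K]
    (T : H →ₗ.[𝕜] K) (hT : Dense (T.domain : Set H)) (hcl : T.IsClosable) :
    T.IsClosed ↔
      (T.adjoint.adjoint.domain : Set H) ⊆ ranIdAdd (T.adjoint.pcomp T) ∧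
      (Set.range fun x : T.adjoint.adjoint.domain => T.adjoint.adjoint x) ⊆
        ranIdAdd (T.pcomp T.adjoint) := by
  constructor
  · intro hc
    exact ⟨fun x _ => vonNeumann_fst T hT hc x,
      by rintro _ ⟨x, rfl⟩; exact vonNeumann_snd T hT hc _⟩
  · rintro ⟨h1, h2⟩
    have hT' := dense_adjoint_domain T hT hcl
    have hTcc : (T†)† = T.closure := adjoint_adjoint_eq_closure T hT hcl
    have hle : T ≤ (T†)† := hTcc ▸ T.le_closure
    suffices hdom : ((T†)†).domain ≤ T.domain by
      have hEq : (T†)† = T :=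
        (LinearPMap.eq_of_le_of_domain_eq hle (le_antisymm hle.1 hdom)).symm
      rw [← hEq]; exact adjoint_isClosed (T†) hT'
    intro x hx
    obtain ⟨u, w, hpc, hxw⟩ := mem_ranIdAdd_iff.mp (h1 hx)
    obtain ⟨y, huy, hyw⟩ := (LinearPMap.mem_pcomp_graph _ _).mp hpc
    obtain ⟨v, z, hpc2, hvz⟩ :=
      mem_ranIdAdd_iff.mp (h2 ⟨⟨x, hx⟩, rfl⟩)
    obtain ⟨y', hvy', hy'z⟩ := (LinearPMap.mem_pcomp_graph _ _).mp hpc2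
    -- unpack all graph memberships
    rw [LinearPMap.mem_graph_iff] at huy hyw hvy' hy'z
    obtain ⟨uD, huD, hTu⟩ := huy      -- uD : T.domain, ↑uD = u, T uD = y
    obtain ⟨yD, hyD, hTy⟩ := hyw      -- yD : T†.domain, ↑yD = y, T† yD = w
    obtain ⟨vD, hvD, hTv⟩ := hvy'     -- vD : T†.domain, ↑vD = v, T† vD = y'
    obtain ⟨y'D, hy'D, hTz⟩ := hy'z   -- y'D : T.domain, ↑y'D = y', T y'D = z
    have huD' : (uD : H) = u := huD
    have hyD' : (yD : K) = y := hyD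
    have hvD' : (vD : K) = v := hvD
    have hy'D' : (y'D : H) = y' := hy'D
    have hTu' : T uD = y := hTu
    have hTy' : T† yD = w := hTy
    have hTv' : T† vD = y' := hTv
    have hTz' : T y'D = z := hTz
    -- elements of dom T††
    set D := ((T†)†).domain with hD
    have huDD : u ∈ D := hle.1 (huD' ▸ uD.2)
    have hy'DD : y' ∈ D := hle.1 (hy'D' ▸ y'D.2)
    set xD : D := ⟨x, hx⟩
    set uDD : D := ⟨u, huDD⟩
    set y'DD : D := ⟨y', hy'DD⟩
    set d : D := xD - uDD - y'DD with hd
    set eD : (T†).domain := yD - vD with heD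
    -- value computations
    have hval_u : (T†)† uDD = y := by
      rw [← hTu']; exact (hle.2 (x := uD) (y := uDD) huD').symm
    have hval_y' : (T†)† y'DD = z := by
      rw [← hTz']; exact (hle.2 (x := y'D) (y := y'DD) hy'D').symm
    have hval_x : (T†)† xD = v + z := hvz
    have hval_d : (T†)† d = v - y := by
      rw [hd, LinearPMap.map_sub, LinearPMap.map_sub, hval_u, hval_y', hval_x]
      abel
    have hcoe_eD : ((eD : (T†).domain) : K) = y - v := by
      rw [heD]
      push_cast [hyD', hvD']
      abel
    have hval_eD : T† eD = w - y' := by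
      rw [heD, LinearPMap.map_sub, hTy', hTv']
    have hcoe_d : ((d : D) : H) = T† eD := by
      rw [hval_eD, hd]
      push_cast [huD', hy'D']
      show x - u - y' = w - y'
      rw [hxw]
      abel
    -- the inner-product computation
    have hFA := (adjoint_isFormalAdjoint hT') d eD
    -- hFA : ⟪T†† d, eD⟫ = ⟪d, T† eD⟫
    rw [hval_d, hcoe_eD, ← hcoe_d] at hFA
    -- hFA : ⟪v - y, y - v⟫ = ⟪d, d⟫
    have hneg : ((v : K) - y) = -(y - v) := (neg_sub _ _).symm
    rw [hneg, inner_neg_left] at hFA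
    -- hFA : -⟪y - v, y - v⟫ = ⟪d, d⟫
    have hre := congrArg RCLike.re hFA
    rw [_root_.map_neg] at hre
    have hyv0 : (y : K) - v = 0 := by
      have hnn1 : (0 : ℝ) ≤ RCLike.re (inner (𝕜 := 𝕜) ((d : D) : H) ((d : D) : H) : 𝕜) := inner_self_nonneg
      have hnn2 : (0 : ℝ) ≤ RCLike.re (inner (𝕜 := 𝕜) ((y : K) - v) ((y : K) - v) : 𝕜) := inner_self_nonneg
      have : RCLike.re (inner (𝕜 := 𝕜) ((y : K) - v) ((y : K) - v) : 𝕜) = 0 := by linarith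
      rw [inner_self_eq_norm_sq] at this
      have := pow_eq_zero_iff (n := 2) (by norm_num) |>.mp this
      exact norm_eq_zero.mp this
    -- hence v = y, so y' = T† yD = w belongs to dom T
    have hvy : v = y := (sub_eq_zero.mp hyv0).symm
    have hvDyD : vD = yD := Subtype.ext (by rw [hvD', hyD', hvy])
    have hwy' : w = y' := by rw [← hTy', ← hTv', hvDyD]
    -- x = u + w with u ∈ dom T and w = y' ∈ dom T
    rw [hxw, hwy']
    exact T.domain.add_mem (huD' ▸ uD.2) (hy'D' ▸ y'D.2)
end

section
/- Let A be a linear operator in a real or complex Hilbert space H (not assumed densely defined). The following are equivalent: (i) A is densely defined and selfadjoint; (ii) A is symmetric and there exists a nonzero real number c such that the range of the block operator M_{A,A}(c) equals H × H; (iii) A is symmetric and there exists a nonzero real number c such that the orthogonal complement of the graph G(c⁻¹A) in H × H is contained in the range of M_{A,A}(c). -/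
open LinearPMap

/-- A partially defined operator `A` in a Hilbert space is symmetric if
`⟪A x, y⟫ = ⟪x, A y⟫` for all `x, y` in its domain. -/
def LinearPMap.IsSymmetricOp {𝕜 H : Type*} [RCLike 𝕜] [NormedAddCommGroup H]
    [InnerProductSpace 𝕜 H] (A : H →ₗ.[𝕜] H) : Prop :=
  ∀ x y : A.domain, inner (𝕜 := 𝕜) (A x) (y : H) = inner (𝕜 := 𝕜) (x : H) (A y)

/-- The range of the block operator `M_{S,T}(c)(x,y) = (c x - T y, S x + c y)` acting on
`H × H` with domain `dom S × dom T`. -/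
def blockRangeC {𝕜 H : Type*} [RCLike 𝕜] [NormedAddCommGroup H] [InnerProductSpace 𝕜 H]
    (S T : H →ₗ.[𝕜] H) (c : ℝ) : Set (H × H) :=
  {p : H × H | ∃ (x : S.domain) (y : T.domain),
    p = ((c : 𝕜) • (x : H) - T y, S x + (c : 𝕜) • (y : H))}

section Aux

variable {𝕜 H : Type*} [RCLike 𝕜] [NormedAddCommGroup H] [InnerProductSpace 𝕜 H]
  [CompleteSpace H] (A : H →ₗ.[𝕜] H)

local notation "⟪" x ", " y "⟫" => inner (𝕜 := 𝕜) x y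

/-- The graph of `A` as a submodule of `WithLp 2 (H × H)`. -/
noncomputable def ggraph : Submodule 𝕜 (WithLp 2 (H × H)) :=
  A.graph.comap (WithLp.linearEquiv 2 𝕜 (H × H)).toLinearMap

lemma mem_ggraph_iff {p : WithLp 2 (H × H)} :
    p ∈ ggraph A ↔ ∃ x : A.domain, ((x : H), A x) = WithLp.linearEquiv 2 𝕜 (H × H) p := by
  rw [ggraph, Submodule.mem_comap]
  exact A.mem_graph_iff'

variable {A}

lemma mem_ggraph_orth_iff (hd : Dense (A.domain : Set H)) (hA : A.adjoint = A)
    {p : WithLp 2 (H × H)} :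
    p ∈ (ggraph A)ᗮ ↔
      ∃ y : A.domain, (-(A y), (y : H)) = WithLp.linearEquiv 2 𝕜 (H × H) p := by
  have hsym : A.IsFormalAdjoint A := by
    have h0 := adjoint_isFormalAdjoint hd (T := A); rw [hA] at h0; exact h0
  constructor
  · intro hp
    have key : ∀ x : A.domain, ⟪-(p.fst), (x : H)⟫ = ⟪p.snd, A x⟫ := by
      intro x
      have h0 := (Submodule.mem_orthogonal _ _).1 hp
        ((WithLp.linearEquiv 2 𝕜 (H × H)).symm ((x : H), A x))
        ((mem_ggraph_iff A).2 ⟨x, by simp⟩)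
      rw [WithLp.prod_inner_apply] at h0
      have h0' : ⟪(x : H), p.fst⟫ + ⟪A x, p.snd⟫ = 0 := h0
      have h1 := congrArg (starRingEnd 𝕜) h0'
      simp only [_root_.map_add, inner_conj_symm, _root_.map_zero] at h1
      rw [inner_neg_left]
      linear_combination -h1
    have hmem : p.snd ∈ A.adjoint.domain :=
      mem_adjoint_domain_of_exists _ ⟨-(p.fst), key⟩
    have happ : A.adjoint ⟨p.snd, hmem⟩ = -(p.fst) := adjoint_apply_eq hd _ key
    have hgr : ((p.snd : H), -(p.fst)) ∈ A.adjoint.graph := happ ▸ mem_graph _ ⟨p.snd, hmem⟩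
    rw [hA] at hgr
    obtain ⟨y, hy⟩ := A.mem_graph_iff'.1 hgr
    refine ⟨y, ?_⟩
    have h1 : (y : H) = p.snd := congrArg Prod.fst hy
    have h2 : A y = -(p.fst) := congrArg Prod.snd hy
    have : WithLp.linearEquiv 2 𝕜 (H × H) p = (p.fst, p.snd) := rfl
    rw [this, h1, h2, neg_neg]
  · rintro ⟨y, hy⟩
    rw [Submodule.mem_orthogonal]
    intro u hu
    obtain ⟨x, hx⟩ := (mem_ggraph_iff A).1 hu
    have hu1 : (x : H) = u.fst := congrArg Prod.fst hx
    have hu2 : A x = u.snd := congrArg Prod.snd hx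
    have hp1 : -(A y) = p.fst := congrArg Prod.fst hy
    have hp2 : (y : H) = p.snd := congrArg Prod.snd hy
    rw [WithLp.prod_inner_apply]
    change ⟪u.fst, p.fst⟫ + ⟪u.snd, p.snd⟫ = 0
    rw [← hu1, ← hu2, ← hp1, ← hp2, inner_neg_right,
      hsym x y]
    ring

lemma ggraph_orth_orth_le (hd : Dense (A.domain : Set H)) (hA : A.adjoint = A) :
    ((ggraph A)ᗮ)ᗮ ≤ ggraph A := by
  intro p hp
  have key : ∀ x : A.domain, ⟪p.snd, (x : H)⟫ = ⟪p.fst, A x⟫ := by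
    intro x
    have h0 := (Submodule.mem_orthogonal _ _).1 hp
      ((WithLp.linearEquiv 2 𝕜 (H × H)).symm (-(A x), (x : H)))
      ((mem_ggraph_orth_iff hd hA).2 ⟨x, by simp⟩)
    rw [WithLp.prod_inner_apply] at h0
    have h0' : ⟪-(A x), p.fst⟫ + ⟪(x : H), p.snd⟫ = 0 := h0
    have h1 := congrArg (starRingEnd 𝕜) h0'
    simp only [_root_.map_add, inner_conj_symm, _root_.map_zero] at h1
    rw [inner_neg_right] at h1
    linear_combination h1
  have hmem : p.fst ∈ A.adjoint.domain :=
    mem_adjoint_domain_of_exists _ ⟨p.snd, key⟩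
  have happ : A.adjoint ⟨p.fst, hmem⟩ = p.snd := adjoint_apply_eq hd _ key
  have hgr : ((p.fst : H), p.snd) ∈ A.adjoint.graph := happ ▸ mem_graph _ ⟨p.fst, hmem⟩
  rw [hA] at hgr
  exact (mem_ggraph_iff A).2 (A.mem_graph_iff'.1 hgr)

end Aux

/-- **Theorem 4 (selfadjointness).** For an operator `A` in a Hilbert space `H` the
following are equivalent: (i) `A` is densely defined and selfadjoint; (ii) `A` is symmetric
and `ran M_{A,A}(c) = H × H` for some real `c ≠ 0`; (iii) `A` is symmetric and
`G(c⁻¹A)ᗮ ⊆ ran M_{A,A}(c)` for some real `c ≠ 0`. -/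
theorem selfadjoint_tfae {𝕜 H : Type*} [RCLike 𝕜]
    [NormedAddCommGroup H] [InnerProductSpace 𝕜 H] [CompleteSpace H]
    (A : H →ₗ.[𝕜] H) :
    List.TFAE
      [Dense (A.domain : Set H) ∧ A.adjoint = A,
       A.IsSymmetricOp ∧ ∃ c : ℝ, c ≠ 0 ∧ blockRangeC A A c = Set.univ,
       A.IsSymmetricOp ∧ ∃ c : ℝ, c ≠ 0 ∧
         prodOrth (𝕜 := 𝕜) (((c : 𝕜)⁻¹ • A).graph : Set (H × H)) ⊆ blockRangeC A A c] := by
  tfae_have 1 → 2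
  | ⟨hd, hA⟩ => by
    have hfa : A.IsFormalAdjoint A := by
      have h0 := adjoint_isFormalAdjoint hd (T := A); rw [hA] at h0; exact h0
    refine ⟨fun x y => hfa x y, 1, one_ne_zero, ?_⟩
    rw [Set.eq_univ_iff_forall]
    rintro ⟨a, b⟩
    have hcl : IsClosed ((ggraph A : Set (WithLp 2 (H × H)))) := by
      have h : ggraph A = ((ggraph A)ᗮ)ᗮ :=
        le_antisymm (Submodule.le_orthogonal_orthogonal _) (ggraph_orth_orth_le hd hA)
      rw [h]
      exact Submodule.isClosed_orthogonal _
    haveI : CompleteSpace (ggraph A) := hcl.completeSpace_coe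
    obtain ⟨g, hg, h, hh, hz⟩ := Submodule.exists_add_mem_mem_orthogonal (K := ggraph A)
      ((WithLp.linearEquiv 2 𝕜 (H × H)).symm (a, b))
    obtain ⟨x, hx⟩ := (mem_ggraph_iff A).1 hg
    obtain ⟨y, hy⟩ := (mem_ggraph_orth_iff hd hA).1 hh
    refine ⟨x, y, ?_⟩
    have hab : (a, b) = ((x : H), A x) + (-(A y), (y : H)) := by
      rw [hx, hy, ← _root_.map_add, ← hz, LinearEquiv.apply_symm_apply]
    have h1 : a = (x : H) + -(A y) := congrArg Prod.fst hab
    have h2 : b = A x + (y : H) := congrArg Prod.snd hab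
    rw [Prod.ext_iff]
    constructor
    · simpa [sub_eq_add_neg] using h1
    · simpa using h2
  tfae_have 2 → 3
  | ⟨hs, c, hc, hr⟩ => ⟨hs, c, hc, by rw [hr]; exact Set.subset_univ _⟩
  tfae_have 3 → 1
  | ⟨hsym, c, hc, hsub⟩ => by
    have hc𝕜 : (c : 𝕜) ≠ 0 := RCLike.ofReal_ne_zero.mpr hc
    -- density
    have hd : Dense (A.domain : Set H) := by
      rw [Submodule.dense_iff_topologicalClosure_eq_top,
        Submodule.topologicalClosure_eq_top_iff, Submodule.eq_bot_iff]
      intro z hz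
      have hmem : ((z, (0 : H)) : H × H) ∈
          prodOrth (𝕜 := 𝕜) (((c : 𝕜)⁻¹ • A).graph : Set (H × H)) := by
        rintro ⟨q1, q2⟩ hq
        obtain ⟨x, hx⟩ := (((c : 𝕜)⁻¹ • A).mem_graph_iff').1 hq
        have hq1 : (x : H) = q1 := congrArg Prod.fst hx
        simp only [inner_zero_left, add_zero, ← hq1]
        exact (Submodule.mem_orthogonal' _ _).1 hz _ x.2
      obtain ⟨x, y, hxy⟩ := hsub hmem
      have h1 : z = (c : 𝕜) • (x : H) - A y := congrArg Prod.fst hxy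
      have h2 : (0 : H) = A x + (c : 𝕜) • (y : H) := congrArg Prod.snd hxy
      have hAx : A x = -((c : 𝕜) • (y : H)) := by
        rw [eq_neg_iff_add_eq_zero]; exact h2.symm
      have e1 : inner (𝕜 := 𝕜) z (x : H) = 0 :=
        (Submodule.mem_orthogonal' _ _).1 hz _ x.2
      rw [h1, inner_sub_left, inner_smul_left, RCLike.conj_ofReal, hsym y x, hAx,
        inner_neg_right, inner_smul_right] at e1
      have e2 : (c : 𝕜) * (inner (𝕜 := 𝕜) (x : H) (x : H)
          + inner (𝕜 := 𝕜) (y : H) (y : H)) = 0 := by linear_combination e1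
      have e3 : inner (𝕜 := 𝕜) (x : H) (x : H) + inner (𝕜 := 𝕜) (y : H) (y : H) = 0 :=
        (mul_eq_zero.1 e2).resolve_left hc𝕜
      rw [inner_self_eq_norm_sq_to_K, inner_self_eq_norm_sq_to_K] at e3
      have e4 : ‖(x : H)‖ ^ 2 + ‖(y : H)‖ ^ 2 = 0 := by exact_mod_cast e3
      have hx0 : (x : H) = 0 := by
        have := sq_nonneg ‖(x : H)‖; have := sq_nonneg ‖(y : H)‖
        have : ‖(x : H)‖ = 0 := by nlinarith
        simpa using this
      have hy0 : (y : H) = 0 := by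
        have := sq_nonneg ‖(x : H)‖; have := sq_nonneg ‖(y : H)‖
        have : ‖(y : H)‖ = 0 := by nlinarith
        simpa using this
      have hyy : y = 0 := Subtype.ext hy0
      rw [h1, hx0, hyy]
      simp
    -- A is formal adjoint of itself
    have hle : A ≤ A.adjoint := IsFormalAdjoint.le_adjoint hd hsym
    have hle2 : A.adjoint ≤ A := by
      have main : ∀ v : A.adjoint.domain, ∃ hv : (v : H) ∈ A.domain,
          A ⟨(v : H), hv⟩ = A.adjoint v := by
        intro v
        set w := A.adjoint v with hw
        have hmem : ((-((c : 𝕜)⁻¹ • w), (v : H)) : H × H) ∈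
            prodOrth (𝕜 := 𝕜) (((c : 𝕜)⁻¹ • A).graph : Set (H × H)) := by
          rintro ⟨q1, q2⟩ hq
          obtain ⟨x, hx⟩ := (((c : 𝕜)⁻¹ • A).mem_graph_iff').1 hq
          have hq1 : (x : H) = q1 := congrArg Prod.fst hx
          have hq2 : ((c : 𝕜)⁻¹ • A) x = q2 := congrArg Prod.snd hx
          rw [LinearPMap.smul_apply] at hq2
          have hadj : inner (𝕜 := 𝕜) w (x : H) = inner (𝕜 := 𝕜) (v : H) (A x) :=
            adjoint_isFormalAdjoint hd v x
          rw [← hq1, ← hq2, inner_neg_left, inner_smul_left, inner_smul_right,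
            map_inv₀, RCLike.conj_ofReal, hadj]
          ring
        obtain ⟨x, y, hxy⟩ := hsub hmem
        have h1 : -((c : 𝕜)⁻¹ • w) = (c : 𝕜) • (x : H) - A y := congrArg Prod.fst hxy
        have h2 : (v : H) = A x + (c : 𝕜) • (y : H) := congrArg Prod.snd hxy
        have h1' : (c : 𝕜)⁻¹ • w = A y - (c : 𝕜) • (x : H) := by
          rw [neg_eq_iff_eq_neg] at h1
          rw [h1]; module
        have hwv : w = (c : 𝕜) • A y - ((c : 𝕜) * (c : 𝕜)) • (x : H) := by
          have h4 := congrArg (fun t => (c : 𝕜) • t) h1'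
          simp only [smul_smul, mul_inv_cancel₀ hc𝕜, one_smul, smul_sub] at h4
          rw [h4]
        have hadj : inner (𝕜 := 𝕜) w (x : H) = inner (𝕜 := 𝕜) (v : H) (A x) :=
          adjoint_isFormalAdjoint hd v x
        rw [hwv, h2, inner_sub_left, inner_smul_left, inner_smul_left, inner_add_left,
          inner_smul_left, RCLike.conj_ofReal, map_mul, RCLike.conj_ofReal,
          hsym y x] at hadj
        have e2 : inner (𝕜 := 𝕜) (A x) (A x)
            + ((c : 𝕜) * (c : 𝕜)) * inner (𝕜 := 𝕜) (x : H) (x : H) = 0 := by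
          linear_combination -hadj
        rw [inner_self_eq_norm_sq_to_K, inner_self_eq_norm_sq_to_K] at e2
        have e3 : ‖A x‖ ^ 2 + (c * c) * ‖(x : H)‖ ^ 2 = 0 := by exact_mod_cast e2
        have hcc : 0 < c * c := mul_self_pos.2 hc
        have hxsq : ‖(x : H)‖ ^ 2 = 0 := by
          by_contra hne
          have h8 : 0 < ‖(x : H)‖ ^ 2 := lt_of_le_of_ne (sq_nonneg _) (Ne.symm hne)
          nlinarith [mul_pos hcc h8, sq_nonneg ‖A x‖]
        have hx0 : (x : H) = 0 := by
          have : ‖(x : H)‖ = 0 := pow_eq_zero_iff (n := 2) (by norm_num) |>.1 hxsq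
          simpa using this
        have hAx0 : A x = 0 := by
          have : ‖A x‖ ^ 2 = 0 := by nlinarith [sq_nonneg ‖A x‖]
          have h9 : ‖A x‖ = 0 := by
            have := pow_eq_zero_iff (n := 2) (by norm_num) |>.1 this
            exact this
          simpa using h9
        have hv2 : (v : H) = (c : 𝕜) • (y : H) := by rw [h2, hAx0, zero_add]
        have hvdom : (v : H) ∈ A.domain := by
          rw [hv2]; exact A.domain.smul_mem _ y.2
        refine ⟨hvdom, ?_⟩
        have hsub2 : (⟨(v : H), hvdom⟩ : A.domain) = (c : 𝕜) • y := by
          apply Subtype.ext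
          rw [SetLike.val_smul]
          exact hv2
        rw [hsub2, A.map_smul, hwv, hx0, smul_zero, sub_zero]
      constructor
      · intro u hu
        exact (main ⟨u, hu⟩).1
      · intro u u' huu
        obtain ⟨hv, he⟩ := main u
        rw [← he]
        congr 1
        apply Subtype.ext
        exact huu
    exact ⟨hd, le_antisymm hle2 hle⟩
  tfae_finish
end

section
/- Let A be a closable symmetric linear operator (not necessarily densely defined) in a real or complex Hilbert space H. The following are equivalent: (i) A is essentially selfadjoint; (ii) there exists a nonzero real number c such that the range of the block operator M_{A,A}(c) is dense in H × H; (iii) there exists a nonzero real number c such that the orthogonal complement of the graph G(c⁻¹A) in H × H is contained in the closure of the range of M_{A,A}(c). -/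
open LinearPMap

/-- A closable operator `A` in a Hilbert space is essentially selfadjoint if its closure
is a densely defined selfadjoint operator. -/
def LinearPMap.IsEssSelfAdjointOp {𝕜 H : Type*} [RCLike 𝕜] [NormedAddCommGroup H]
    [InnerProductSpace 𝕜 H] [CompleteSpace H] (A : H →ₗ.[𝕜] H) : Prop :=
  A.IsClosable ∧ Dense (A.closure.domain : Set H) ∧ A.closure.adjoint = A.closure

namespace EssTFAE

open RCLike

variable {𝕜 H : Type*} [RCLike 𝕜] [NormedAddCommGroup H] [InnerProductSpace 𝕜 H]

local notation "⟪" x ", " y "⟫" => @inner 𝕜 _ _ x y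

theorem closure_vanish {X : Type*} [TopologicalSpace X] {f : X → 𝕜} (hf : Continuous f)
    {s : Set X} (h : ∀ q ∈ s, f q = 0) {p : X} (hp : p ∈ closure s) : f p = 0 := by
  have hc : IsClosed {q : X | f q = 0} := isClosed_eq hf continuous_const
  exact closure_minimal h hc hp

theorem coe_graph_closure {A : H →ₗ.[𝕜] H} (hcl : A.IsClosable) :
    (A.closure.graph : Set (H × H)) = closure (A.graph : Set (H × H)) := by
  rw [← hcl.graph_closure_eq_closure_graph, Submodule.topologicalClosure_coe]

theorem mem_closure_graph {A : H →ₗ.[𝕜] H} (hcl : A.IsClosable) (x : A.closure.domain) :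
    ((x : H), A.closure x) ∈ closure (A.graph : Set (H × H)) := by
  rw [← coe_graph_closure hcl]
  exact A.closure.mem_graph x

theorem closure_inner_eq {A : H →ₗ.[𝕜] H} (hsymm : A.IsSymmetricOp)
    {p : H × H} (hp : p ∈ closure (A.graph : Set (H × H))) (y : A.domain) :
    ⟪p.2, (y : H)⟫ = ⟪p.1, A y⟫ := by
  have hf : Continuous fun q : H × H => ⟪q.2, (y : H)⟫ - ⟪q.1, A y⟫ := by
    apply Continuous.sub
    · exact (continuous_snd.inner continuous_const)
    · exact (continuous_fst.inner continuous_const)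
  have h0 : ∀ q ∈ (A.graph : Set (H × H)), (fun q : H × H => ⟪q.2, (y : H)⟫ - ⟪q.1, A y⟫) q = 0 := by
    intro q hq
    rw [SetLike.mem_coe, LinearPMap.mem_graph_iff] at hq
    obtain ⟨x, hx⟩ := hq
    simp only [← hx]
    rw [hsymm x y, sub_self]
  have := closure_vanish hf h0 hp
  simpa [sub_eq_zero] using this

theorem closure_symm {A : H →ₗ.[𝕜] H} (hcl : A.IsClosable) (hsymm : A.IsSymmetricOp) :
    A.closure.IsSymmetricOp := by
  intro x y
  -- step 1 : for p in closure graph, ⟪p.2, y'⟫ = ⟪p.1, A y'⟫ for y' ∈ dom A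
  have step1 : ∀ y' : A.domain, ⟪A.closure x, (y' : H)⟫ = ⟪(x : H), A y'⟫ := fun y' =>
    closure_inner_eq hsymm (mem_closure_graph hcl x) y'
  -- step 2 : fix x, vary over closure graph
  have hf : Continuous fun q : H × H => ⟪A.closure x, q.1⟫ - ⟪(x : H), q.2⟫ := by
    apply Continuous.sub
    · exact continuous_const.inner continuous_fst
    · exact continuous_const.inner continuous_snd
  have h0 : ∀ q ∈ (A.graph : Set (H × H)),
      (fun q : H × H => ⟪A.closure x, q.1⟫ - ⟪(x : H), q.2⟫) q = 0 := by
    intro q hq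
    rw [SetLike.mem_coe, LinearPMap.mem_graph_iff] at hq
    obtain ⟨y', hy'⟩ := hq
    simp only [← hy']
    rw [step1 y', sub_self]
  have := closure_vanish hf h0 (mem_closure_graph hcl y)
  simpa [sub_eq_zero] using this

noncomputable def blockSubmodule (A : H →ₗ.[𝕜] H) (c : ℝ) : Submodule 𝕜 (WithLp 2 (H × H)) where
  carrier := {z | (z.fst, z.snd) ∈ blockRangeC A A c}
  zero_mem' := ⟨0, 0, by show ((0:H), (0:H)) = _; simp⟩
  add_mem' := by
    rintro p q ⟨x, y, hp⟩ ⟨x', y', hq⟩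
    refine ⟨x + x', y + y', ?_⟩
    have e : (((p + q).fst, (p + q).snd) : H × H) = (p.fst, p.snd) + (q.fst, q.snd) := rfl
    rw [e, hp, hq]
    show ((((c : 𝕜) • (x:H) - A y) + ((c : 𝕜) • (x':H) - A y'),
      (A x + (c : 𝕜) • (y:H)) + (A x' + (c : 𝕜) • (y':H))) : H × H) = _
    simp only [LinearPMap.map_add, Submodule.coe_add, smul_add, Prod.mk.injEq]
    constructor <;> module
  smul_mem' := by
    rintro a p ⟨x, y, hp⟩
    refine ⟨a • x, a • y, ?_⟩
    have e : (((a • p).fst, (a • p).snd) : H × H) = a • (p.fst, p.snd) := rfl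
    rw [e, hp]
    show ((a • ((c : 𝕜) • (x:H) - A y), a • (A x + (c : 𝕜) • (y:H))) : H × H) = _
    simp only [LinearPMap.map_smul, SetLike.val_smul, smul_sub, smul_add, Prod.mk.injEq]
    constructor <;> module

theorem mem_blockSubmodule_iff {A : H →ₗ.[𝕜] H} {c : ℝ} {z : WithLp 2 (H × H)} :
    z ∈ blockSubmodule A c ↔ (z.fst, z.snd) ∈ blockRangeC A A c := Iff.rfl

theorem coe_blockSubmodule (A : H →ₗ.[𝕜] H) (c : ℝ) :
    ((blockSubmodule A c : Submodule 𝕜 (WithLp 2 (H × H))) : Set (WithLp 2 (H × H)))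
      = {z | (z.fst, z.snd) ∈ blockRangeC A A c} := rfl

noncomputable def eqv (𝕜 H : Type*) [RCLike 𝕜] [NormedAddCommGroup H]
    [InnerProductSpace 𝕜 H] : WithLp 2 (H × H) ≃L[𝕜] H × H :=
  WithLp.prodContinuousLinearEquiv 2 𝕜 H H

theorem eqv_apply (z : WithLp 2 (H × H)) : (eqv 𝕜 H z) = (z.fst, z.snd) := rfl

theorem symm_image (s : Set (H × H)) :
    (eqv 𝕜 H).symm '' s = {z : WithLp 2 (H × H) | (z.fst, z.snd) ∈ s} := by
  ext z
  rw [Set.mem_image]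
  constructor
  · rintro ⟨w, hw, rfl⟩; exact hw
  · intro hz; exact ⟨(z.fst, z.snd), hz, rfl⟩

theorem dense_transfer (s : Set (H × H)) :
    Dense s ↔ Dense ((eqv 𝕜 H).symm '' s) := by
  constructor
  · intro h
    exact ((eqv 𝕜 H).symm.surjective.denseRange).dense_image (eqv 𝕜 H).symm.continuous h
  · intro h
    have := ((eqv 𝕜 H).surjective.denseRange).dense_image (eqv 𝕜 H).continuous h
    simpa using this

theorem eqv_symm_fst (w : H × H) : ((eqv 𝕜 H).symm w).fst = w.1 := rfl

theorem eqv_symm_snd (w : H × H) : ((eqv 𝕜 H).symm w).snd = w.2 := rfl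

theorem prod_inner_apply' (x y : WithLp 2 (H × H)) :
    ⟪x, y⟫ = ⟪x.fst, y.fst⟫ + ⟪x.snd, y.snd⟫ := rfl


theorem norm_identity {A : H →ₗ.[𝕜] H} (hsymm : A.IsSymmetricOp) (c : ℝ) (x y : A.domain) :
    ‖(c : 𝕜) • (x : H) - A y‖ ^ 2 + ‖A x + (c : 𝕜) • (y : H)‖ ^ 2
      = c ^ 2 * (‖(x : H)‖ ^ 2 + ‖(y : H)‖ ^ 2) + ‖A x‖ ^ 2 + ‖A y‖ ^ 2 := by
  have h1 : ‖(c : 𝕜) • (x : H) - A y‖ ^ 2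
      = ‖(c : 𝕜) • (x : H)‖ ^ 2 - 2 * re ⟪(c : 𝕜) • (x : H), A y⟫ + ‖A y‖ ^ 2 :=
    norm_sub_sq (𝕜 := 𝕜) _ _
  have h2 : ‖A x + (c : 𝕜) • (y : H)‖ ^ 2
      = ‖A x‖ ^ 2 + 2 * re ⟪A x, (c : 𝕜) • (y : H)⟫ + ‖(c : 𝕜) • (y : H)‖ ^ 2 :=
    norm_add_sq (𝕜 := 𝕜) _ _
  have e1 : re ⟪(c : 𝕜) • (x : H), A y⟫ = c * re ⟪(x : H), A y⟫ := by
    rw [inner_smul_left, conj_ofReal, re_ofReal_mul]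
  have e2 : re ⟪A x, (c : 𝕜) • (y : H)⟫ = c * re ⟪(x : H), A y⟫ := by
    rw [inner_smul_right, re_ofReal_mul, hsymm x y]
  have n1 : ‖(c : 𝕜) • (x : H)‖ ^ 2 = c ^ 2 * ‖(x : H)‖ ^ 2 := by
    rw [norm_smul, RCLike.norm_ofReal, mul_pow, sq_abs]
  have n2 : ‖(c : 𝕜) • (y : H)‖ ^ 2 = c ^ 2 * ‖(y : H)‖ ^ 2 := by
    rw [norm_smul, RCLike.norm_ofReal, mul_pow, sq_abs]
  rw [h1, h2, e1, e2, n1, n2]; ring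

theorem comp_bounds {A : H →ₗ.[𝕜] H} (hsymm : A.IsSymmetricOp) {c : ℝ} (hc : c ≠ 0)
    (x y : A.domain) :
    ‖(x : H)‖ ≤ (Real.sqrt 2 / |c|) *
        ‖((((c : 𝕜) • (x : H) - A y), (A x + (c : 𝕜) • (y : H))) : H × H)‖ ∧
    ‖(y : H)‖ ≤ (Real.sqrt 2 / |c|) *
        ‖((((c : 𝕜) • (x : H) - A y), (A x + (c : 𝕜) • (y : H))) : H × H)‖ ∧
    ‖A x‖ ≤ Real.sqrt 2 *
        ‖((((c : 𝕜) • (x : H) - A y), (A x + (c : 𝕜) • (y : H))) : H × H)‖ ∧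
    ‖A y‖ ≤ Real.sqrt 2 *
        ‖((((c : 𝕜) • (x : H) - A y), (A x + (c : 𝕜) • (y : H))) : H × H)‖ := by
  set p : H × H := (((c : 𝕜) • (x : H) - A y), (A x + (c : 𝕜) • (y : H))) with hp
  have hN : (0:ℝ) ≤ ‖p‖ := norm_nonneg _
  have hb1 : ‖p.1‖ ≤ ‖p‖ := norm_fst_le p
  have hb2 : ‖p.2‖ ≤ ‖p‖ := norm_snd_le p
  have key := norm_identity hsymm c x y
  have hsum : c ^ 2 * (‖(x : H)‖ ^ 2 + ‖(y : H)‖ ^ 2) + ‖A x‖ ^ 2 + ‖A y‖ ^ 2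
      ≤ 2 * ‖p‖ ^ 2 := by
    rw [← key, hp]
    nlinarith [norm_nonneg p.1, norm_nonneg p.2]
  have hs2 : Real.sqrt 2 ^ 2 = 2 := Real.sq_sqrt (by norm_num)
  have hcpos : 0 < |c| := abs_pos.mpr hc
  have hsq : ∀ a b : ℝ, 0 ≤ a → 0 ≤ b → a ^ 2 ≤ b ^ 2 → a ≤ b := by
    intro a b ha hb h
    exact le_of_pow_le_pow_left₀ two_ne_zero hb h
  have hx2 : c ^ 2 * ‖(x : H)‖ ^ 2 ≤ 2 * ‖p‖ ^ 2 := by nlinarith [norm_nonneg (A x), norm_nonneg (A y), norm_nonneg ((y:H)), sq_nonneg c]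
  have hy2 : c ^ 2 * ‖(y : H)‖ ^ 2 ≤ 2 * ‖p‖ ^ 2 := by nlinarith [norm_nonneg (A x), norm_nonneg (A y), norm_nonneg ((x:H)), sq_nonneg c]
  have hAx2 : ‖A x‖ ^ 2 ≤ 2 * ‖p‖ ^ 2 := by nlinarith [norm_nonneg (A y), norm_nonneg ((x:H)), norm_nonneg ((y:H)), sq_nonneg c, mul_nonneg (sq_nonneg c) (sq_nonneg ‖(x:H)‖), mul_nonneg (sq_nonneg c) (sq_nonneg ‖(y:H)‖)]
  have hAy2 : ‖A y‖ ^ 2 ≤ 2 * ‖p‖ ^ 2 := by nlinarith [norm_nonneg (A x), mul_nonneg (sq_nonneg c) (sq_nonneg ‖(x:H)‖), mul_nonneg (sq_nonneg c) (sq_nonneg ‖(y:H)‖)]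
  refine ⟨?_, ?_, ?_, ?_⟩
  · rw [div_mul_eq_mul_div, le_div_iff₀ hcpos, mul_comm ‖(x:H)‖ |c|]
    apply hsq _ _ (by positivity) (by positivity)
    calc (|c| * ‖(x : H)‖) ^ 2 = c ^ 2 * ‖(x : H)‖ ^ 2 := by rw [mul_pow, sq_abs]
    _ ≤ 2 * ‖p‖ ^ 2 := hx2
    _ = (Real.sqrt 2 * ‖p‖) ^ 2 := by rw [mul_pow, hs2]
  · rw [div_mul_eq_mul_div, le_div_iff₀ hcpos, mul_comm ‖(y:H)‖ |c|]
    apply hsq _ _ (by positivity) (by positivity)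
    calc (|c| * ‖(y : H)‖) ^ 2 = c ^ 2 * ‖(y : H)‖ ^ 2 := by rw [mul_pow, sq_abs]
    _ ≤ 2 * ‖p‖ ^ 2 := hy2
    _ = (Real.sqrt 2 * ‖p‖) ^ 2 := by rw [mul_pow, hs2]
  · apply hsq _ _ (by positivity) (by positivity)
    calc ‖A x‖ ^ 2 ≤ 2 * ‖p‖ ^ 2 := hAx2
    _ = (Real.sqrt 2 * ‖p‖) ^ 2 := by rw [mul_pow, hs2]
  · apply hsq _ _ (by positivity) (by positivity)
    calc ‖A y‖ ^ 2 ≤ 2 * ‖p‖ ^ 2 := hAy2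
    _ = (Real.sqrt 2 * ‖p‖) ^ 2 := by rw [mul_pow, hs2]

theorem cauchy_of_le {E' F' : Type*} [NormedAddCommGroup E'] [NormedAddCommGroup F']
    {u : ℕ → E'} {p : ℕ → F'} (hp : CauchySeq p) {K : ℝ}
    (h : ∀ m n, ‖u m - u n‖ ≤ K * ‖p m - p n‖) : CauchySeq u := by
  rw [Metric.cauchySeq_iff] at hp ⊢
  intro ε hε
  set K' : ℝ := max K 1 with hK'
  have hK'pos : 0 < K' := lt_of_lt_of_le one_pos (le_max_right _ _)
  obtain ⟨N, hN⟩ := hp (ε / K') (by positivity)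
  refine ⟨N, fun m hm n hn => ?_⟩
  have h1 := hN m hm n hn
  rw [dist_eq_norm] at h1 ⊢
  calc ‖u m - u n‖ ≤ K * ‖p m - p n‖ := h m n
    _ ≤ K' * ‖p m - p n‖ := by
        apply mul_le_mul_of_nonneg_right (le_max_left _ _) (norm_nonneg _)
    _ < K' * (ε / K') := by exact (mul_lt_mul_iff_right₀ hK'pos).mpr h1
    _ = ε := by field_simp

variable [CompleteSpace H]

theorem block_closure_surjective {A : H →ₗ.[𝕜] H} (hcl : A.IsClosable)
    (hsymm : A.IsSymmetricOp) {c : ℝ} (hc : c ≠ 0)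
    (hdense : Dense (blockRangeC A A c)) (w : H × H) :
    ∃ x y : A.closure.domain, (c : 𝕜) • (x : H) - A.closure y = w.1 ∧
      A.closure x + (c : 𝕜) • (y : H) = w.2 := by
  obtain ⟨p, hpmem, hplim⟩ := mem_closure_iff_seq_limit.mp (hdense w)
  choose xs ys hxy using hpmem
  have hpc : CauchySeq p := hplim.cauchySeq
  have hdiff : ∀ m n, p m - p n
      = ((c : 𝕜) • ((xs m - xs n : A.domain) : H) - A (ys m - ys n),
         A (xs m - xs n) + (c : 𝕜) • ((ys m - ys n : A.domain) : H)) := by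
    intro m n
    rw [hxy m, hxy n, Prod.mk_sub_mk]
    simp only [LinearPMap.map_sub, Submodule.coe_sub, smul_sub, Prod.mk.injEq]
    constructor <;> abel
  have bx : ∀ m n, ‖(xs m : H) - (xs n : H)‖ ≤ (Real.sqrt 2 / |c|) * ‖p m - p n‖ := by
    intro m n
    have h := (comp_bounds hsymm hc (xs m - xs n) (ys m - ys n)).1
    rwa [← hdiff m n, Submodule.coe_sub] at h
  have byy : ∀ m n, ‖(ys m : H) - (ys n : H)‖ ≤ (Real.sqrt 2 / |c|) * ‖p m - p n‖ := by
    intro m n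
    have h := (comp_bounds hsymm hc (xs m - xs n) (ys m - ys n)).2.1
    rwa [← hdiff m n, Submodule.coe_sub] at h
  have bAx : ∀ m n, ‖A (xs m) - A (xs n)‖ ≤ Real.sqrt 2 * ‖p m - p n‖ := by
    intro m n
    have h := (comp_bounds hsymm hc (xs m - xs n) (ys m - ys n)).2.2.1
    rwa [← hdiff m n, LinearPMap.map_sub] at h
  have bAy : ∀ m n, ‖A (ys m) - A (ys n)‖ ≤ Real.sqrt 2 * ‖p m - p n‖ := by
    intro m n
    have h := (comp_bounds hsymm hc (xs m - xs n) (ys m - ys n)).2.2.2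
    rwa [← hdiff m n, LinearPMap.map_sub] at h
  obtain ⟨xL, hx⟩ := cauchySeq_tendsto_of_complete (cauchy_of_le hpc bx)
  obtain ⟨yL, hy⟩ := cauchySeq_tendsto_of_complete (cauchy_of_le hpc byy)
  obtain ⟨aL, ha⟩ := cauchySeq_tendsto_of_complete (cauchy_of_le hpc bAx)
  obtain ⟨bL, hb⟩ := cauchySeq_tendsto_of_complete (cauchy_of_le hpc bAy)
  -- graph membership
  have hxg : ((xL : H), aL) ∈ closure (A.graph : Set (H × H)) := by
    apply mem_closure_of_tendsto (hx.prodMk_nhds ha)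
    exact Filter.Eventually.of_forall fun n => SetLike.mem_coe.mpr (A.mem_graph (xs n))
  have hyg : ((yL : H), bL) ∈ closure (A.graph : Set (H × H)) := by
    apply mem_closure_of_tendsto (hy.prodMk_nhds hb)
    exact Filter.Eventually.of_forall fun n => SetLike.mem_coe.mpr (A.mem_graph (ys n))
  rw [← coe_graph_closure hcl, SetLike.mem_coe, LinearPMap.mem_graph_iff] at hxg hyg
  obtain ⟨xb, hxb⟩ := hxg
  obtain ⟨yb, hyb⟩ := hyg
  -- limit of p
  have l1 : Filter.Tendsto p Filter.atTop
      (nhds ((c : 𝕜) • xL - bL, aL + (c : 𝕜) • yL)) := by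
    have : Filter.Tendsto (fun n => ((c : 𝕜) • (xs n : H) - A (ys n),
        A (xs n) + (c : 𝕜) • (ys n : H))) Filter.atTop
        (nhds ((c : 𝕜) • xL - bL, aL + (c : 𝕜) • yL)) :=
      ((hx.const_smul _).sub hb).prodMk_nhds (ha.add (hy.const_smul _))
    convert this using 1
    funext n
    exact hxy n
  have hw := tendsto_nhds_unique hplim l1
  refine ⟨xb, yb, ?_, ?_⟩
  · rw [hw]
    rw [hxb.1, hyb.2]
  · rw [hw]
    rw [hyb.1, hxb.2]

theorem dense_closure_domain {A : H →ₗ.[𝕜] H} (hcl : A.IsClosable)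
    (hsymm : A.IsSymmetricOp) {c : ℝ} (hc : c ≠ 0)
    (hdense : Dense (blockRangeC A A c)) : Dense (A.closure.domain : Set H) := by
  rw [Submodule.dense_iff_topologicalClosure_eq_top, Submodule.topologicalClosure_eq_top_iff,
    Submodule.eq_bot_iff]
  intro u hu
  rw [Submodule.mem_orthogonal] at hu
  obtain ⟨x, y, h1, h2⟩ := block_closure_surjective hcl hsymm hc hdense (u, 0)
  simp only at h1 h2
  have hsc := closure_symm hcl hsymm
  have hx0 : ⟪u, (x : H)⟫ = 0 := by
    rw [← inner_conj_symm, hu (x : H) x.2, _root_.map_zero]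
  have hAx : A.closure x = -((c : 𝕜) • (y : H)) := by
    rw [← add_eq_zero_iff_eq_neg]; exact h2
  have h3 : ⟪A.closure y, (x : H)⟫ = -((c : 𝕜) * ⟪(y : H), (y : H)⟫) := by
    rw [hsc y x, hAx, inner_neg_right, inner_smul_right]
  have key : (0 : 𝕜) = (c : 𝕜) * ⟪(x : H), (x : H)⟫ - ⟪A.closure y, (x : H)⟫ := by
    rw [← hx0, ← h1, inner_sub_left, inner_smul_left, conj_ofReal]
  rw [h3] at key
  have hcc : (c : 𝕜) ≠ 0 := RCLike.ofReal_ne_zero.mpr hc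
  have hsum : ⟪(x : H), (x : H)⟫ + ⟪(y : H), (y : H)⟫ = 0 := by
    have : (c : 𝕜) * (⟪(x : H), (x : H)⟫ + ⟪(y : H), (y : H)⟫) = 0 := by
      linear_combination -key
    exact (mul_eq_zero.mp this).resolve_left hcc
  have hr := congrArg re hsum
  rw [_root_.map_add, inner_self_eq_norm_sq, inner_self_eq_norm_sq, _root_.map_zero] at hr
  have hx : ‖(x : H)‖ = 0 := by nlinarith [norm_nonneg (x : H), norm_nonneg (y : H)]
  have hy : ‖(y : H)‖ = 0 := by nlinarith [norm_nonneg (x : H), norm_nonneg (y : H)]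
  have hx' : x = 0 := by
    ext1; exact norm_eq_zero.mp hx
  have hy' : y = 0 := by
    ext1; exact norm_eq_zero.mp hy
  rw [← h1, hx', hy']
  simp

theorem adjoint_eq_closure {A : H →ₗ.[𝕜] H} (hcl : A.IsClosable)
    (hsymm : A.IsSymmetricOp) {c : ℝ} (hc : c ≠ 0)
    (hdense : Dense (blockRangeC A A c))
    (hdom : Dense (A.closure.domain : Set H)) : A.closure.adjoint = A.closure := by
  have hsc := closure_symm hcl hsymm
  have hfa : A.closure.IsFormalAdjoint A.closure := fun x y => hsc x y
  have le1 : A.closure ≤ A.closure.adjoint := hfa.le_adjoint hdom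
  have le2 : A.closure.adjoint ≤ A.closure := by
    apply le_of_le_graph
    intro z hz
    rw [LinearPMap.mem_graph_iff] at hz
    obtain ⟨v, hv⟩ := hz
    set w := A.closure.adjoint v with hwdef
    have hform := adjoint_isFormalAdjoint hdom (T := A.closure)
    obtain ⟨x, y, h1, h2⟩ := block_closure_surjective hcl hsymm hc hdense
      (-w, (c : 𝕜) • (v : H))
    simp only at h1 h2
    have claim2 : ∀ t : A.closure.domain,
        ⟪(x : H), A.closure t⟫ = (c : 𝕜) * ⟪(v : H) - (y : H), (t : H)⟫ := by
      intro t
      have e := congrArg (fun r => ⟪r, (t : H)⟫) h2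
      simp only [inner_add_left, inner_smul_left, conj_ofReal] at e
      rw [hsc x t] at e
      rw [inner_sub_left]
      linear_combination e
    have claim1 : ∀ t : A.closure.domain,
        (c : 𝕜) * ⟪(x : H), (t : H)⟫ + ⟪(v : H) - (y : H), A.closure t⟫ = 0 := by
      intro t
      have e := congrArg (fun r => ⟪r, (t : H)⟫) h1
      simp only [inner_sub_left, inner_smul_left, conj_ofReal, inner_neg_left] at e
      rw [hsc y t] at e
      have hw : ⟪w, (t : H)⟫ = ⟪(v : H), A.closure t⟫ := hform v t
      rw [hw] at e
      rw [inner_sub_left]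
      linear_combination e
    -- orthogonality to the dense range
    have hvan : ∀ q ∈ blockRangeC A A c,
        ⟪(x : H), q.1⟫ + ⟪(v : H) - (y : H), q.2⟫ = 0 := by
      rintro q ⟨t, t', rfl⟩
      have ht : A t = A.closure ⟨(t : H), A.le_closure.1 t.2⟩ := A.le_closure.2 rfl
      have ht' : A t' = A.closure ⟨(t' : H), A.le_closure.1 t'.2⟩ := A.le_closure.2 rfl
      simp only [inner_sub_right, inner_add_right, inner_smul_right]
      rw [ht, ht']
      have c1 := claim1 ⟨(t : H), A.le_closure.1 t.2⟩
      have c2 := claim2 ⟨(t' : H), A.le_closure.1 t'.2⟩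
      simp only [Submodule.coe_mk] at c1 c2 ⊢
      linear_combination c1 - c2
    have hf : Continuous (fun q : H × H => ⟪(x : H), q.1⟫ + ⟪(v : H) - (y : H), q.2⟫) :=
      (continuous_const.inner continuous_fst).add (continuous_const.inner continuous_snd)
    have hp : (((x : H), (v : H) - (y : H)) : H × H) ∈ closure (blockRangeC A A c) := by
      rw [hdense.closure_eq]; trivial
    have h0 := closure_vanish hf hvan hp
    simp only at h0
    have hr := congrArg re h0
    rw [_root_.map_add, inner_self_eq_norm_sq, inner_self_eq_norm_sq, _root_.map_zero] at hr
    have hx0 : (x : H) = 0 := by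
      rw [← norm_eq_zero]
      nlinarith [norm_nonneg (x : H), norm_nonneg ((v : H) - (y : H))]
    have hvy : (v : H) = (y : H) := by
      rw [← sub_eq_zero, ← norm_eq_zero]
      nlinarith [norm_nonneg (x : H), norm_nonneg ((v : H) - (y : H))]
    have hAy : A.closure y = w := by
      rw [hx0, smul_zero, zero_sub, neg_eq_iff_eq_neg] at h1
      rw [h1, neg_neg]
    have hmem : (v : H) ∈ A.closure.domain := hvy ▸ y.2
    rw [LinearPMap.mem_graph_iff]
    refine ⟨⟨(v : H), hmem⟩, hv.1, ?_⟩
    have heq : (⟨(v : H), hmem⟩ : A.closure.domain) = y := Subtype.ext hvy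
    rw [heq, hAy, hwdef]
    exact hv.2
  apply eq_of_eq_graph
  exact le_antisymm (le_graph_of_le le2) (le_graph_of_le le1)

-- (iii) → (ii) core
theorem dense_of_orth {A : H →ₗ.[𝕜] H} {c : ℝ} (hc : c ≠ 0)
    (hsub : prodOrth (𝕜 := 𝕜) (((c : 𝕜)⁻¹ • A).graph : Set (H × H)) ⊆
      closure (blockRangeC A A c)) : Dense (blockRangeC A A c) := by
  rw [dense_transfer (𝕜 := 𝕜), symm_image]
  have : {z : WithLp 2 (H × H) | (z.fst, z.snd) ∈ blockRangeC A A c}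
      = ((blockSubmodule A c : Submodule 𝕜 (WithLp 2 (H × H))) : Set (WithLp 2 (H × H))) := rfl
  rw [this, Submodule.dense_iff_topologicalClosure_eq_top,
    Submodule.topologicalClosure_eq_top_iff, Submodule.eq_bot_iff]
  intro p hp
  rw [Submodule.mem_orthogonal] at hp
  have hcc : (c : 𝕜) ≠ 0 := RCLike.ofReal_ne_zero.mpr hc
  -- p is in prodOrth of the graph of c⁻¹ • A
  have hporth : ((p.fst, p.snd) : H × H) ∈
      prodOrth (𝕜 := 𝕜) (((c : 𝕜)⁻¹ • A).graph : Set (H × H)) := by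
    intro q hq
    rw [SetLike.mem_coe, LinearPMap.mem_graph_iff] at hq
    obtain ⟨t, ht1, ht2⟩ := hq
    -- q = (t, c⁻¹ • A t)  where t : ((c:𝕜)⁻¹ • A).domain = A.domain
    have htd : (t : H) ∈ A.domain := t.2
    set t' : A.domain := ⟨(t : H), htd⟩ with ht'
    have happ : ((c : 𝕜)⁻¹ • A) t = (c : 𝕜)⁻¹ • (A t') := rfl
    -- use orthogonality against the element with y = 0
    have hel : ((eqv 𝕜 H).symm ((c : 𝕜) • (t' : H) - A 0, A t' + (c : 𝕜) • ((0 : A.domain) : H)))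
        ∈ blockSubmodule A c := by
      rw [mem_blockSubmodule_iff]
      exact ⟨t', 0, rfl⟩
    have h0 := hp _ hel
    rw [prod_inner_apply'] at h0
    simp only [LinearPMap.map_zero, sub_zero, Submodule.coe_zero, smul_zero, add_zero] at h0
    have h0c := congrArg (starRingEnd 𝕜) h0
    simp only [_root_.map_add, _root_.map_zero, inner_conj_symm, eqv_symm_fst, eqv_symm_snd] at h0c
    rw [inner_smul_right] at h0c
    simp only
    rw [← ht1, ht2.symm, happ, inner_smul_right]
    have key : (c : 𝕜) * (⟪p.fst, (t : H)⟫ + (c : 𝕜)⁻¹ * ⟪p.snd, A t'⟫) = 0 := by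
      field_simp
      linear_combination h0c
    exact (mul_eq_zero.mp key).resolve_left hcc
  have hclosed := hsub hporth
  -- now p ⊥ blockRange and p ∈ its closure ⇒ p = 0
  have hf : Continuous (fun q : H × H => ⟪q.1, p.fst⟫ + ⟪q.2, p.snd⟫) :=
    (continuous_fst.inner continuous_const).add (continuous_snd.inner continuous_const)
  have hvan : ∀ q ∈ blockRangeC A A c, ⟪q.1, p.fst⟫ + ⟪q.2, p.snd⟫ = 0 := by
    intro q hq
    have hel : ((eqv 𝕜 H).symm q) ∈ blockSubmodule A c := by
      rw [mem_blockSubmodule_iff]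
      exact hq
    have := hp _ hel
    rwa [prod_inner_apply'] at this
  have h0 := closure_vanish hf hvan hclosed
  simp only at h0
  have hr := congrArg re h0
  rw [_root_.map_add, inner_self_eq_norm_sq, inner_self_eq_norm_sq, _root_.map_zero] at hr
  have h1 : p.fst = 0 := by
    rw [← norm_eq_zero]; nlinarith [norm_nonneg p.fst, norm_nonneg p.snd]
  have h2 : p.snd = 0 := by
    rw [← norm_eq_zero]; nlinarith [norm_nonneg p.fst, norm_nonneg p.snd]
  rw [← (eqv 𝕜 H).map_eq_zero_iff, eqv_apply, h1, h2]
  rfl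

theorem dense_of_essSelfAdjoint {A : H →ₗ.[𝕜] H} (hcl : A.IsClosable)
    (hsymm : A.IsSymmetricOp) (hA : A.IsEssSelfAdjointOp) :
    Dense (blockRangeC A A (1 : ℝ)) := by
  obtain ⟨-, hdom, hadj⟩ := hA
  have hsc := closure_symm hcl hsymm
  rw [dense_transfer (𝕜 := 𝕜), symm_image]
  have hset : {z : WithLp 2 (H × H) | (z.fst, z.snd) ∈ blockRangeC A A (1 : ℝ)}
      = ((blockSubmodule A 1 : Submodule 𝕜 (WithLp 2 (H × H))) : Set (WithLp 2 (H × H))) := rfl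
  rw [hset, Submodule.dense_iff_topologicalClosure_eq_top,
    Submodule.topologicalClosure_eq_top_iff, Submodule.eq_bot_iff]
  intro p hp
  rw [Submodule.mem_orthogonal] at hp
  set u : H := p.fst with hu
  set v : H := p.snd with hv
  -- basic orthogonality relations
  have hrel : ∀ x y : A.domain, ⟪(x : H), u⟫ - ⟪A y, u⟫ + (⟪A x, v⟫ + ⟪(y : H), v⟫) = 0 := by
    intro x y
    have hel : ((eqv 𝕜 H).symm (((1 : ℝ) : 𝕜) • (x : H) - A y, A x + ((1 : ℝ) : 𝕜) • (y : H)))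
        ∈ blockSubmodule A 1 := ⟨x, y, rfl⟩
    have h0 := hp _ hel
    rw [prod_inner_apply'] at h0
    simp only [eqv_symm_fst, eqv_symm_snd, RCLike.ofReal_one, one_smul,
      inner_sub_left, inner_add_left] at h0
    exact h0
  have hrelx : ∀ x : A.domain, ⟪(x : H), u⟫ + ⟪A x, v⟫ = 0 := by
    intro x
    have := hrel x 0
    simpa using this
  have hrely : ∀ y : A.domain, -⟪A y, u⟫ + ⟪(y : H), v⟫ = 0 := by
    intro y
    have := hrel 0 y
    simpa using this
  -- conjugate forms
  have f1 : ∀ x : A.domain, ⟪v, A x⟫ = ⟪-u, (x : H)⟫ := by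
    intro x
    have := congrArg (starRingEnd 𝕜) (hrelx x)
    simp only [_root_.map_add, _root_.map_zero, inner_conj_symm] at this
    rw [inner_neg_left]
    linear_combination this
  have f2 : ∀ y : A.domain, ⟪u, A y⟫ = ⟪v, (y : H)⟫ := by
    intro y
    have := congrArg (starRingEnd 𝕜) (hrely y)
    simp only [_root_.map_add, _root_.map_neg, _root_.map_zero, inner_conj_symm] at this
    linear_combination -this
  -- extend to the closure
  have e1 : ∀ t : A.closure.domain, ⟪v, A.closure t⟫ = ⟪-u, (t : H)⟫ := by
    intro t
    have hf : Continuous (fun q : H × H => ⟪v, q.2⟫ - ⟪-u, q.1⟫) :=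
      (continuous_const.inner continuous_snd).sub (continuous_const.inner continuous_fst)
    have h0 : ∀ q ∈ (A.graph : Set (H × H)), (fun q : H × H => ⟪v, q.2⟫ - ⟪-u, q.1⟫) q = 0 := by
      intro q hq
      rw [SetLike.mem_coe, LinearPMap.mem_graph_iff] at hq
      obtain ⟨x, hx1, hx2⟩ := hq
      simp only [← hx1, ← hx2, f1 x, sub_self]
    have := closure_vanish hf h0 (mem_closure_graph hcl t)
    simp only [sub_eq_zero] at this
    exact this
  have e2 : ∀ t : A.closure.domain, ⟪u, A.closure t⟫ = ⟪v, (t : H)⟫ := by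
    intro t
    have hf : Continuous (fun q : H × H => ⟪u, q.2⟫ - ⟪v, q.1⟫) :=
      (continuous_const.inner continuous_snd).sub (continuous_const.inner continuous_fst)
    have h0 : ∀ q ∈ (A.graph : Set (H × H)), (fun q : H × H => ⟪u, q.2⟫ - ⟪v, q.1⟫) q = 0 := by
      intro q hq
      rw [SetLike.mem_coe, LinearPMap.mem_graph_iff] at hq
      obtain ⟨x, hx1, hx2⟩ := hq
      simp only [← hx1, ← hx2, f2 x, sub_self]
    have := closure_vanish hf h0 (mem_closure_graph hcl t)
    simp only [sub_eq_zero] at this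
    exact this
  -- adjoint membership
  have hvmem : v ∈ A.closure.adjoint.domain :=
    mem_adjoint_domain_of_exists v ⟨-u, fun t => (e1 t).symm⟩
  have humem : u ∈ A.closure.adjoint.domain :=
    mem_adjoint_domain_of_exists u ⟨v, fun t => (e2 t).symm⟩
  have happ1 : A.closure.adjoint ⟨v, hvmem⟩ = -u :=
    adjoint_apply_eq hdom ⟨v, hvmem⟩ (fun t => (e1 t).symm)
  have happ2 : A.closure.adjoint ⟨u, humem⟩ = v :=
    adjoint_apply_eq hdom ⟨u, humem⟩ (fun t => (e2 t).symm)
  have gv : (v, -u) ∈ A.closure.adjoint.graph := by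
    have := A.closure.adjoint.mem_graph ⟨v, hvmem⟩
    rwa [happ1] at this
  have gu : (u, v) ∈ A.closure.adjoint.graph := by
    have := A.closure.adjoint.mem_graph ⟨u, humem⟩
    rwa [happ2] at this
  rw [hadj] at gv gu
  rw [LinearPMap.mem_graph_iff] at gv gu
  obtain ⟨vb, hvb1, hvb2⟩ := gv
  obtain ⟨ub, hub1, hub2⟩ := gu
  have hsym2 := hsc ub vb
  simp only at hvb1 hvb2 hub1 hub2
  rw [hub2, hvb1, hub1, hvb2] at hsym2
  -- ⟪v, v⟫ = ⟪u, -u⟫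
  rw [inner_neg_right] at hsym2
  have hr := congrArg re hsym2
  rw [_root_.map_neg, inner_self_eq_norm_sq, inner_self_eq_norm_sq] at hr
  have h1 : u = 0 := by
    rw [← norm_eq_zero]; nlinarith [norm_nonneg u, norm_nonneg v]
  have h2 : v = 0 := by
    rw [← norm_eq_zero]; nlinarith [norm_nonneg u, norm_nonneg v]
  rw [← (eqv 𝕜 H).map_eq_zero_iff, eqv_apply, ← hu, ← hv, h1, h2]
  rfl

end EssTFAE

open EssTFAE in
/-- **Theorem 5 (essential selfadjointness).** For a closable symmetric (not necessarily
densely defined) operator `A` in a Hilbert space `H` the following are equivalent: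
(i) `A` is essentially selfadjoint; (ii) `ran M_{A,A}(c)` is dense in `H × H` for some
real `c ≠ 0`; (iii) `G(c⁻¹A)ᗮ ⊆ closure (ran M_{A,A}(c))` for some real `c ≠ 0`. -/
theorem essentially_selfadjoint_tfae {𝕜 H : Type*} [RCLike 𝕜]
    [NormedAddCommGroup H] [InnerProductSpace 𝕜 H] [CompleteSpace H]
    (A : H →ₗ.[𝕜] H) (hcl : A.IsClosable) (hsymm : A.IsSymmetricOp) :
    List.TFAE
      [A.IsEssSelfAdjointOp,
       ∃ c : ℝ, c ≠ 0 ∧ Dense (blockRangeC A A c),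
       ∃ c : ℝ, c ≠ 0 ∧
         prodOrth (𝕜 := 𝕜) (((c : 𝕜)⁻¹ • A).graph : Set (H × H)) ⊆
           closure (blockRangeC A A c)] := by
  tfae_have 1 → 2 := fun h1 =>
    ⟨1, one_ne_zero, dense_of_essSelfAdjoint hcl hsymm h1⟩
  tfae_have 2 → 1 := by
    rintro ⟨c, hc, hd⟩
    have hdom := dense_closure_domain hcl hsymm hc hd
    exact ⟨hcl, hdom, adjoint_eq_closure hcl hsymm hc hd hdom⟩
  tfae_have 2 → 3 := by
    rintro ⟨c, hc, hd⟩
    exact ⟨c, hc, by rw [hd.closure_eq]; exact Set.subset_univ _⟩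
  tfae_have 3 → 2 := by
    rintro ⟨c, hc, hsub⟩
    exact ⟨c, hc, dense_of_orth hc hsub⟩
  tfae_finish
end

section
/- Let A and B be symmetric linear operators in a real or complex Hilbert space H. Assume that A is essentially selfadjoint, that B is A-bounded, and that there exists b > 0 such that ‖B x‖² ≤ ‖A x‖² + ‖(A+B) x‖² + b²‖x‖² for all x ∈ dom A. Then A + B (with domain dom A ∩ dom B = dom A) is essentially selfadjoint. -/
set_option linter.unusedSectionVars false
set_option linter.unusedVariables false
set_option maxHeartbeats 1600000

open LinearPMap Filter Topology RCLike

section Helpers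

variable {𝕜 H : Type*} [RCLike 𝕜] [NormedAddCommGroup H] [InnerProductSpace 𝕜 H]
  [CompleteSpace H]

local notation "⟪" x ", " y "⟫" => @inner 𝕜 _ _ x y


/-- sequences approximating elements of the closure's graph -/
lemma ESA_exists_seq (T : H →ₗ.[𝕜] H) (hT : T.IsClosable) (x : T.closure.domain) :
    ∃ f : ℕ → T.domain, Tendsto (fun n => ((f n : H))) atTop (𝓝 (x : H)) ∧
      Tendsto (fun n => T (f n)) atTop (𝓝 (T.closure x)) := by
  have hg : ((x : H), T.closure x) ∈ (T.graph.topologicalClosure : Set (H × H)) := by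
    rw [hT.graph_closure_eq_closure_graph]
    exact T.closure.mem_graph x
  rw [Submodule.topologicalClosure_coe] at hg
  obtain ⟨f, hfmem, hconv⟩ := mem_closure_iff_seq_limit.mp hg
  have : ∀ n, ∃ y : T.domain, (y : H) = (f n).1 ∧ T y = (f n).2 := by
    intro n
    obtain ⟨y, hy⟩ := T.mem_graph_iff'.mp (hfmem n)
    exact ⟨y, congrArg Prod.fst hy, congrArg Prod.snd hy⟩
  choose g hg1 hg2 using this
  refine ⟨g, ?_, ?_⟩
  · have h1 : Tendsto (fun n => (f n).1) atTop (𝓝 (x : H)) :=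
      (continuous_fst.tendsto _).comp hconv
    simpa only [hg1] using h1
  · have h2 : Tendsto (fun n => (f n).2) atTop (𝓝 (T.closure x)) :=
      (continuous_snd.tendsto _).comp hconv
    simpa only [hg2] using h2

lemma ESA_closure_domain_subset (T : H →ₗ.[𝕜] H) :
    (T.closure.domain : Set H) ⊆ closure (T.domain : Set H) := by
  by_cases hT : T.IsClosable
  · intro x hx
    obtain ⟨f, hf1, _⟩ := ESA_exists_seq T hT ⟨x, hx⟩
    exact mem_closure_of_tendsto hf1 (Eventually.of_forall fun n => (f n).2)
  · rw [closure_def' hT]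
    exact subset_closure

lemma ESA_dense_of_closure (T : H →ₗ.[𝕜] H) (h : Dense (T.closure.domain : Set H)) :
    Dense (T.domain : Set H) := by
  rw [dense_iff_closure_eq] at h ⊢
  apply Set.eq_univ_of_univ_subset
  rw [← h]
  exact closure_minimal (ESA_closure_domain_subset T) isClosed_closure

lemma ESA_isClosable (T : H →ₗ.[𝕜] H) (hd : Dense (T.domain : Set H))
    (hsymm : T.IsSymmetricOp) : T.IsClosable := by
  refine ⟨T.graph.topologicalClosure.toLinearPMap, (Submodule.toLinearPMap_graph_eq _ ?_).symm⟩
  intro p hp hp1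
  have hp' : p ∈ closure (T.graph : Set (H × H)) := by
    rwa [← Submodule.topologicalClosure_coe]
  obtain ⟨f, hfmem, hconv⟩ := mem_closure_iff_seq_limit.mp hp'
  have : ∀ n, ∃ y : T.domain, (y : H) = (f n).1 ∧ T y = (f n).2 := by
    intro n
    obtain ⟨y, hy⟩ := T.mem_graph_iff'.mp (hfmem n)
    exact ⟨y, congrArg Prod.fst hy, congrArg Prod.snd hy⟩
  choose g hg1 hg2 using this
  have h1 : Tendsto (fun n => ((g n : H))) atTop (𝓝 (0 : H)) := by
    have := (continuous_fst.tendsto _).comp hconv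
    rw [hp1] at this
    simpa only [hg1, Function.comp_def] using this
  have h2 : Tendsto (fun n => T (g n)) atTop (𝓝 p.2) := by
    have := (continuous_snd.tendsto _).comp hconv
    simpa only [hg2, Function.comp_def] using this
  refine hd.eq_zero_of_inner_left 𝕜 fun v' hv' => ?_
  obtain ⟨v, rfl⟩ : ∃ v : T.domain, (v : H) = v' := ⟨⟨v', hv'⟩, rfl⟩
  have hlim : Tendsto (fun n => ⟪T (g n), (v : H)⟫) atTop (𝓝 ⟪p.2, (v : H)⟫) :=
    h2.inner tendsto_const_nhds
  have hlim2 : Tendsto (fun n => ⟪T (g n), (v : H)⟫) atTop (𝓝 (0 : 𝕜)) := by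
    have : (fun n => ⟪T (g n), (v : H)⟫) = fun n => ⟪((g n : H)), T v⟫ := by
      funext n; exact hsymm (g n) v
    rw [this]
    simpa using h1.inner (tendsto_const_nhds (x := T v))
  exact tendsto_nhds_unique hlim hlim2

lemma ESA_closure_symm_pair (T : H →ₗ.[𝕜] H) (hT : T.IsClosable) (hsymm : T.IsSymmetricOp)
    (x : T.domain) (y : T.closure.domain) : ⟪T x, (y : H)⟫ = ⟪(x : H), T.closure y⟫ := by
  obtain ⟨f, hf1, hf2⟩ := ESA_exists_seq T hT y
  have l1 : Tendsto (fun n => ⟪T x, ((f n : H))⟫) atTop (𝓝 ⟪T x, (y : H)⟫) :=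
    tendsto_const_nhds.inner hf1
  have l2 : Tendsto (fun n => ⟪T x, ((f n : H))⟫) atTop (𝓝 ⟪(x : H), T.closure y⟫) := by
    have : (fun n => ⟪T x, ((f n : H))⟫) = fun n => ⟪(x : H), T (f n)⟫ := by
      funext n; exact hsymm x (f n)
    rw [this]
    exact tendsto_const_nhds.inner hf2
  exact tendsto_nhds_unique l1 l2

lemma ESA_closure_symm (T : H →ₗ.[𝕜] H) (hT : T.IsClosable) (hsymm : T.IsSymmetricOp) :
    T.closure.IsSymmetricOp := by
  intro x y
  obtain ⟨f, hf1, hf2⟩ := ESA_exists_seq T hT x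
  have l1 : Tendsto (fun n => ⟪T (f n), (y : H)⟫) atTop (𝓝 ⟪T.closure x, (y : H)⟫) :=
    hf2.inner tendsto_const_nhds
  have l2 : Tendsto (fun n => ⟪T (f n), (y : H)⟫) atTop (𝓝 ⟪(x : H), T.closure y⟫) := by
    have : (fun n => ⟪T (f n), (y : H)⟫) = fun n => ⟪((f n : H)), T.closure y⟫ := by
      funext n; exact ESA_closure_symm_pair T hT hsymm (f n) y
    rw [this]
    exact hf1.inner tendsto_const_nhds
  exact tendsto_nhds_unique l1 l2


noncomputable def ESA_phi (T : H →ₗ.[𝕜] H) (s : ℝ) :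
    (T.domain × T.domain) →ₗ[𝕜] WithLp 2 (H × H) :=
  (WithLp.linearEquiv 2 𝕜 (H × H)).symm.toLinearMap.comp
    ((T.toFun.comp (LinearMap.fst 𝕜 T.domain T.domain)
        + (s : 𝕜) • (T.domain.subtype.comp (LinearMap.snd 𝕜 T.domain T.domain))).prod
      ((-(s : 𝕜)) • (T.domain.subtype.comp (LinearMap.fst 𝕜 T.domain T.domain))
        + T.toFun.comp (LinearMap.snd 𝕜 T.domain T.domain)))

lemma ESA_phi_apply (T : H →ₗ.[𝕜] H) (s : ℝ) (u v : T.domain) :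
    ESA_phi T s (u, v) =
      (WithLp.equiv 2 (H × H)).symm (T u + (s : 𝕜) • (v : H), -((s : 𝕜) • (u : H)) + T v) := by
  simp only [ESA_phi, LinearMap.coe_comp, LinearEquiv.coe_coe, Function.comp_apply,
    LinearMap.prod_apply, Pi.prod, LinearMap.add_apply, LinearMap.smul_apply,
    LinearMap.neg_apply, Submodule.coe_subtype, LinearMap.fst_apply, LinearMap.snd_apply,
    LinearPMap.toFun_eq_coe, neg_smul, WithLp.linearEquiv_symm_apply]
  rfl

noncomputable def ESA_range (T : H →ₗ.[𝕜] H) (s : ℝ) : Submodule 𝕜 (WithLp 2 (H × H)) :=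
  LinearMap.range (ESA_phi T s)

lemma ESA_mem_range_iff (T : H →ₗ.[𝕜] H) (s : ℝ) (z : WithLp 2 (H × H)) :
    z ∈ ESA_range T s ↔ ∃ u v : T.domain,
      T u + (s : 𝕜) • (v : H) = z.fst ∧ -((s : 𝕜) • (u : H)) + T v = z.snd := by
  constructor
  · rintro ⟨⟨u, v⟩, rfl⟩
    rw [ESA_phi_apply]
    exact ⟨u, v, rfl, rfl⟩
  · rintro ⟨u, v, h1, h2⟩
    refine ⟨(u, v), ?_⟩
    rw [ESA_phi_apply]
    exact congrArg (WithLp.equiv 2 (H × H)).symm (Prod.ext_iff.mpr ⟨h1, h2⟩)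

lemma ESA_norm_sq_identity (s : ℝ) (p q x y : H)
    (hpq : re ⟪p, y⟫ = re ⟪x, q⟫) :
    ‖(WithLp.equiv 2 (H × H)).symm (p + (s : 𝕜) • y, -((s : 𝕜) • x) + q)‖ ^ 2
      = ‖p‖ ^ 2 + ‖q‖ ^ 2 + s ^ 2 * (‖x‖ ^ 2 + ‖y‖ ^ 2) := by
  rw [WithLp.prod_norm_sq_eq_of_L2]
  have e1 : ((WithLp.equiv 2 (H × H)).symm (p + (s : 𝕜) • y, -((s : 𝕜) • x) + q)).fst
      = p + (s : 𝕜) • y := rfl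
  have e2 : ((WithLp.equiv 2 (H × H)).symm (p + (s : 𝕜) • y, -((s : 𝕜) • x) + q)).snd
      = -((s : 𝕜) • x) + q := rfl
  rw [e1, e2, norm_add_sq (𝕜 := 𝕜), norm_add_sq (𝕜 := 𝕜)]
  have h1 : re ⟪p, (s : 𝕜) • y⟫ = s * re ⟪p, y⟫ := by
    rw [inner_smul_right, ← smul_eq_mul, ← RCLike.real_smul_eq_coe_smul (K := 𝕜), smul_re]
  have h2 : re ⟪-((s : 𝕜) • x), q⟫ = -(s * re ⟪x, q⟫) := by
    rw [inner_neg_left, inner_smul_left, conj_ofReal, _root_.map_neg, ← smul_eq_mul,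
      ← RCLike.real_smul_eq_coe_smul (K := 𝕜), smul_re]
  have h3 : ‖(s : 𝕜) • y‖ ^ 2 = s ^ 2 * ‖y‖ ^ 2 := by
    rw [norm_smul, norm_ofReal, mul_pow, sq_abs]
  have h4 : ‖-((s : 𝕜) • x)‖ ^ 2 = s ^ 2 * ‖x‖ ^ 2 := by
    rw [norm_neg, norm_smul, norm_ofReal, mul_pow, sq_abs]
  rw [h1, h2, h3, h4, hpq]
  ring

lemma ESA_inner_identity (s : ℝ) (p₁ q₁ p₂ q₂ x y : H)
    (h₁ : re ⟪p₂, y⟫ = re ⟪x, q₂⟫) (h₂ : re ⟪y, p₁⟫ = re ⟪x, q₁⟫) :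
    re (inner (𝕜 := 𝕜) ((WithLp.equiv 2 (H × H)).symm (p₂ + (s : 𝕜) • y, -((s : 𝕜) • x) + q₂))
        ((WithLp.equiv 2 (H × H)).symm (p₁ + (s : 𝕜) • y, -((s : 𝕜) • x) + q₁)))
      = re ⟪p₂, p₁⟫ + re ⟪q₂, q₁⟫ + s ^ 2 * (‖x‖ ^ 2 + ‖y‖ ^ 2) := by
  simp only [WithLp.prod_inner_apply, WithLp.ofLp_fst, WithLp.ofLp_snd]
  have e0 : ∀ a b : H, ((WithLp.equiv 2 (H × H)).symm (a, b)).fst = a := fun _ _ => rfl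
  have e0' : ∀ a b : H, ((WithLp.equiv 2 (H × H)).symm (a, b)).snd = b := fun _ _ => rfl
  rw [e0, e0, e0', e0']
  simp only [inner_add_left, inner_add_right, inner_smul_left, inner_smul_right, inner_neg_left,
    inner_neg_right, _root_.map_add, _root_.map_neg, conj_ofReal, mul_neg, neg_neg]
  have hre : ∀ (z : 𝕜), re ((s : 𝕜) * z) = s * re z := by
    intro z
    rw [← smul_eq_mul, ← RCLike.real_smul_eq_coe_smul (K := 𝕜), smul_re]
  simp only [hre, _root_.map_add, _root_.map_neg]
  have hy : re ⟪y, y⟫ = ‖y‖ ^ 2 := inner_self_eq_norm_sq y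
  have hx : re ⟪x, x⟫ = ‖x‖ ^ 2 := inner_self_eq_norm_sq x
  have hsym1 : re ⟪q₂, x⟫ = re ⟪x, q₂⟫ := inner_re_symm _ _
  linear_combination (s : ℝ) * h₂ + (s : ℝ) * h₁ - (s : ℝ) * hsym1 + (s : ℝ) ^ 2 * hy
    + (s : ℝ) ^ 2 * hx

lemma ESA_cast {T T' : H →ₗ.[𝕜] H} (h : T' = T) (x : H) (hx : x ∈ T'.domain) :
    T' ⟨x, hx⟩ = T ⟨x, h ▸ hx⟩ := by subst h; rfl

lemma ESA_cauchySeq_of_dominated {X Y : Type*} [PseudoMetricSpace X] [PseudoMetricSpace Y]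
    (f : ℕ → X) (g : ℕ → Y) (C : ℝ)
    (h : ∀ m n, dist (g m) (g n) ≤ C * dist (f m) (f n)) (hf : CauchySeq f) : CauchySeq g := by
  rw [Metric.cauchySeq_iff] at hf ⊢
  intro ε hε
  rcases le_or_gt C 0 with hC | hC
  · refine ⟨0, fun m _ n _ => lt_of_le_of_lt (h m n) ?_⟩
    calc C * dist (f m) (f n) ≤ 0 := mul_nonpos_of_nonpos_of_nonneg hC dist_nonneg
    _ < ε := hε
  · obtain ⟨N, hN⟩ := hf (ε / C) (div_pos hε hC)
    refine ⟨N, fun m hm n hn => lt_of_le_of_lt (h m n) ?_⟩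
    calc C * dist (f m) (f n) < C * (ε / C) := by
          exact (mul_lt_mul_iff_right₀ hC).mpr (hN m hm n hn)
    _ = ε := by field_simp

lemma ESA_surj (T : H →ₗ.[𝕜] H) (hsymm : T.IsSymmetricOp) (hclosed : T.IsClosed)
    (s : ℝ) (hs : s ≠ 0) (hdense : Dense (ESA_range T s : Set (WithLp 2 (H × H)))) :
    ∀ z : WithLp 2 (H × H), ∃ u v : T.domain,
      T u + (s : 𝕜) • (v : H) = z.fst ∧ -((s : 𝕜) • (u : H)) + T v = z.snd := by
  suffices hcl : IsClosed (ESA_range T s : Set (WithLp 2 (H × H))) by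
    intro z
    have hz : z ∈ (ESA_range T s : Set (WithLp 2 (H × H))) := by
      have : closure (ESA_range T s : Set (WithLp 2 (H × H))) = Set.univ := hdense.closure_eq
      rw [hcl.closure_eq] at this
      rw [this]; trivial
    exact (ESA_mem_range_iff T s z).mp hz
  apply IsSeqClosed.isClosed
  intro f z hfmem hconv
  choose u v hf1 hf2 using fun n => (ESA_mem_range_iff T s (f n)).mp (hfmem n)
  have key : ∀ m n : ℕ, ‖f m - f n‖ ^ 2
      = ‖T (u m - u n)‖ ^ 2 + ‖T (v m - v n)‖ ^ 2
        + s ^ 2 * (‖((u m - u n : T.domain) : H)‖ ^ 2 + ‖((v m - v n : T.domain) : H)‖ ^ 2) := by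
    intro m n
    have hfmn : f m - f n = (WithLp.equiv 2 (H × H)).symm
        (T (u m - u n) + (s : 𝕜) • ((v m - v n : T.domain) : H),
         -((s : 𝕜) • ((u m - u n : T.domain) : H)) + T (v m - v n)) := by
      apply (WithLp.equiv 2 (H × H)).injective
      rw [Equiv.apply_symm_apply]
      apply Prod.ext_iff.mpr
      constructor
      · show (f m - f n).fst = _
        have h0 : (f m - f n).fst = (f m).fst - (f n).fst := rfl
        rw [h0, ← hf1 m, ← hf1 n]
        simp only [LinearPMap.map_sub, AddSubgroupClass.coe_sub, smul_sub]
        abel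
      · show (f m - f n).snd = _
        have h0 : (f m - f n).snd = (f m).snd - (f n).snd := rfl
        rw [h0, ← hf2 m, ← hf2 n]
        simp only [LinearPMap.map_sub, AddSubgroupClass.coe_sub, smul_sub]
        abel
    rw [hfmn]
    exact ESA_norm_sq_identity s _ _ _ _ (by
      have := hsymm (u m - u n) (v m - v n)
      exact congrArg re this)
  have hs' : (0:ℝ) < |s| := abs_pos.mpr hs
  have coe_u : ∀ m n : ℕ, ((u m - u n : T.domain) : H) = (u m : H) - (u n : H) := fun m n => rfl
  have coe_v : ∀ m n : ℕ, ((v m - v n : T.domain) : H) = (v m : H) - (v n : H) := fun m n => rfl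
  have bound : ∀ (w : ℕ → T.domain), (∀ m n : ℕ,
        s ^ 2 * ‖((w m - w n : T.domain) : H)‖ ^ 2 ≤ ‖f m - f n‖ ^ 2) →
      ∀ m n : ℕ, dist ((w m : H)) ((w n : H)) ≤ |s|⁻¹ * dist (f m) (f n) := by
    intro w hw m n
    rw [dist_eq_norm, dist_eq_norm]
    have h2 : (|s| * ‖(w m : H) - (w n : H)‖) ^ 2 ≤ ‖f m - f n‖ ^ 2 := by
      have := hw m n
      rw [show ((w m - w n : T.domain) : H) = (w m : H) - (w n : H) from rfl] at this
      calc (|s| * ‖(w m : H) - (w n : H)‖) ^ 2 = s ^ 2 * ‖(w m : H) - (w n : H)‖ ^ 2 := by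
            rw [mul_pow, sq_abs]
      _ ≤ ‖f m - f n‖ ^ 2 := this
    have h3 : |s| * ‖(w m : H) - (w n : H)‖ ≤ ‖f m - f n‖ := by
      have := Real.sqrt_le_sqrt h2
      rwa [Real.sqrt_sq (by positivity), Real.sqrt_sq (norm_nonneg _)] at this
    rw [inv_mul_eq_div, le_div_iff₀ hs']
    rw [mul_comm]
    exact h3
  have hku : ∀ m n : ℕ, s ^ 2 * ‖((u m - u n : T.domain) : H)‖ ^ 2 ≤ ‖f m - f n‖ ^ 2 := by
    intro m n
    rw [key m n]
    nlinarith [sq_nonneg ‖T (u m - u n)‖, sq_nonneg ‖T (v m - v n)‖,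
      mul_nonneg (sq_nonneg s) (sq_nonneg ‖((v m - v n : T.domain) : H)‖),
      mul_nonneg (sq_nonneg s) (sq_nonneg ‖((u m - u n : T.domain) : H)‖)]
  have hkv : ∀ m n : ℕ, s ^ 2 * ‖((v m - v n : T.domain) : H)‖ ^ 2 ≤ ‖f m - f n‖ ^ 2 := by
    intro m n
    rw [key m n]
    nlinarith [sq_nonneg ‖T (u m - u n)‖, sq_nonneg ‖T (v m - v n)‖,
      mul_nonneg (sq_nonneg s) (sq_nonneg ‖((v m - v n : T.domain) : H)‖),
      mul_nonneg (sq_nonneg s) (sq_nonneg ‖((u m - u n : T.domain) : H)‖)]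
  have hcu : CauchySeq (fun n => ((u n : H))) :=
    ESA_cauchySeq_of_dominated f _ _ (bound u hku) hconv.cauchySeq
  have hcv : CauchySeq (fun n => ((v n : H))) :=
    ESA_cauchySeq_of_dominated f _ _ (bound v hkv) hconv.cauchySeq
  obtain ⟨a, ha⟩ := cauchySeq_tendsto_of_complete hcu
  obtain ⟨c, hc⟩ := cauchySeq_tendsto_of_complete hcv
  have contfst : Continuous (fun w : WithLp 2 (H × H) => w.fst) :=
    continuous_fst.comp (WithLp.prodContinuousLinearEquiv 2 𝕜 H H).continuous
  have contsnd : Continuous (fun w : WithLp 2 (H × H) => w.snd) :=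
    continuous_snd.comp (WithLp.prodContinuousLinearEquiv 2 𝕜 H H).continuous
  have hfst : Tendsto (fun n => (f n).fst) atTop (𝓝 z.fst) := (contfst.tendsto z).comp hconv
  have hsnd : Tendsto (fun n => (f n).snd) atTop (𝓝 z.snd) := (contsnd.tendsto z).comp hconv
  have hTu : Tendsto (fun n => T (u n)) atTop (𝓝 (z.fst - (s : 𝕜) • c)) := by
    have : (fun n => T (u n)) = fun n => (f n).fst - (s : 𝕜) • ((v n : H)) := by
      funext n
      rw [← hf1 n]
      abel
    rw [this]
    exact hfst.sub (hc.const_smul _)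
  have hTv : Tendsto (fun n => T (v n)) atTop (𝓝 (z.snd + (s : 𝕜) • a)) := by
    have : (fun n => T (v n)) = fun n => (f n).snd + (s : 𝕜) • ((u n : H)) := by
      funext n
      rw [← hf2 n]
      abel
    rw [this]
    exact hsnd.add (ha.const_smul _)
  have hgu : (a, z.fst - (s : 𝕜) • c) ∈ T.graph := by
    refine hclosed.mem_of_tendsto (ha.prodMk_nhds hTu) (Eventually.of_forall fun n => ?_)
    exact T.mem_graph (u n)
  have hgv : (c, z.snd + (s : 𝕜) • a) ∈ T.graph := by
    refine hclosed.mem_of_tendsto (hc.prodMk_nhds hTv) (Eventually.of_forall fun n => ?_)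
    exact T.mem_graph (v n)
  obtain ⟨ub, hub⟩ := T.mem_graph_iff'.mp hgu
  obtain ⟨vb, hvb⟩ := T.mem_graph_iff'.mp hgv
  have hub1 : (ub : H) = a := congrArg Prod.fst hub
  have hub2 : T ub = z.fst - (s : 𝕜) • c := congrArg Prod.snd hub
  have hvb1 : (vb : H) = c := congrArg Prod.fst hvb
  have hvb2 : T vb = z.snd + (s : 𝕜) • a := congrArg Prod.snd hvb
  refine (ESA_mem_range_iff T s z).mpr ⟨ub, vb, ?_, ?_⟩
  · rw [hub2, hvb1]
    abel
  · rw [hvb2, hub1]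
    abel

lemma ESA_dense_range_selfadjoint (T : H →ₗ.[𝕜] H) (hTd : Dense (T.domain : Set H))
    (hTsa : T.adjoint = T) (hsymm : T.IsSymmetricOp) (s : ℝ) (hs : s ≠ 0) :
    Dense (ESA_range T s : Set (WithLp 2 (H × H))) := by
  rw [Submodule.dense_iff_topologicalClosure_eq_top, Submodule.topologicalClosure_eq_top_iff,
    Submodule.eq_bot_iff]
  intro g hg
  rw [Submodule.mem_orthogonal] at hg
  have h1 : ∀ u : T.domain, ⟪T u, g.fst⟫ = ⟪(u : H), (s : 𝕜) • g.snd⟫ := by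
    intro u
    have hm : (WithLp.equiv 2 (H × H)).symm (T u, -((s : 𝕜) • (u : H))) ∈ ESA_range T s := by
      refine (ESA_mem_range_iff T s _).mpr ⟨u, 0, ?_, ?_⟩
      · show T u + (s : 𝕜) • ((0 : T.domain) : H) = T u
        simp
      · show -((s : 𝕜) • (u : H)) + T 0 = -((s : 𝕜) • (u : H))
        rw [T.map_zero, add_zero]
    have h0 := hg _ hm
    simp only [WithLp.prod_inner_apply, WithLp.ofLp_fst, WithLp.ofLp_snd] at h0
    have e1 : (((WithLp.equiv 2 (H × H)).symm (T u, -((s : 𝕜) • (u : H)))).fst : H) = T u := rfl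
    have e2 : (((WithLp.equiv 2 (H × H)).symm (T u, -((s : 𝕜) • (u : H)))).snd : H)
        = -((s : 𝕜) • (u : H)) := rfl
    rw [e1, e2, inner_neg_left, inner_smul_left, conj_ofReal] at h0
    rw [inner_smul_right]
    linear_combination h0
  have h2 : ∀ v : T.domain, ⟪T v, g.snd⟫ = ⟪(v : H), -((s : 𝕜) • g.fst)⟫ := by
    intro v
    have hm : (WithLp.equiv 2 (H × H)).symm ((s : 𝕜) • (v : H), T v) ∈ ESA_range T s := by
      refine (ESA_mem_range_iff T s _).mpr ⟨0, v, ?_, ?_⟩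
      · show T 0 + (s : 𝕜) • (v : H) = (s : 𝕜) • (v : H)
        rw [T.map_zero, zero_add]
      · show -((s : 𝕜) • ((0 : T.domain) : H)) + T v = T v
        simp
    have h0 := hg _ hm
    simp only [WithLp.prod_inner_apply, WithLp.ofLp_fst, WithLp.ofLp_snd] at h0
    have e1 : (((WithLp.equiv 2 (H × H)).symm ((s : 𝕜) • (v : H), T v)).fst : H)
        = (s : 𝕜) • (v : H) := rfl
    have e2 : (((WithLp.equiv 2 (H × H)).symm ((s : 𝕜) • (v : H), T v)).snd : H) = T v := rfl
    rw [e1, e2, inner_smul_left, conj_ofReal] at h0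
    rw [inner_neg_right, inner_smul_right]
    linear_combination h0
  have flip : ∀ (a b : H) (x : T.domain), ⟪T x, a⟫ = ⟪(x : H), b⟫ →
      ⟪b, (x : H)⟫ = ⟪a, T x⟫ := by
    intro a b x hx
    have := congrArg (starRingEnd 𝕜) hx
    rw [inner_conj_symm, inner_conj_symm] at this
    exact this.symm
  have hg1mem : g.fst ∈ T.adjoint.domain :=
    mem_adjoint_domain_of_exists _ ⟨(s : 𝕜) • g.snd, fun x => flip _ _ x (h1 x)⟩
  have hg2mem : g.snd ∈ T.adjoint.domain :=
    mem_adjoint_domain_of_exists _ ⟨-((s : 𝕜) • g.fst), fun x => flip _ _ x (h2 x)⟩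
  have hval1 : T.adjoint ⟨g.fst, hg1mem⟩ = (s : 𝕜) • g.snd :=
    adjoint_apply_eq hTd _ (fun x => flip _ _ x (h1 x))
  have hval2 : T.adjoint ⟨g.snd, hg2mem⟩ = -((s : 𝕜) • g.fst) :=
    adjoint_apply_eq hTd _ (fun x => flip _ _ x (h2 x))
  have hTg1 : T ⟨g.fst, hTsa ▸ hg1mem⟩ = (s : 𝕜) • g.snd := by
    rw [← ESA_cast hTsa g.fst hg1mem]; exact hval1
  have hTg2 : T ⟨g.snd, hTsa ▸ hg2mem⟩ = -((s : 𝕜) • g.fst) := by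
    rw [← ESA_cast hTsa g.snd hg2mem]; exact hval2
  have hsym := hsymm ⟨g.fst, hTsa ▸ hg1mem⟩ ⟨g.snd, hTsa ▸ hg2mem⟩
  rw [hTg1, hTg2] at hsym
  rw [inner_smul_left, conj_ofReal, inner_neg_right, inner_smul_right] at hsym
  have hkey : (s : 𝕜) * (⟪g.fst, g.fst⟫ + ⟪g.snd, g.snd⟫) = 0 := by
    have c1 : ((⟨g.fst, hTsa ▸ hg1mem⟩ : T.domain) : H) = g.fst := rfl
    have c2 : ((⟨g.snd, hTsa ▸ hg2mem⟩ : T.domain) : H) = g.snd := rfl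
    rw [c1, c2] at hsym
    linear_combination hsym
  have hs𝕜 : (s : 𝕜) ≠ 0 := by exact_mod_cast hs
  have hsum : (⟪g.fst, g.fst⟫ + ⟪g.snd, g.snd⟫ : 𝕜) = 0 :=
    (mul_eq_zero.mp hkey).resolve_left hs𝕜
  have hre : ‖g.fst‖ ^ 2 + ‖g.snd‖ ^ 2 = 0 := by
    have := congrArg re hsum
    rw [_root_.map_add, inner_self_eq_norm_sq, inner_self_eq_norm_sq] at this
    simpa using this
  have hg1z : g.fst = 0 := by
    have : ‖g.fst‖ = 0 := by nlinarith [norm_nonneg g.fst, norm_nonneg g.snd, sq_nonneg ‖g.fst‖, sq_nonneg ‖g.snd‖]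
    exact norm_eq_zero.mp this
  have hg2z : g.snd = 0 := by
    have : ‖g.snd‖ = 0 := by nlinarith [norm_nonneg g.fst, norm_nonneg g.snd]
    exact norm_eq_zero.mp this
  apply (WithLp.equiv 2 (H × H)).injective
  apply Prod.ext_iff.mpr
  exact ⟨hg1z, hg2z⟩

lemma ESA_sqle (w c : ℝ) (hw : 0 ≤ w) (hc : 0 ≤ c) (h : w ^ 2 ≤ c ^ 2) : w ≤ c := by
  nlinarith

lemma ESA_normK_le (a b : H) :
    ‖(WithLp.equiv 2 (H × H)).symm (a, b)‖ ≤ ‖a‖ + ‖b‖ := by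
  have h := WithLp.prod_norm_sq_eq_of_L2 ((WithLp.equiv 2 (H × H)).symm (a, b))
  have e1 : (((WithLp.equiv 2 (H × H)).symm (a, b)).fst : H) = a := rfl
  have e2 : (((WithLp.equiv 2 (H × H)).symm (a, b)).snd : H) = b := rfl
  rw [e1, e2] at h
  refine ESA_sqle _ _ (norm_nonneg _) (by positivity) ?_
  rw [h]
  nlinarith [mul_nonneg (norm_nonneg a) (norm_nonneg b)]

lemma ESA_wuest_dense (A S : H →ₗ.[𝕜] H)
    (hAclosable : A.IsClosable)
    (hdomAS : A.domain ≤ S.domain) (hdomSA : S.domain ≤ A.domain)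
    (hSsymm : S.IsSymmetricOp) (hAsymm : A.IsSymmetricOp)
    (b : ℝ)
    (hRe : ∀ x : S.domain, -(b ^ 2 / 2) * ‖(x : H)‖ ^ 2
      ≤ re ⟪S x, A ⟨x.1, hdomSA x.2⟩⟫)
    (α β : ℝ) (hα : 0 ≤ α) (hβ : 0 ≤ β)
    (hBbd : ∀ x : S.domain, ‖S x - A ⟨x.1, hdomSA x.2⟩‖ ^ 2
      ≤ α * ‖A ⟨x.1, hdomSA x.2⟩‖ ^ 2 + β * ‖(x : H)‖ ^ 2)
    (s : ℝ) (hssq : b ^ 2 / 2 < s ^ 2)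
    (hAsurj : ∀ z : WithLp 2 (H × H), ∃ u v : A.closure.domain,
      A.closure u + (s : 𝕜) • (v : H) = z.fst ∧ -((s : 𝕜) • (u : H)) + A.closure v = z.snd) :
    Dense (ESA_range S s : Set (WithLp 2 (H × H))) := by
  rw [Submodule.dense_iff_topologicalClosure_eq_top, Submodule.topologicalClosure_eq_top_iff,
    Submodule.eq_bot_iff]
  intro g hg
  rw [Submodule.mem_orthogonal] at hg
  obtain ⟨u, v, hu, hv⟩ := hAsurj g
  obtain ⟨x, hx1, hx2⟩ := ESA_exists_seq A hAclosable u
  obtain ⟨y, hy1, hy2⟩ := ESA_exists_seq A hAclosable v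
  set X : ℕ → S.domain := fun n => ⟨(x n).1, hdomAS (x n).2⟩ with hX
  set Y : ℕ → S.domain := fun n => ⟨(y n).1, hdomAS (y n).2⟩ with hY
  have hXA : ∀ n, (⟨(X n).1, hdomSA (X n).2⟩ : A.domain) = x n := fun n => Subtype.ext rfl
  have hYA : ∀ n, (⟨(Y n).1, hdomSA (Y n).2⟩ : A.domain) = y n := fun n => Subtype.ext rfl
  set p : ℕ → WithLp 2 (H × H) := fun n =>
    (WithLp.equiv 2 (H × H)).symm
      (A (x n) + (s : 𝕜) • ((y n : H)), -((s : 𝕜) • ((x n : H))) + A (y n)) with hp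
  set q : ℕ → WithLp 2 (H × H) := fun n =>
    (WithLp.equiv 2 (H × H)).symm
      (S (X n) + (s : 𝕜) • ((y n : H)), -((s : 𝕜) • ((x n : H))) + S (Y n)) with hq
  have hqmem : ∀ n, q n ∈ ESA_range S s := by
    intro n
    exact (ESA_mem_range_iff S s (q n)).mpr ⟨X n, Y n, rfl, rfl⟩
  have hqg : ∀ n, (inner (𝕜 := 𝕜) (q n) g) = 0 := fun n => hg _ (hqmem n)
  -- convergence of p to g
  have hc1 : Tendsto (fun n => A (x n) + (s : 𝕜) • ((y n : H))) atTop (𝓝 g.fst) := by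
    rw [← hu]
    exact hx2.add (hy1.const_smul _)
  have hc2 : Tendsto (fun n => -((s : 𝕜) • ((x n : H))) + A (y n)) atTop (𝓝 g.snd) := by
    rw [← hv]
    exact ((hx1.const_smul _).neg).add hy2
  have hp_tend : Tendsto p atTop (𝓝 g) := by
    have hcont : Continuous fun w : H × H => (WithLp.equiv 2 (H × H)).symm w :=
      (WithLp.prodContinuousLinearEquiv 2 𝕜 H H).symm.continuous
    have := (hcont.tendsto (g.fst, g.snd)).comp (hc1.prodMk_nhds hc2)
    exact this
  -- bound on q
  have hαs : ∀ n, ‖S (X n)‖ ≤ (1 + Real.sqrt α) * ‖A (x n)‖ + Real.sqrt β * ‖(x n : H)‖ := by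
    intro n
    have h1 : ‖S (X n) - A (x n)‖ ≤ Real.sqrt α * ‖A (x n)‖ + Real.sqrt β * ‖(x n : H)‖ := by
      refine ESA_sqle _ _ (norm_nonneg _) (by positivity) ?_
      have h2 := hBbd (X n)
      rw [hXA n] at h2
      have e1 : ((X n : H)) = ((x n : H)) := rfl
      rw [e1] at h2
      calc ‖S (X n) - A (x n)‖ ^ 2 ≤ α * ‖A (x n)‖ ^ 2 + β * ‖(x n : H)‖ ^ 2 := h2
      _ ≤ (Real.sqrt α * ‖A (x n)‖ + Real.sqrt β * ‖(x n : H)‖) ^ 2 := by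
          have hsa : Real.sqrt α ^ 2 = α := Real.sq_sqrt hα
          have hsb : Real.sqrt β ^ 2 = β := Real.sq_sqrt hβ
          nlinarith [mul_nonneg (mul_nonneg (Real.sqrt_nonneg α) (norm_nonneg (A (x n))))
            (mul_nonneg (Real.sqrt_nonneg β) (norm_nonneg ((x n : H))))]
    calc ‖S (X n)‖ = ‖A (x n) + (S (X n) - A (x n))‖ := by
          congr 1
          abel
    _ ≤ ‖A (x n)‖ + ‖S (X n) - A (x n)‖ := norm_add_le _ _
    _ ≤ ‖A (x n)‖ + (Real.sqrt α * ‖A (x n)‖ + Real.sqrt β * ‖(x n : H)‖) := by linarith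
    _ = (1 + Real.sqrt α) * ‖A (x n)‖ + Real.sqrt β * ‖(x n : H)‖ := by ring
  have hαsY : ∀ n, ‖S (Y n)‖ ≤ (1 + Real.sqrt α) * ‖A (y n)‖ + Real.sqrt β * ‖(y n : H)‖ := by
    intro n
    have h1 : ‖S (Y n) - A (y n)‖ ≤ Real.sqrt α * ‖A (y n)‖ + Real.sqrt β * ‖(y n : H)‖ := by
      refine ESA_sqle _ _ (norm_nonneg _) (by positivity) ?_
      have h2 := hBbd (Y n)
      rw [hYA n] at h2
      have e1 : ((Y n : H)) = ((y n : H)) := rfl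
      rw [e1] at h2
      calc ‖S (Y n) - A (y n)‖ ^ 2 ≤ α * ‖A (y n)‖ ^ 2 + β * ‖(y n : H)‖ ^ 2 := h2
      _ ≤ (Real.sqrt α * ‖A (y n)‖ + Real.sqrt β * ‖(y n : H)‖) ^ 2 := by
          have hsa : Real.sqrt α ^ 2 = α := Real.sq_sqrt hα
          have hsb : Real.sqrt β ^ 2 = β := Real.sq_sqrt hβ
          nlinarith [mul_nonneg (mul_nonneg (Real.sqrt_nonneg α) (norm_nonneg (A (y n))))
            (mul_nonneg (Real.sqrt_nonneg β) (norm_nonneg ((y n : H))))]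
    calc ‖S (Y n)‖ = ‖A (y n) + (S (Y n) - A (y n))‖ := by
          congr 1
          abel
    _ ≤ ‖A (y n)‖ + ‖S (Y n) - A (y n)‖ := norm_add_le _ _
    _ ≤ ‖A (y n)‖ + (Real.sqrt α * ‖A (y n)‖ + Real.sqrt β * ‖(y n : H)‖) := by linarith
    _ = (1 + Real.sqrt α) * ‖A (y n)‖ + Real.sqrt β * ‖(y n : H)‖ := by ring
  set r : ℕ → ℝ := fun n =>
    ((1 + Real.sqrt α) * ‖A (x n)‖ + Real.sqrt β * ‖(x n : H)‖ + |s| * ‖(y n : H)‖)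
      + (|s| * ‖(x n : H)‖ + ((1 + Real.sqrt α) * ‖A (y n)‖ + Real.sqrt β * ‖(y n : H)‖)) with hr
  have hqr : ∀ n, ‖q n‖ ≤ r n := by
    intro n
    refine le_trans (ESA_normK_le _ _) ?_
    have t1 : ‖S (X n) + (s : 𝕜) • ((y n : H))‖
        ≤ ‖S (X n)‖ + |s| * ‖(y n : H)‖ := by
      refine le_trans (norm_add_le _ _) ?_
      rw [norm_smul, RCLike.norm_ofReal]
    have t2 : ‖-((s : 𝕜) • ((x n : H))) + S (Y n)‖
        ≤ |s| * ‖(x n : H)‖ + ‖S (Y n)‖ := by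
      refine le_trans (norm_add_le _ _) ?_
      rw [norm_neg, norm_smul, RCLike.norm_ofReal]
    have := hαs n
    have := hαsY n
    rw [hr]
    dsimp only
    linarith
  have c1 := (hx2.norm.const_mul (1 + Real.sqrt α)).add (hx1.norm.const_mul (Real.sqrt β))
  have c2 := c1.add (hy1.norm.const_mul (|s|))
  have c3 := (hy2.norm.const_mul (1 + Real.sqrt α)).add (hy1.norm.const_mul (Real.sqrt β))
  have c4 := (hx1.norm.const_mul (|s|)).add c3
  have hL : Tendsto r atTop (𝓝 _) := c2.add c4
  obtain ⟨M, hM⟩ := hL.bddAbove_range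
  have hqM : ∀ n, ‖q n‖ ≤ M := fun n =>
    le_trans (hqr n) (hM (Set.mem_range_self n))
  -- the inner identity and lower bound
  have hident : ∀ n, re (inner (𝕜 := 𝕜) (q n) (p n))
      = re ⟪S (X n), A (x n)⟫ + re ⟪S (Y n), A (y n)⟫
        + s ^ 2 * (‖(x n : H)‖ ^ 2 + ‖(y n : H)‖ ^ 2) := by
    intro n
    refine ESA_inner_identity s (A (x n)) (A (y n)) (S (X n)) (S (Y n)) ((x n : H)) ((y n : H))
      ?_ ?_
    · exact congrArg re (hSsymm (X n) (Y n))
    · rw [inner_re_symm ((y n : H)) (A (x n)), inner_re_symm ((x n : H)) (A (y n))]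
      rw [congrArg re (hAsymm (x n) (y n))]
      exact inner_re_symm _ _
  have hlow : ∀ n, (s ^ 2 - b ^ 2 / 2) * (‖(x n : H)‖ ^ 2 + ‖(y n : H)‖ ^ 2)
      ≤ re (inner (𝕜 := 𝕜) (q n) (p n)) := by
    intro n
    have r1 := hRe (X n)
    have r2 := hRe (Y n)
    rw [hXA n] at r1
    rw [hYA n] at r2
    rw [hident n]
    have e1 : ((X n : H)) = ((x n : H)) := rfl
    have e2 : ((Y n : H)) = ((y n : H)) := rfl
    rw [e1] at r1
    rw [e2] at r2
    nlinarith [r1, r2]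
  -- limits
  have hqp0 : Tendsto (fun n => re (inner (𝕜 := 𝕜) (q n) (p n))) atTop (𝓝 0) := by
    have heq : ∀ n, re (inner (𝕜 := 𝕜) (q n) (p n)) = re (inner (𝕜 := 𝕜) (q n) (p n - g)) := by
      intro n
      rw [inner_sub_right, hqg n, sub_zero]
    simp_rw [heq]
    have hpg : Tendsto (fun n => ‖p n - g‖) atTop (𝓝 0) := by
      have := (hp_tend.sub (tendsto_const_nhds (x := g))).norm
      simpa using this
    refine squeeze_zero_norm (fun n => ?_) (by have h9 := hpg.const_mul M; rwa [mul_zero] at h9)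
    calc ‖re (inner (𝕜 := 𝕜) (q n) (p n - g))‖ ≤ ‖(inner (𝕜 := 𝕜) (q n) (p n - g))‖ := by
          rw [Real.norm_eq_abs]; exact abs_re_le_norm _
    _ ≤ ‖q n‖ * ‖p n - g‖ := norm_inner_le_norm _ _
    _ ≤ M * ‖p n - g‖ := by
        have : (0:ℝ) ≤ ‖p n - g‖ := norm_nonneg _
        nlinarith [hqM n, norm_nonneg (q n)]
  set c : ℝ := s ^ 2 - b ^ 2 / 2 with hcdef
  have hcpos : 0 < c := by rw [hcdef]; linarith
  have ha0 : Tendsto (fun n => ‖(x n : H)‖ ^ 2 + ‖(y n : H)‖ ^ 2) atTop (𝓝 0) := by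
    refine squeeze_zero (fun n => by positivity) (fun n => ?_)
      (by have h9 := hqp0.const_mul c⁻¹; rwa [mul_zero] at h9)
    calc ‖(x n : H)‖ ^ 2 + ‖(y n : H)‖ ^ 2
        = c⁻¹ * (c * (‖(x n : H)‖ ^ 2 + ‖(y n : H)‖ ^ 2)) := by
          field_simp
    _ ≤ c⁻¹ * re (inner (𝕜 := 𝕜) (q n) (p n)) := by
        apply mul_le_mul_of_nonneg_left (hlow n) (by positivity)
  have hx0 : Tendsto (fun n => ((x n : H))) atTop (𝓝 0) := by
    rw [tendsto_zero_iff_norm_tendsto_zero]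
    have hsq : Tendsto (fun n => ‖(x n : H)‖ ^ 2) atTop (𝓝 0) :=
      squeeze_zero (fun n => by positivity)
        (fun n => by nlinarith [sq_nonneg ‖(y n : H)‖]) ha0
    have := hsq.sqrt
    rw [Real.sqrt_zero] at this
    have heq : (fun n => Real.sqrt (‖(x n : H)‖ ^ 2)) = fun n => ‖(x n : H)‖ := by
      funext n; exact Real.sqrt_sq (norm_nonneg _)
    rwa [heq] at this
  have hy0 : Tendsto (fun n => ((y n : H))) atTop (𝓝 0) := by
    rw [tendsto_zero_iff_norm_tendsto_zero]
    have hsq : Tendsto (fun n => ‖(y n : H)‖ ^ 2) atTop (𝓝 0) :=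
      squeeze_zero (fun n => by positivity)
        (fun n => by nlinarith [sq_nonneg ‖(x n : H)‖]) ha0
    have := hsq.sqrt
    rw [Real.sqrt_zero] at this
    have heq : (fun n => Real.sqrt (‖(y n : H)‖ ^ 2)) = fun n => ‖(y n : H)‖ := by
      funext n; exact Real.sqrt_sq (norm_nonneg _)
    rwa [heq] at this
  have hu0 : (u : H) = 0 := tendsto_nhds_unique hx1 hx0
  have hv0 : (v : H) = 0 := tendsto_nhds_unique hy1 hy0
  have huz : u = 0 := by exact_mod_cast hu0
  have hvz : v = 0 := by exact_mod_cast hv0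
  have hg1 : g.fst = 0 := by
    rw [← hu, huz, hvz]
    simp
  have hg2 : g.snd = 0 := by
    rw [← hv, huz, hvz]
    simp
  apply (WithLp.equiv 2 (H × H)).injective
  apply Prod.ext_iff.mpr
  exact ⟨hg1, hg2⟩

end Helpers

section Main

variable {𝕜 H : Type*} [RCLike 𝕜] [NormedAddCommGroup H] [InnerProductSpace 𝕜 H]
  [CompleteSpace H]

local notation "⟪" x ", " y "⟫" => @inner 𝕜 _ _ x y

theorem essentially_selfadjoint_add' (A B : H →ₗ.[𝕜] H)
    (hAsymm : A.IsSymmetricOp) (hBsymm : B.IsSymmetricOp)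
    (hA : A.IsEssSelfAdjointOp)
    (hsub : A.domain ≤ B.domain)
    (hbdd : ∃ α β : ℝ, 0 ≤ α ∧ 0 ≤ β ∧ ∀ x : A.domain,
      ‖B ⟨x.1, hsub x.2⟩‖ ^ 2 ≤ α * ‖A x‖ ^ 2 + β * ‖(x : H)‖ ^ 2)
    (hb : ∃ b : ℝ, 0 < b ∧ ∀ x : A.domain,
      ‖B ⟨x.1, hsub x.2⟩‖ ^ 2 ≤ ‖A x‖ ^ 2 +
        ‖(A + B) ⟨x.1, Submodule.mem_inf.mpr ⟨x.2, hsub x.2⟩⟩‖ ^ 2 + b ^ 2 * ‖(x : H)‖ ^ 2) :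
    (A + B).IsEssSelfAdjointOp := by
  obtain ⟨hAcl, hAbardense, hAbarsa⟩ := hA
  obtain ⟨α, β, hα, hβ, hbdd⟩ := hbdd
  obtain ⟨b, hbpos, hb⟩ := hb
  have hSA : (A + B).domain ≤ A.domain := fun x hx => (Submodule.mem_inf.mp hx).1
  have hAS : A.domain ≤ (A + B).domain := fun x hx => Submodule.mem_inf.mpr ⟨hx, hsub hx⟩
  have hSapply : ∀ x : (A + B).domain,
      (A + B) x = A ⟨x.1, hSA x.2⟩ + B ⟨x.1, hsub (hSA x.2)⟩ := fun x => rfl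
  -- symmetry of A + B
  have hSsymm : (A + B).IsSymmetricOp := by
    intro x y
    rw [hSapply x, hSapply y, inner_add_left, inner_add_right]
    have h1 := hAsymm ⟨x.1, hSA x.2⟩ ⟨y.1, hSA y.2⟩
    have h2 := hBsymm ⟨x.1, hsub (hSA x.2)⟩ ⟨y.1, hsub (hSA y.2)⟩
    exact congrArg₂ HAdd.hAdd h1 h2
  -- dense domain
  have hdomeq : (A + B).domain = A.domain := le_antisymm hSA hAS
  have hAdense : Dense (A.domain : Set H) := ESA_dense_of_closure A hAbardense
  have hSdense : Dense ((A + B).domain : Set H) := by rw [hdomeq]; exact hAdense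
  have hSclosable : (A + B).IsClosable := ESA_isClosable (A + B) hSdense hSsymm
  have hSbarsymm : (A + B).closure.IsSymmetricOp :=
    ESA_closure_symm (A + B) hSclosable hSsymm
  have hSbardense : Dense ((A + B).closure.domain : Set H) :=
    hSdense.mono (fun x hx => (le_closure (A + B)).1 hx)
  -- quantitative facts
  have hRe : ∀ x : (A + B).domain, -(b ^ 2 / 2) * ‖(x : H)‖ ^ 2
      ≤ re ⟪(A + B) x, A ⟨x.1, hSA x.2⟩⟫ := by
    intro x
    have hb2 : ‖B ⟨x.1, hsub (hSA x.2)⟩‖ ^ 2 ≤ ‖A ⟨x.1, hSA x.2⟩‖ ^ 2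
        + ‖A ⟨x.1, hSA x.2⟩ + B ⟨x.1, hsub (hSA x.2)⟩‖ ^ 2 + b ^ 2 * ‖(x : H)‖ ^ 2 :=
      hb ⟨x.1, hSA x.2⟩
    rw [hSapply x]
    have hnadd := norm_add_sq (𝕜 := 𝕜) (A ⟨x.1, hSA x.2⟩) (B ⟨x.1, hsub (hSA x.2)⟩)
    have hir : re ⟪A ⟨x.1, hSA x.2⟩ + B ⟨x.1, hsub (hSA x.2)⟩, A ⟨x.1, hSA x.2⟩⟫
        = ‖A ⟨x.1, hSA x.2⟩‖ ^ 2 + re ⟪A ⟨x.1, hSA x.2⟩, B ⟨x.1, hsub (hSA x.2)⟩⟫ := by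
      rw [inner_add_left, _root_.map_add, inner_self_eq_norm_sq,
        inner_re_symm (B ⟨x.1, hsub (hSA x.2)⟩ : H) (A ⟨x.1, hSA x.2⟩ : H)]
    linarith
  have hBbd2 : ∀ x : (A + B).domain, ‖(A + B) x - A ⟨x.1, hSA x.2⟩‖ ^ 2
      ≤ α * ‖A ⟨x.1, hSA x.2⟩‖ ^ 2 + β * ‖(x : H)‖ ^ 2 := by
    intro x
    have hEB : (A + B) x - A ⟨x.1, hSA x.2⟩ = B ⟨x.1, hsub (hSA x.2)⟩ := by
      rw [hSapply x]
      exact add_sub_cancel_left _ _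
    rw [hEB]
    exact hbdd ⟨x.1, hSA x.2⟩
  -- the A-side machinery
  have hAbarsymm : A.closure.IsSymmetricOp := ESA_closure_symm A hAcl hAsymm
  have hAbarclosed : A.closure.IsClosed := hAcl.closure_isClosed
  have hsurjA : ∀ s : ℝ, s ≠ 0 → ∀ z : WithLp 2 (H × H), ∃ u v : A.closure.domain,
      A.closure u + (s : 𝕜) • (v : H) = z.fst
        ∧ -((s : 𝕜) • (u : H)) + A.closure v = z.snd := fun s hs =>
    ESA_surj A.closure hAbarsymm hAbarclosed s hs
      (ESA_dense_range_selfadjoint A.closure hAbardense hAbarsa hAbarsymm s hs)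
  have hwuest : ∀ s : ℝ, b ^ 2 / 2 < s ^ 2 → s ≠ 0 →
      Dense (ESA_range (A + B) s : Set (WithLp 2 (H × H))) := fun s h1 h2 =>
    ESA_wuest_dense A (A + B) hAcl hAS hSA hSsymm hAsymm b hRe α β hα hβ hBbd2 s h1
      (hsurjA s h2)
  -- transfer range density to the closure
  have hrangele : ∀ s : ℝ, (ESA_range (A + B) s : Set (WithLp 2 (H × H)))
      ⊆ (ESA_range (A + B).closure s : Set (WithLp 2 (H × H))) := by
    intro s z hz
    obtain ⟨u, v, h1, h2⟩ := (ESA_mem_range_iff (A + B) s z).mp hz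
    refine (ESA_mem_range_iff (A + B).closure s z).mpr
      ⟨⟨u.1, (le_closure (A + B)).1 u.2⟩, ⟨v.1, (le_closure (A + B)).1 v.2⟩, ?_, ?_⟩
    · rw [← (le_closure (A + B)).2 (x := u) rfl]
      exact h1
    · rw [← (le_closure (A + B)).2 (x := v) rfl]
      exact h2
  have hbb : b ^ 2 / 2 < b ^ 2 := by nlinarith
  have hbineq : ∀ s : ℝ, s = b ∨ s = -b → b ^ 2 / 2 < s ^ 2 ∧ s ≠ 0 := by
    rintro s (rfl | rfl)
    · exact ⟨hbb, ne_of_gt hbpos⟩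
    · constructor
      · rw [neg_pow]
        simpa using hbb
      · simpa using ne_of_gt hbpos
  have hSbarclosed : (A + B).closure.IsClosed := hSclosable.closure_isClosed
  have hsurjS : ∀ s : ℝ, s = b ∨ s = -b → ∀ z : WithLp 2 (H × H),
      ∃ u v : (A + B).closure.domain,
      (A + B).closure u + (s : 𝕜) • (v : H) = z.fst
        ∧ -((s : 𝕜) • (u : H)) + (A + B).closure v = z.snd := by
    intro s hs
    obtain ⟨h1, h2⟩ := hbineq s hs
    exact ESA_surj (A + B).closure hSbarsymm hSbarclosed s h2
      ((hwuest s h1 h2).mono (hrangele s))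
  -- final: closure adjoint = closure
  refine ⟨hSclosable, hSbardense, ?_⟩
  have hfa : (A + B).closure.IsFormalAdjoint (A + B).closure := fun x y => hSbarsymm x y
  have hle : (A + B).closure ≤ (A + B).closure.adjoint := hfa.le_adjoint hSbardense
  have hdensneg : Dense (ESA_range (A + B) (-b) : Set (WithLp 2 (H × H))) := by
    obtain ⟨h1, h2⟩ := hbineq (-b) (Or.inr rfl)
    exact hwuest (-b) h1 h2
  have key : ∀ y : (A + B).closure.adjoint.domain,
      ∃ hy : (y : H) ∈ (A + B).closure.domain,
        (A + B).closure ⟨y, hy⟩ = (A + B).closure.adjoint y := by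
    intro y
    obtain ⟨u, v, hu, hv⟩ := hsurjS b (Or.inl rfl)
      ((WithLp.equiv 2 (H × H)).symm ((A + B).closure.adjoint y, -((b : 𝕜) • (y : H))))
    have hu' : (A + B).closure u + (b : 𝕜) • (v : H) = (A + B).closure.adjoint y := hu
    have hv' : -((b : 𝕜) • (u : H)) + (A + B).closure v = -((b : 𝕜) • (y : H)) := hv
    set w : WithLp 2 (H × H) :=
      (WithLp.equiv 2 (H × H)).symm ((u : H) - (y : H), (v : H)) with hwdef
    have hw0 : w = 0 := by
      refine hdensneg.eq_zero_of_inner_right 𝕜 (fun k' hk' => ?_)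
      obtain ⟨k, rfl⟩ : ∃ k : ESA_range (A + B) (-b), (k : WithLp 2 (H × H)) = k' :=
        ⟨⟨k', hk'⟩, rfl⟩
      obtain ⟨w₁, w₂, hk1, hk2⟩ := (ESA_mem_range_iff (A + B) (-b) (k : WithLp 2 (H × H))).mp k.2
      simp only [WithLp.prod_inner_apply, WithLp.ofLp_fst, WithLp.ofLp_snd]
      have ew1 : (w.fst : H) = (u : H) - (y : H) := rfl
      have ew2 : (w.snd : H) = (v : H) := rfl
      rw [ew1, ew2, ← hk1, ← hk2]
      have hcast : (((-b : ℝ)) : 𝕜) = -(b : 𝕜) := by push_cast; ring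
      rw [hcast]
      -- symmetric pairing facts
      have ha1 : ⟪(A + B) w₁, (u : H)⟫ = ⟪(w₁ : H), (A + B).closure u⟫ :=
        ESA_closure_symm_pair (A + B) hSclosable hSsymm w₁ u
      have ha2 : ⟪(A + B) w₂, (v : H)⟫ = ⟪(w₂ : H), (A + B).closure v⟫ :=
        ESA_closure_symm_pair (A + B) hSclosable hSsymm w₂ v
      have hw1mem : (w₁ : H) ∈ (A + B).closure.domain := (le_closure (A + B)).1 w₁.2
      have hSw1 : (A + B) w₁ = (A + B).closure ⟨(w₁ : H), hw1mem⟩ :=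
        (le_closure (A + B)).2 rfl
      have ha3 : ⟪(A + B) w₁, (y : H)⟫ = ⟪(w₁ : H), (A + B).closure.adjoint y⟫ := by
        have h := adjoint_isFormalAdjoint hSbardense y ⟨(w₁ : H), hw1mem⟩
        have h2 := congrArg (starRingEnd 𝕜) h
        rw [inner_conj_symm, inner_conj_symm] at h2
        rw [hSw1]
        exact h2.symm
      -- scalar identities from hu', hv'
      have k1 : ⟪(w₁ : H), (A + B).closure u⟫
          = ⟪(w₁ : H), (A + B).closure.adjoint y⟫ - (b : 𝕜) * ⟪(w₁ : H), (v : H)⟫ := by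
        have h := congrArg (fun t => ⟪(w₁ : H), t⟫) hu'
        simp only [inner_add_right, inner_smul_right] at h
        linear_combination h
      have k2 : ⟪(w₂ : H), (A + B).closure v⟫
          = -((b : 𝕜) * ⟪(w₂ : H), (y : H)⟫) + (b : 𝕜) * ⟪(w₂ : H), (u : H)⟫ := by
        have h := congrArg (fun t => ⟪(w₂ : H), t⟫) hv'
        simp only [inner_add_right, inner_smul_right, inner_neg_right] at h
        linear_combination h
      simp only [inner_add_left, inner_sub_right, inner_smul_left, inner_neg_left,
        _root_.map_neg, conj_ofReal, neg_neg, mul_neg, neg_mul]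
      linear_combination ha1 - ha3 + ha2 + k1 + k2
    have hcomp1 : (u : H) - (y : H) = 0 := by
      have := congrArg (fun t : WithLp 2 (H × H) => ((WithLp.equiv 2 (H × H)) t).fst) hw0
      exact this
    have hcomp2 : (v : H) = 0 := by
      have := congrArg (fun t : WithLp 2 (H × H) => ((WithLp.equiv 2 (H × H)) t).snd) hw0
      exact this
    have hyu : (y : H) = (u : H) := (sub_eq_zero.mp hcomp1).symm
    refine ⟨hyu ▸ u.2, ?_⟩
    have hsub1 : (⟨(y : H), hyu ▸ u.2⟩ : (A + B).closure.domain) = u := Subtype.ext hyu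
    rw [hsub1, ← hu', hcomp2]
    rw [smul_zero, add_zero]
  have hge : (A + B).closure.adjoint ≤ (A + B).closure := by
    refine ⟨fun y hy => (key ⟨y, hy⟩).1, ?_⟩
    intro x y' hxy
    obtain ⟨hmem, hval⟩ := key x
    rw [← hval]
    have : (⟨(x : H), hmem⟩ : (A + B).closure.domain) = y' := Subtype.ext hxy
    rw [this]
  exact le_antisymm hge hle

end Main

/-- **Theorem 6 (perturbation).** Let `A, B` be symmetric operators in a Hilbert space `H`.
If `A` is essentially selfadjoint, `B` is `A`-bounded, and
`‖B x‖² ≤ ‖A x‖² + ‖(A+B) x‖² + b²‖x‖²` on `dom A` for some `b > 0`, then `A + B`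
(defined on `dom A ∩ dom B = dom A`) is essentially selfadjoint. -/
theorem essentially_selfadjoint_add {𝕜 H : Type*} [RCLike 𝕜]
    [NormedAddCommGroup H] [InnerProductSpace 𝕜 H] [CompleteSpace H]
    (A B : H →ₗ.[𝕜] H) (hAsymm : A.IsSymmetricOp) (hBsymm : B.IsSymmetricOp)
    (hA : A.IsEssSelfAdjointOp)
    (hsub : A.domain ≤ B.domain)
    (hbdd : ∃ α β : ℝ, 0 ≤ α ∧ 0 ≤ β ∧ ∀ x : A.domain,
      ‖B ⟨x.1, hsub x.2⟩‖ ^ 2 ≤ α * ‖A x‖ ^ 2 + β * ‖(x : H)‖ ^ 2)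
    (hb : ∃ b : ℝ, 0 < b ∧ ∀ x : A.domain,
      ‖B ⟨x.1, hsub x.2⟩‖ ^ 2 ≤ ‖A x‖ ^ 2 +
        ‖(A + B) ⟨x.1, Submodule.mem_inf.mpr ⟨x.2, hsub x.2⟩⟩‖ ^ 2 + b ^ 2 * ‖(x : H)‖ ^ 2) :
    (A + B).IsEssSelfAdjointOp :=
  essentially_selfadjoint_add' A B hAsymm hBsymm hA hsub hbdd hb
end
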